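/- arXiv:2012.10946 — 7 statements merged into one kernel-verified Lean document; each statement's English description precedes it below -/
import Mathlib

section
/- Let f, h : ℝ² → ℝ be real-analytic functions such that every zero of h is a zero of f (i.e. h⁻¹({0}) ⊆ f⁻¹({0})). Suppose that for every point (x₀, y₀) ∈ ℝ² with h(x₀, y₀) = 0, the one-variable function y ↦ h(x₀, y) has a zero of order exactly one at y₀, i.e. h(x₀, y) = (y − y₀)·h̃(y) for some real-analytic h̃ with h̃(y₀) ≠ 0 (equivalently, ∂h/∂y(x₀, y₀) ≠ 0). Then there exists a real-analytic function g : ℝ² → ℝ such that f(x, y) = h(x, y)·g(x, y) for all (x, y) ∈ ℝ². -/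
open Filter Topology
open scoped NNReal ENNReal

theorem key_expand (m : ℕ) (p : ContinuousMultilinearMap ℝ (fun _ : Fin m => ℝ × ℝ) ℝ) (u w : ℝ) :
    (p fun _ => (u, w)) = ∑ s : Finset (Fin m),
      u ^ (m - s.card) * w ^ s.card * (p fun i => if i ∈ s then ((0:ℝ),(1:ℝ)) else (1,0)) := by
  classical
  have h1 : (fun _ : Fin m => (u, w)) =
      (fun _ : Fin m => w • ((0:ℝ),(1:ℝ))) + fun _ : Fin m => u • ((1:ℝ),(0:ℝ)) := by
    funext i; simp [Prod.ext_iff]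
  rw [h1, ← ContinuousMultilinearMap.coe_coe p, p.toMultilinearMap.map_add_univ]
  refine Finset.sum_congr rfl fun s _ => ?_
  have h2 : s.piecewise (fun _ : Fin m => w • ((0:ℝ),(1:ℝ))) (fun _ => u • ((1:ℝ),(0:ℝ)))
      = fun i => (if i ∈ s then w else u) • (if i ∈ s then ((0:ℝ),(1:ℝ)) else (1,0)) := by
    funext i
    by_cases hi : i ∈ s <;> simp [Finset.piecewise, hi]
  rw [h2, p.toMultilinearMap.map_smul_univ]
  have h3 : (∏ i : Fin m, (if i ∈ s then w else u)) = u ^ (m - s.card) * w ^ s.card := by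
    rw [← Finset.prod_mul_prod_compl s]
    rw [Finset.prod_congr rfl (fun i hi => if_pos hi),
      Finset.prod_congr rfl (fun i hi => if_neg (Finset.mem_compl.mp hi)),
      Finset.prod_const, Finset.prod_const, Finset.card_compl, Fintype.card_fin, mul_comm]
  rw [h3]
  simp [ContinuousMultilinearMap.coe_coe, mul_comm, mul_assoc]

theorem div_lemma {F : ℝ × ℝ → ℝ} {a : ℝ}
    (hF : AnalyticAt ℝ F (a, 0))
    (h0 : ∀ᶠ x in 𝓝 a, F (x, 0) = 0) :
    ∃ G : ℝ × ℝ → ℝ, AnalyticAt ℝ G (a, 0) ∧ ∀ᶠ z in 𝓝 ((a : ℝ), (0 : ℝ)), F z = z.2 * G z := by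
  classical
  obtain ⟨p, r, hpr⟩ := hF
  set A : ∀ m : ℕ, Finset (Fin m) → ℝ :=
    fun m s => p m fun i => if i ∈ s then ((0:ℝ),(1:ℝ)) else (1,0) with hA
  have hAbound : ∀ m s, |A m s| ≤ ‖p m‖ := by
    intro m s
    have h1 : ∀ i : Fin m, ‖(if i ∈ s then ((0:ℝ),(1:ℝ)) else (1,0))‖ = 1 := by
      intro i; by_cases hi : i ∈ s <;> simp [hi, Prod.norm_def]
    calc |A m s| ≤ ‖p m‖ * ∏ i : Fin m, ‖(if i ∈ s then ((0:ℝ),(1:ℝ)) else (1,0))‖ :=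
          (p m).le_opNorm _
      _ = ‖p m‖ := by simp [h1]
  obtain ⟨ρ, hρ0, hρr⟩ : ∃ ρ : ℝ≥0, 0 < (ρ : ℝ≥0∞) ∧ (ρ : ℝ≥0∞) < r :=
    ENNReal.lt_iff_exists_nnreal_btwn.mp hpr.r_pos
  have hρ0' : 0 < ρ := by exact_mod_cast hρ0
  obtain ⟨C, hC0, hC⟩ := p.norm_mul_pow_le_of_lt_radius (hρr.trans_le hpr.r_le)
  -- the slice coefficients vanish
  have hA0 : ∀ m, A m ∅ = 0 := by
    set P : FormalMultilinearSeries ℝ ℝ ℝ :=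
      fun m => ContinuousMultilinearMap.mkPiRing ℝ (Fin m) (A m ∅) with hP
    have hPnorm : ∀ m, ‖P m‖ ≤ ‖p m‖ := by
      intro m; rw [hP]; rw [ContinuousMultilinearMap.norm_mkPiRing]
      simpa using hAbound m ∅
    have hPr : (ρ : ℝ≥0∞) ≤ P.radius := by
      refine P.le_radius_of_bound C fun m => ?_
      exact le_trans (mul_le_mul_of_nonneg_right (hPnorm m) (by positivity)) (hC m)
    have hPdiag : ∀ (m : ℕ) (y : ℝ), (P m fun _ => y) = p m fun _ => ((y, 0) : ℝ × ℝ) := by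
      intro m y
      rw [hP]
      have : (fun _ : Fin m => ((y, 0) : ℝ × ℝ)) = fun _ : Fin m => y • ((1:ℝ), (0:ℝ)) := by
        funext i; simp
      rw [this, ← ContinuousMultilinearMap.coe_coe (p m), (p m).toMultilinearMap.map_smul_univ]
      simp [ContinuousMultilinearMap.mkPiRing_apply, A, smul_eq_mul]
    have hPball : HasFPowerSeriesOnBall (fun u : ℝ => F (a + u, 0)) P 0 ρ := by
      refine ⟨hPr, hρ0, ?_⟩
      intro y hy
      have hy' : ((y, (0:ℝ)) : ℝ × ℝ) ∈ Metric.eball (0 : ℝ × ℝ) r := by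
        rw [Metric.mem_eball] at hy ⊢
        refine lt_of_le_of_lt ?_ (hy.trans hρr)
        have : edist ((y, (0:ℝ)) : ℝ × ℝ) (0 : ℝ × ℝ) = edist y (0:ℝ) := by
          rw [Prod.edist_eq]; simp
        rw [this]
      have hs := hpr.hasSum hy'
      simpa [hPdiag, Prod.mk_add_mk] using hs
    have hPzero : P = 0 := by
      refine hPball.hasFPowerSeriesAt.eq_zero_of_eventually ?_
      have ht : Tendsto (fun u : ℝ => a + u) (𝓝 0) (𝓝 a) := by
        simpa [Pi.add_def] using (continuous_const.add continuous_id).tendsto (0 : ℝ)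
      filter_upwards [ht.eventually h0] with u hu using hu
    intro m
    have h1 : P m = 0 := congrFun hPzero m
    have h2 := congrArg (fun T => T (fun _ : Fin m => (1:ℝ))) h1
    simpa [hP, ContinuousMultilinearMap.mkPiRing_apply] using h2
  -- monomial multilinear maps
  set mon : ∀ n : ℕ, ℕ → ContinuousMultilinearMap ℝ (fun _ : Fin n => ℝ × ℝ) ℝ := fun n j =>
    (ContinuousMultilinearMap.mkPiAlgebra ℝ (Fin n) ℝ).compContinuousLinearMap
      (fun i => if (i : ℕ) < j then ContinuousLinearMap.fst ℝ ℝ ℝ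
        else ContinuousLinearMap.snd ℝ ℝ ℝ) with hmon
  have hmon_diag : ∀ (n j : ℕ), j ≤ n → ∀ v : ℝ × ℝ,
      (mon n j fun _ => v) = v.1 ^ j * v.2 ^ (n - j) := by
    intro n j hj v
    have h1 : (mon n j fun _ => v) = ∏ i : Fin n, (if (i : ℕ) < j then v.1 else v.2) := by
      simp [hmon, ContinuousMultilinearMap.compContinuousLinearMap_apply,
        ContinuousMultilinearMap.mkPiAlgebra_apply,
        apply_ite (fun L : ℝ × ℝ →L[ℝ] ℝ => L v)]
    rw [h1]
    set s : Finset (Fin n) := (Finset.range j).attachFin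
      (fun m hm => lt_of_lt_of_le (Finset.mem_range.mp hm) hj) with hs
    have hcard : s.card = j := by rw [hs, Finset.card_attachFin, Finset.card_range]
    have hmem : ∀ i : Fin n, ((i : ℕ) < j) ↔ i ∈ s := by
      intro i; rw [hs, Finset.mem_attachFin, Finset.mem_range]
    calc (∏ i : Fin n, if (i : ℕ) < j then v.1 else v.2)
        = ∏ i : Fin n, (if i ∈ s then v.1 else v.2) :=
          Finset.prod_congr rfl (fun i _ => by rw [if_congr (hmem i) rfl rfl])
      _ = v.1 ^ j * v.2 ^ (n - j) := by
          rw [← Finset.prod_mul_prod_compl s,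
            Finset.prod_congr rfl (fun i hi => if_pos hi),
            Finset.prod_congr rfl (fun i hi => if_neg (Finset.mem_compl.mp hi)),
            Finset.prod_const, Finset.prod_const, Finset.card_compl, Fintype.card_fin, hcard]
  have hmon_norm : ∀ n j, ‖mon n j‖ ≤ 1 := by
    intro n j
    refine le_trans (ContinuousMultilinearMap.norm_compContinuousLinearMap_le _ _) ?_
    have h2 : ∀ i : Fin n, ‖(if (i : ℕ) < j then ContinuousLinearMap.fst ℝ ℝ ℝ
        else ContinuousLinearMap.snd ℝ ℝ ℝ)‖ ≤ 1 := by
      intro i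
      by_cases hi : (i : ℕ) < j
      · simpa [hi] using ContinuousLinearMap.norm_fst_le (𝕜 := ℝ) (E := ℝ) (F := ℝ)
      · simpa [hi] using ContinuousLinearMap.norm_snd_le (𝕜 := ℝ) (E := ℝ) (F := ℝ)
    calc ‖ContinuousMultilinearMap.mkPiAlgebra ℝ (Fin n) ℝ‖
          * ∏ i : Fin n, ‖(if (i : ℕ) < j then ContinuousLinearMap.fst ℝ ℝ ℝ
            else ContinuousLinearMap.snd ℝ ℝ ℝ)‖
        ≤ 1 * ∏ i : Fin n, (1 : ℝ) := by
          apply mul_le_mul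
          · exact le_of_eq ContinuousMultilinearMap.norm_mkPiAlgebra
          · exact Finset.prod_le_prod (fun i _ => norm_nonneg _) (fun i _ => h2 i)
          · positivity
          · norm_num
      _ = 1 := by simp
  -- the dividing series
  set q : FormalMultilinearSeries ℝ (ℝ × ℝ) ℝ := fun n =>
    ∑ s ∈ ((Finset.univ : Finset (Finset (Fin (n + 1)))).erase ∅),
      A (n + 1) s • mon n (n + 1 - s.card) with hq
  have hcard_bound : ∀ n : ℕ, (((Finset.univ : Finset (Finset (Fin (n + 1)))).erase ∅).card : ℝ)
      ≤ 2 ^ (n + 1) := by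
    intro n
    have := Finset.card_erase_le (s := (Finset.univ : Finset (Finset (Fin (n + 1))))) (a := ∅)
    have h2 : (Finset.univ : Finset (Finset (Fin (n + 1)))).card = 2 ^ (n + 1) := by
      rw [Finset.card_univ, Fintype.card_finset, Fintype.card_fin]
    have h3 : ((Finset.univ : Finset (Finset (Fin (n + 1)))).erase ∅).card ≤ 2 ^ (n + 1) :=
      le_trans this (le_of_eq h2)
    exact_mod_cast h3
  have hq_norm : ∀ n, ‖q n‖ ≤ 2 ^ (n + 1) * ‖p (n + 1)‖ := by
    intro n
    refine le_trans (norm_sum_le _ _) ?_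
    have h1 : ∀ s ∈ (Finset.univ : Finset (Finset (Fin (n + 1)))).erase ∅,
        ‖A (n + 1) s • mon n (n + 1 - s.card)‖ ≤ ‖p (n + 1)‖ := by
      intro s _
      rw [norm_smul (A (n + 1) s) (mon n (n + 1 - s.card))]
      calc ‖A (n + 1) s‖ * ‖mon n (n + 1 - s.card)‖
          ≤ ‖p (n + 1)‖ * 1 :=
            mul_le_mul (by simpa [Real.norm_eq_abs] using hAbound (n + 1) s)
              (hmon_norm _ _) (norm_nonneg _) (norm_nonneg _)
        _ = ‖p (n + 1)‖ := mul_one _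
    calc (∑ s ∈ (Finset.univ : Finset (Finset (Fin (n + 1)))).erase ∅,
          ‖A (n + 1) s • mon n (n + 1 - s.card)‖)
        ≤ ∑ _s ∈ (Finset.univ : Finset (Finset (Fin (n + 1)))).erase ∅, ‖p (n + 1)‖ :=
          Finset.sum_le_sum h1
      _ ≤ 2 ^ (n + 1) * ‖p (n + 1)‖ := by
          rw [Finset.sum_const, nsmul_eq_mul]
          exact mul_le_mul_of_nonneg_right (hcard_bound n) (norm_nonneg _)
  have hρR : (0:ℝ) < (ρ : ℝ) := hρ0'
  have hq_bound : ∀ n, ‖q n‖ * (((ρ / 2 : ℝ≥0) : ℝ)) ^ n ≤ 2 * C / ρ := by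
    intro n
    have h5 : ‖p (n + 1)‖ * (ρ : ℝ) ^ (n + 1) ≤ C := hC (n + 1)
    have hcast : ((ρ / 2 : ℝ≥0) : ℝ) = (ρ : ℝ) / 2 := by push_cast; ring
    rw [hcast]
    calc ‖q n‖ * ((ρ : ℝ) / 2) ^ n
        ≤ (2 ^ (n + 1) * ‖p (n + 1)‖) * ((ρ : ℝ) / 2) ^ n := by
          apply mul_le_mul_of_nonneg_right (hq_norm n) (by positivity)
      _ = 2 * (‖p (n + 1)‖ * (ρ : ℝ) ^ (n + 1)) / ρ := by
          rw [div_pow]; field_simp; ring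
      _ ≤ 2 * C / ρ := by gcongr
  have hqrad : ((ρ / 2 : ℝ≥0) : ℝ≥0∞) ≤ q.radius :=
    q.le_radius_of_bound (2 * C / ρ) hq_bound
  have hqpos : 0 < q.radius := lt_of_lt_of_le (by exact_mod_cast half_pos hρ0') hqrad
  -- the function G
  set G : ℝ × ℝ → ℝ := fun z => q.sum (z - (a, 0)) with hG
  have hGanal : AnalyticAt ℝ G (a, 0) := by
    have hq0 : AnalyticAt ℝ q.sum 0 := (q.hasFPowerSeriesOnBall hqpos).analyticAt
    have hsub : AnalyticAt ℝ (fun z : ℝ × ℝ => z - (a, 0)) (a, 0) :=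
      (analyticAt_id).sub analyticAt_const
    have h15 : AnalyticAt ℝ (q.sum ∘ fun z : ℝ × ℝ => z - (a, 0)) (a, 0) :=
      AnalyticAt.comp (by simpa using hq0) hsub
    simpa [Function.comp_def] using h15
  refine ⟨G, hGanal, ?_⟩
  have hmin_pos : (0 : ℝ≥0∞) < min r ((ρ / 2 : ℝ≥0) : ℝ≥0∞) :=
    lt_min hpr.r_pos (by exact_mod_cast half_pos hρ0')
  filter_upwards [EMetric.ball_mem_nhds ((a, 0) : ℝ × ℝ) hmin_pos] with z hz
  set δ : ℝ × ℝ := z - (a, 0) with hδ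
  have hedist : edist δ (0 : ℝ × ℝ) = edist z ((a, 0) : ℝ × ℝ) := by
    rw [edist_eq_enorm_sub, edist_eq_enorm_sub, hδ, sub_zero]
  have hδr : δ ∈ Metric.eball (0 : ℝ × ℝ) r := by
    rw [Metric.mem_eball, hedist]
    exact lt_of_lt_of_le (Metric.mem_eball.mp hz) (min_le_left _ _)
  have hδq : δ ∈ Metric.eball (0 : ℝ × ℝ) q.radius := by
    rw [Metric.mem_eball, hedist]
    exact lt_of_lt_of_le (Metric.mem_eball.mp hz) (le_trans (min_le_right _ _) hqrad)
  have hp_sum : HasSum (fun m => p m fun _ => δ) (F z) := by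
    have h6 := hpr.hasSum hδr
    have h7 : (a, (0:ℝ)) + δ = z := by rw [hδ]; ring
    rwa [h7] at h6
  have hq_sum : HasSum (fun n => q n fun _ => δ) (q.sum δ) := q.hasSum hδq
  -- diagonal values of q
  have hq_diag : ∀ n : ℕ, (p (n + 1) fun _ => δ) = δ.2 * (q n fun _ => δ) := by
    intro n
    have hk : ∀ s ∈ (Finset.univ : Finset (Finset (Fin (n + 1)))).erase ∅,
        1 ≤ s.card ∧ s.card ≤ n + 1 := by
      intro s hsmem
      have h8 : s ≠ ∅ := (Finset.mem_erase.mp hsmem).1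
      exact ⟨Finset.card_pos.mpr (Finset.nonempty_iff_ne_empty.mpr h8), by
        have h18 := Finset.card_le_univ s
        simpa [Fintype.card_fin] using h18⟩
    have hL : (p (n + 1) fun _ => δ)
        = ∑ s ∈ (Finset.univ : Finset (Finset (Fin (n + 1)))).erase ∅,
          δ.1 ^ (n + 1 - s.card) * δ.2 ^ s.card * A (n + 1) s := by
      have h9 := key_expand (n + 1) (p (n + 1)) δ.1 δ.2
      rw [Prod.mk.eta] at h9
      have h17 := hA0 (n + 1)
      rw [hA] at h17
      have hz0 : δ.1 ^ (n + 1 - (∅ : Finset (Fin (n + 1))).card)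
          * δ.2 ^ (∅ : Finset (Fin (n + 1))).card
          * ((p (n + 1)) fun i : Fin (n + 1) =>
              if i ∈ (∅ : Finset (Fin (n + 1))) then ((0:ℝ),(1:ℝ)) else (1,0)) = 0 := by
        rw [show ((p (n + 1)) fun i : Fin (n + 1) =>
            if i ∈ (∅ : Finset (Fin (n + 1))) then ((0:ℝ),(1:ℝ)) else (1,0)) = 0 from h17,
          mul_zero]
      rw [h9, ← Finset.sum_erase (f := fun s : Finset (Fin (n + 1)) =>
        δ.1 ^ (n + 1 - s.card) * δ.2 ^ s.card * ((p (n + 1)) fun i =>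
          if i ∈ s then ((0:ℝ),(1:ℝ)) else (1,0))) _ hz0]
    have hR : (q n fun _ => δ)
        = ∑ s ∈ (Finset.univ : Finset (Finset (Fin (n + 1)))).erase ∅,
          A (n + 1) s * (δ.1 ^ (n + 1 - s.card) * δ.2 ^ (n - (n + 1 - s.card))) := by
      rw [hq]
      rw [ContinuousMultilinearMap.sum_apply]
      refine Finset.sum_congr rfl fun s hsmem => ?_
      obtain ⟨hk1, hk2⟩ := hk s hsmem
      rw [ContinuousMultilinearMap.smul_apply, hmon_diag n (n + 1 - s.card) (by omega) δ,
        smul_eq_mul]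
    rw [hL, hR, Finset.mul_sum]
    refine Finset.sum_congr rfl fun s hsmem => ?_
    obtain ⟨hk1, hk2⟩ := hk s hsmem
    have h10 : n - (n + 1 - s.card) = s.card - 1 := by omega
    have h11 : δ.2 ^ s.card = δ.2 * δ.2 ^ (s.card - 1) := by
      conv_lhs => rw [show s.card = (s.card - 1) + 1 from by omega]
      rw [pow_succ']
    rw [h10, h11]
    ring
  have h00 : (p 0 fun _ => δ) = 0 := by
    have h12 : (fun _ : Fin 0 => δ) = fun i : Fin 0 =>
        (if i ∈ (∅ : Finset (Fin 0)) then ((0:ℝ),(1:ℝ)) else (1,0)) := by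
      funext i; exact absurd i.2 (Nat.not_lt_zero _)
    rw [h12]
    exact hA0 0
  have h1 : HasSum (fun n => p (n + 1) fun _ => δ) (F z) := by
    have h16 := (hasSum_nat_add_iff' (f := fun m => (p m) fun _ => δ) 1).mpr hp_sum
    simpa [h00] using h16
  have h2 : HasSum (fun n => δ.2 * (q n fun _ => δ)) (F z) := by
    have h13 : (fun n => δ.2 * (q n fun _ => δ)) = fun n => p (n + 1) fun _ => δ := by
      funext n; rw [hq_diag n]
    rwa [h13]
  have h3 : F z = δ.2 * q.sum δ := h2.unique (hq_sum.mul_left δ.2)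
  have h14 : δ.2 = z.2 := by rw [hδ]; simp
  rw [h3, h14, hG]
lemma slice_hasDerivAt {h : ℝ × ℝ → ℝ} {x y : ℝ} {ht : ℝ → ℝ}
    (ht_an : AnalyticAt ℝ ht y) (ht_eq : ∀ y' : ℝ, h (x, y') = (y' - y) * ht y') :
    HasDerivAt (fun y' => h (x, y')) (ht y) y := by
  have h1 : HasDerivAt (fun y' : ℝ => (y' - y) * ht y')
      (1 * ht y + (y - y) * deriv ht y) y :=
    ((hasDerivAt_id y).sub_const y).mul ht_an.differentiableAt.hasDerivAt
  have h2 : (fun y' : ℝ => h (x, y')) = fun y' : ℝ => (y' - y) * ht y' := funext ht_eq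
  rw [h2]
  simpa using h1


/-- Lemma on division of real-analytic functions on ℝ².
If `f, h : ℝ² → ℝ` are real-analytic, every zero of `h` is a zero of `f`, and at each zero
`(x₀, y₀)` of `h` the one-variable function `y ↦ h (x₀, y)` has a zero of order exactly one
at `y₀` (i.e. `h (x₀, y) = (y - y₀) * h̃ y` with `h̃` real-analytic and `h̃ y₀ ≠ 0`), then
there is a real-analytic `g : ℝ² → ℝ` with `f = h * g`. -/
theorem stmt_0 (f h : ℝ × ℝ → ℝ)
    (hf : ∀ z : ℝ × ℝ, AnalyticAt ℝ f z)
    (hh : ∀ z : ℝ × ℝ, AnalyticAt ℝ h z)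
    (hzero : ∀ z : ℝ × ℝ, h z = 0 → f z = 0)
    (horder : ∀ x₀ y₀ : ℝ, h (x₀, y₀) = 0 →
      ∃ ht : ℝ → ℝ, (∀ y : ℝ, AnalyticAt ℝ ht y) ∧
        (∀ y : ℝ, h (x₀, y) = (y - y₀) * ht y) ∧ ht y₀ ≠ 0) :
    ∃ g : ℝ × ℝ → ℝ, (∀ z : ℝ × ℝ, AnalyticAt ℝ g z) ∧
      ∀ z : ℝ × ℝ, f z = h z * g z := by
  classical
  set g : ℝ × ℝ → ℝ := fun z =>
    if h z = 0 then deriv (fun y => f (z.1, y)) z.2 / deriv (fun y => h (z.1, y)) z.2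
    else f z / h z with hg
  refine ⟨g, ?_, ?_⟩
  swap
  · intro z
    by_cases hz : h z = 0
    · rw [hzero z hz, hz, zero_mul]
    · rw [hg]
      simp only [hz, if_false]
      rw [mul_div_cancel₀ _ hz]
  intro z₀
  by_cases hz0 : h z₀ = 0
  swap
  · have hev : ∀ᶠ z in 𝓝 z₀, f z / h z = g z := by
      filter_upwards [((hh z₀).continuousAt.eventually_ne hz0)] with z hzne
      rw [hg]; simp only [hzne, if_false]
    exact ((hf z₀).div (hh z₀) hz0).congr hev
  obtain ⟨x₀, y₀⟩ := z₀
  obtain ⟨ht, ht_an, ht_eq, ht_ne⟩ := horder x₀ y₀ hz0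
  -- the derivative of h at (x₀, y₀)
  have hDh : HasFDerivAt h (fderiv ℝ h (x₀, y₀)) (x₀, y₀) := (hh _).differentiableAt.hasFDerivAt
  set Dh := fderiv ℝ h (x₀, y₀) with hDhdef
  have hcurve : HasDerivAt (fun y => ((x₀, y) : ℝ × ℝ)) (((0 : ℝ), (1 : ℝ)) : ℝ × ℝ) y₀ :=
    (hasDerivAt_const y₀ x₀).prodMk (hasDerivAt_id y₀)
  have hcomp : HasDerivAt (fun y => h (x₀, y)) (Dh (0, 1)) y₀ := hDh.comp_hasDerivAt y₀ hcurve
  have hb : Dh (0, 1) = ht y₀ := hcomp.unique (slice_hasDerivAt (ht_an y₀) ht_eq)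
  have hbne : Dh (0, 1) ≠ 0 := by rw [hb]; exact ht_ne
  have hDv : ∀ v : ℝ × ℝ, Dh v = v.1 * Dh (1, 0) + v.2 * Dh (0, 1) := by
    intro v
    have hv : v = v.1 • ((1:ℝ),(0:ℝ)) + v.2 • ((0:ℝ),(1:ℝ)) := by simp [Prod.ext_iff]
    conv_lhs => rw [hv]
    rw [map_add, map_smul, map_smul]
    simp [smul_eq_mul]
  -- the linear change of variables
  set EL : (ℝ × ℝ) ≃ₗ[ℝ] (ℝ × ℝ) :=
    { toFun := fun v => (v.1, Dh v)
      invFun := fun u => (u.1, (u.2 - Dh (1, 0) * u.1) / Dh (0, 1))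
      map_add' := by intro v w; simp [Prod.ext_iff]
      map_smul' := by intro c v; simp [Prod.ext_iff]
      left_inv := by
        intro v
        have hver : (Dh v - Dh (1, 0) * v.1) / Dh (0, 1) = v.2 := by
          rw [hDv v]; field_simp; ring
        show ((v.1 : ℝ), (Dh v - Dh (1, 0) * v.1) / Dh (0, 1)) = v
        rw [hver]
      right_inv := by
        intro u
        have hver : Dh (u.1, (u.2 - Dh (1, 0) * u.1) / Dh (0, 1)) = u.2 := by
          rw [hDv]
          simp only
          field_simp
          ring
        show ((u.1 : ℝ), Dh (u.1, (u.2 - Dh (1, 0) * u.1) / Dh (0, 1))) = u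
        rw [hver] } with hEL
  set EC : (ℝ × ℝ) ≃L[ℝ] (ℝ × ℝ) := EL.toContinuousLinearEquiv with hEC
  have hECapp : ∀ v : ℝ × ℝ, EC v = (v.1, Dh v) := fun v => rfl
  -- the analytic change of variables Φ
  set Φ : ℝ × ℝ → ℝ × ℝ := fun z => (z.1, h z) with hΦ
  have hΦanal : AnalyticAt ℝ Φ (x₀, y₀) := analyticAt_fst.prod (hh (x₀, y₀))
  have hstrict : HasStrictFDerivAt Φ (EC : (ℝ × ℝ) →L[ℝ] (ℝ × ℝ)) (x₀, y₀) := by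
    have h1 : HasStrictFDerivAt h Dh (x₀, y₀) := (hh _).hasStrictFDerivAt
    have h2 : HasStrictFDerivAt (fun z : ℝ × ℝ => z.1)
        (ContinuousLinearMap.fst ℝ ℝ ℝ) (x₀, y₀) := hasStrictFDerivAt_fst
    have h3 := h2.prodMk h1
    have h4 : (EC : (ℝ × ℝ) →L[ℝ] (ℝ × ℝ))
        = (ContinuousLinearMap.fst ℝ ℝ ℝ).prod Dh := by
      apply ContinuousLinearMap.ext
      intro v
      rfl
    rw [h4]
    exact h3
  -- local inverse
  set Φ' := hstrict.toOpenPartialHomeomorph Φ with hΦ'def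
  have hmem : ((x₀ : ℝ), (y₀ : ℝ)) ∈ Φ'.source := hstrict.mem_toOpenPartialHomeomorph_source
  have hΦ'coe : (Φ' : ℝ × ℝ → ℝ × ℝ) = Φ := hstrict.toOpenPartialHomeomorph_coe
  obtain ⟨pp, hpp⟩ := hΦanal
  have hΦanal : AnalyticAt ℝ Φ (x₀, y₀) := ⟨pp, hpp⟩
  have hpp1 : pp 1 = (continuousMultilinearCurryFin1 ℝ (ℝ × ℝ) (ℝ × ℝ)).symm
      (EC : (ℝ × ℝ) →L[ℝ] (ℝ × ℝ)) := by
    have h4 := hpp.hasFDerivAt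
    have h5 := hstrict.hasFDerivAt
    have h6 := h4.unique h5
    rw [← h6]
    simp
  have hΦz0 : Φ (x₀, y₀) = ((x₀ : ℝ), (0 : ℝ)) := by rw [hΦ]; simp [hz0]
  have hppΦ' : HasFPowerSeriesAt (Φ' : ℝ × ℝ → ℝ × ℝ) pp (x₀, y₀) := by
    rw [hΦ'coe]; exact hpp
  have hsymm := Φ'.hasFPowerSeriesAt_symm hmem hppΦ' hpp1
  have hΦ'z0 : Φ' (x₀, y₀) = ((x₀ : ℝ), (0 : ℝ)) := by
    rw [show Φ' (x₀, y₀) = Φ (x₀, y₀) from congrFun hΦ'coe (x₀, y₀), hΦz0]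
  have hΨanal : AnalyticAt ℝ (Φ'.symm : ℝ × ℝ → ℝ × ℝ) ((x₀ : ℝ), (0 : ℝ)) := by
    have h20 := hsymm.analyticAt
    rwa [hΦ'z0] at h20
  have hΨz : Φ'.symm ((x₀ : ℝ), (0 : ℝ)) = (x₀, y₀) := by
    rw [← hΦ'z0]; exact Φ'.left_inv hmem
  have hF0anal : AnalyticAt ℝ (fun w => f (Φ'.symm w)) ((x₀ : ℝ), (0 : ℝ)) := by
    have h7 : AnalyticAt ℝ f (Φ'.symm ((x₀ : ℝ), (0 : ℝ))) := by rw [hΨz]; exact hf _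
    have h8 := h7.comp hΨanal
    simpa [Function.comp_def] using h8
  have hΦsv : ∀ w ∈ Φ'.target, h (Φ'.symm w) = w.2 := by
    intro w hw
    have h9 : Φ' (Φ'.symm w) = w := Φ'.right_inv hw
    rw [congrFun hΦ'coe] at h9
    have h9' := congrArg Prod.snd h9
    simpa [hΦ] using h9'
  have hF00 : ∀ᶠ x in 𝓝 x₀, f (Φ'.symm (x, 0)) = 0 := by
    have htarget : ∀ᶠ w in 𝓝 (((x₀ : ℝ), (0 : ℝ)) : ℝ × ℝ), w ∈ Φ'.target := by
      apply Φ'.open_target.mem_nhds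
      rw [← hΦ'z0]; exact Φ'.map_source hmem
    have hcont : Filter.Tendsto (fun x : ℝ => ((x, (0 : ℝ)) : ℝ × ℝ)) (𝓝 x₀)
        (𝓝 (((x₀ : ℝ), (0 : ℝ)) : ℝ × ℝ)) :=
      (continuous_id.prodMk continuous_const).tendsto x₀
    filter_upwards [hcont.eventually htarget] with x hx
    exact hzero _ (hΦsv _ hx)
  obtain ⟨G, hGanal, hGeq⟩ := div_lemma hF0anal hF00
  have hGΦanal : AnalyticAt ℝ (fun z => G (Φ z)) (x₀, y₀) := by
    have hG' : AnalyticAt ℝ G (Φ (x₀, y₀)) := by rw [hΦz0]; exact hGanal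
    simpa [Function.comp_def] using hG'.comp hΦanal
  have hkey : ∀ᶠ z in 𝓝 ((x₀, y₀) : ℝ × ℝ), f z = h z * G (Φ z) := by
    have hΦtend : Filter.Tendsto Φ (𝓝 (x₀, y₀)) (𝓝 (((x₀ : ℝ), (0 : ℝ)) : ℝ × ℝ)) := by
      rw [← hΦz0]; exact hΦanal.continuousAt
    filter_upwards [Φ'.open_source.mem_nhds hmem, hΦtend.eventually hGeq] with z hzs hzG
    have h10 : Φ'.symm (Φ z) = z := by
      rw [← congrFun hΦ'coe z]; exact Φ'.left_inv hzs
    rw [h10] at hzG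
    simpa [hΦ] using hzG
  have hc_ev : ∀ᶠ z in 𝓝 ((x₀, y₀) : ℝ × ℝ), AnalyticAt ℝ (fun w => G (Φ w)) z :=
    hGΦanal.eventually_analyticAt
  obtain ⟨U, hUsub, hUopen, hUmem⟩ := mem_nhds_iff.mp
    (Filter.eventually_iff.mp (hkey.and hc_ev))
  have hfinal : ∀ᶠ z in 𝓝 ((x₀, y₀) : ℝ × ℝ), g z = G (Φ z) := by
    filter_upwards [hUopen.mem_nhds hUmem] with z hzU
    by_cases hz : h z = 0
    · obtain ⟨ht', ht'_an, ht'_eq, ht'_ne⟩ := horder z.1 z.2 (by rwa [Prod.mk.eta])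
      have hdh : deriv (fun y => h (z.1, y)) z.2 = ht' z.2 :=
        (slice_hasDerivAt (ht'_an z.2) ht'_eq).deriv
      have hup : ∀ᶠ y in 𝓝 z.2, ((z.1, y) : ℝ × ℝ) ∈ U := by
        have hctd : Filter.Tendsto (fun y : ℝ => ((z.1, y) : ℝ × ℝ)) (𝓝 z.2) (𝓝 z) := by
          have h21 : Continuous (fun y : ℝ => ((z.1, y) : ℝ × ℝ)) :=
            continuous_const.prodMk continuous_id
          have h22 := h21.tendsto z.2
          rwa [Prod.mk.eta] at h22
        exact hctd.eventually (hUopen.mem_nhds hzU)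
      have hfs : ∀ᶠ y in 𝓝 z.2, f (z.1, y) = (y - z.2) * (ht' y * G (Φ (z.1, y))) := by
        filter_upwards [hup] with y hy
        have h11 := (hUsub hy).1
        rw [h11, ht'_eq y]; ring
      have hkan : AnalyticAt ℝ (fun y => G (Φ (z.1, y))) z.2 := by
        have h12 : AnalyticAt ℝ (fun w => G (Φ w)) (z.1, z.2) := by
          rw [Prod.mk.eta]; exact (hUsub hzU).2
        have h13 : AnalyticAt ℝ (fun y : ℝ => ((z.1, y) : ℝ × ℝ)) z.2 :=
          analyticAt_const.prod analyticAt_id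
        simpa [Function.comp_def] using h12.comp h13
      have hd2 : HasDerivAt (fun y => (y - z.2) * (ht' y * G (Φ (z.1, y))))
          (1 * (ht' z.2 * G (Φ (z.1, z.2)))
            + (z.2 - z.2) * deriv (fun y => ht' y * G (Φ (z.1, y))) z.2) z.2 :=
        ((hasDerivAt_id z.2).sub_const z.2).mul
          (((ht'_an z.2).mul hkan).differentiableAt.hasDerivAt)
      have hdf : deriv (fun y => f (z.1, y)) z.2 = ht' z.2 * G (Φ z) := by
        rw [Filter.EventuallyEq.deriv_eq hfs, hd2.deriv]
        simp
      rw [hg]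
      simp only
      rw [if_pos hz, hdf, hdh, mul_comm, mul_div_assoc, div_self ht'_ne, mul_one]
    · rw [hg]
      simp only
      rw [if_neg hz, (hUsub hzU).1, mul_comm, mul_div_assoc, div_self hz, mul_one]
  exact hGΦanal.congr (Filter.EventuallyEq.symm hfinal)
end

section
/- Let d ≥ 1, let a = (a₁, …, a_d) ∈ ℝ^d be nonzero, let U ⊆ ℝ^d be open, and let q be a real-analytic function on U such that q(x) = 0 for every x ∈ U with ∑_{k=1}^d a_k x_k = 0. Then there exists a real-analytic function r on U such that q(x) = (∑_{k=1}^d a_k x_k)·r(x) for all x ∈ U. -/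
open scoped BigOperators

open Fin ContinuousMultilinearMap Filter Topology
open scoped NNReal ENNReal

section Aux

variable {E : Type*} [NormedAddCommGroup E] [NormedSpace ℝ E]

/-- Curry isometry as a continuous linear map. -/
noncomputable def curryCLM (m : ℕ) :
    (ContinuousMultilinearMap ℝ (fun _ : Fin (m + 1) => E) ℝ) →L[ℝ]
      (E →L[ℝ] ContinuousMultilinearMap ℝ (fun _ : Fin m => E) ℝ) :=
  (continuousMultilinearCurryLeftEquiv ℝ (fun _ : Fin (m + 1) => E) ℝ).toContinuousLinearEquiv.toContinuousLinearMap

/-- Uncurry isometry as a continuous linear map. -/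
noncomputable def uncurryCLM (m : ℕ) :
    (E →L[ℝ] ContinuousMultilinearMap ℝ (fun _ : Fin m => E) ℝ) →L[ℝ]
      (ContinuousMultilinearMap ℝ (fun _ : Fin (m + 1) => E) ℝ) :=
  (continuousMultilinearCurryLeftEquiv ℝ (fun _ : Fin (m + 1) => E) ℝ).symm.toContinuousLinearEquiv.toContinuousLinearMap

/-- Division operator on multilinear maps. -/
noncomputable def DD (v : E) (π : E →L[ℝ] E) :
    (m : ℕ) → (ContinuousMultilinearMap ℝ (fun _ : Fin (m + 1) => E) ℝ) →L[ℝ]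
      (ContinuousMultilinearMap ℝ (fun _ : Fin m => E) ℝ)
  | 0 => (ContinuousLinearMap.apply ℝ _ v).comp (curryCLM 0)
  | (m + 1) =>
      (ContinuousLinearMap.apply ℝ _ v).comp (curryCLM (m + 1)) +
      (uncurryCLM m).comp
        (((ContinuousLinearMap.compL ℝ E _ _ (DD v π m)).comp
          ((ContinuousLinearMap.compL ℝ E E _).flip π)).comp (curryCLM (m + 1)))

lemma DD_zero_apply (v : E) (π : E →L[ℝ] E)
    (f : ContinuousMultilinearMap ℝ (fun _ : Fin 1 => E) ℝ) :
    DD v π 0 f = f.curryLeft v := rfl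

lemma DD_succ_apply (v : E) (π : E →L[ℝ] E) (m : ℕ)
    (f : ContinuousMultilinearMap ℝ (fun _ : Fin (m + 2) => E) ℝ) :
    DD v π (m + 1) f = f.curryLeft v +
      ((DD v π m).comp (f.curryLeft.comp π)).uncurryLeft := rfl

lemma DD_spec (ℓ : E →L[ℝ] ℝ) (v : E) (π : E →L[ℝ] E)
    (hπ : ∀ x, x - π x = ℓ x • v) :
    ∀ (m : ℕ) (f : ContinuousMultilinearMap ℝ (fun _ : Fin (m + 1) => E) ℝ) (h : E),
      f (fun _ => h) - f (fun _ => π h) = ℓ h * (DD v π m f (fun _ => h)) := by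
  intro m
  induction m with
  | zero =>
      intro f h
      have e : ∀ x : E, (fun _ : Fin 1 => x) = Fin.cons x (fun _ : Fin 0 => x) := by
        intro x; funext j; rw [Subsingleton.elim j 0, Fin.cons_zero]
      have e0 : (fun _ : Fin 0 => π h) = (fun _ : Fin 0 => h) := funext fun j => j.elim0
      rw [DD_zero_apply, e h, e (π h), ← curryLeft_apply, ← curryLeft_apply, e0,
        ← ContinuousMultilinearMap.sub_apply, ← ContinuousLinearMap.map_sub, hπ, map_smul,
        ContinuousMultilinearMap.smul_apply, smul_eq_mul]
  | succ m ih =>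
      intro f h
      have e : ∀ x : E, (fun _ : Fin (m + 1 + 1) => x) = Fin.cons x (fun _ : Fin (m + 1) => x) := by
        intro x; funext j
        refine Fin.cases ?_ ?_ j
        · rw [Fin.cons_zero]
        · intro i; rw [Fin.cons_succ]
      calc f (fun _ => h) - f (fun _ => π h)
          = f.curryLeft h (fun _ => h) - f.curryLeft (π h) (fun _ => π h) := by
            rw [e h, e (π h), curryLeft_apply, curryLeft_apply]
        _ = (f.curryLeft h (fun _ => h) - f.curryLeft (π h) (fun _ => h)) +
            (f.curryLeft (π h) (fun _ => h) - f.curryLeft (π h) (fun _ => π h)) := by ring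
        _ = ℓ h * (f.curryLeft v (fun _ => h)) +
            ℓ h * (DD v π m (f.curryLeft (π h)) (fun _ => h)) := by
            rw [← ih (f.curryLeft (π h)) h, ← ContinuousMultilinearMap.sub_apply,
              ← ContinuousLinearMap.map_sub, hπ, map_smul,
              ContinuousMultilinearMap.smul_apply, smul_eq_mul]
        _ = ℓ h * (DD v π (m + 1) f (fun _ => h)) := by
            have hd : DD v π (m + 1) f (fun _ : Fin (m + 1) => h)
                = f.curryLeft v (fun _ : Fin (m + 1) => h)
                  + DD v π m (f.curryLeft (π h)) (fun _ : Fin m => h) := rfl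
            rw [hd]
            ring

lemma DD_norm (v : E) (π : E →L[ℝ] E) :
    ∀ (m : ℕ) (f : ContinuousMultilinearMap ℝ (fun _ : Fin (m + 1) => E) ℝ),
      ‖DD v π m f‖ ≤ (m + 1) * (max 1 ‖π‖) ^ m * (‖v‖ * ‖f‖) := by
  intro m
  induction m with
  | zero =>
      intro f
      rw [DD_zero_apply]
      have hb : ‖f.curryLeft v‖ ≤ ‖v‖ * ‖f‖ := by
        calc ‖f.curryLeft v‖ ≤ ‖f.curryLeft‖ * ‖v‖ := f.curryLeft.le_opNorm v
          _ = ‖v‖ * ‖f‖ := by rw [ContinuousMultilinearMap.curryLeft_norm]; ring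
      simpa using hb
  | succ m ih =>
      intro f
      set C : ℝ := max 1 ‖π‖ with hC
      have hC1 : (1 : ℝ) ≤ C := le_max_left _ _
      have hπC : ‖π‖ ≤ C := le_max_right _ _
      have h1 : ‖f.curryLeft v‖ ≤ ‖v‖ * ‖f‖ := by
        calc ‖f.curryLeft v‖ ≤ ‖f.curryLeft‖ * ‖v‖ := f.curryLeft.le_opNorm v
          _ = ‖v‖ * ‖f‖ := by rw [ContinuousMultilinearMap.curryLeft_norm]; ring
      have hA : ‖(DD v π m).comp (f.curryLeft.comp π)‖ ≤
          (m + 1) * C ^ m * (‖v‖ * (‖f‖ * ‖π‖)) := by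
        refine ContinuousLinearMap.opNorm_le_bound _ (by positivity) fun x => ?_
        have hx : ‖DD v π m (f.curryLeft (π x))‖ ≤
            (m + 1) * C ^ m * (‖v‖ * ‖f.curryLeft (π x)‖) := ih _
        have hx2 : ‖f.curryLeft (π x)‖ ≤ ‖f‖ * (‖π‖ * ‖x‖) := by
          calc ‖f.curryLeft (π x)‖ ≤ ‖f.curryLeft‖ * ‖π x‖ := f.curryLeft.le_opNorm (π x)
            _ = ‖f‖ * ‖π x‖ := by rw [ContinuousMultilinearMap.curryLeft_norm]
            _ ≤ ‖f‖ * (‖π‖ * ‖x‖) := by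
                have := π.le_opNorm x
                gcongr
        calc ‖((DD v π m).comp (f.curryLeft.comp π)) x‖
            = ‖DD v π m (f.curryLeft (π x))‖ := rfl
          _ ≤ (m + 1) * C ^ m * (‖v‖ * ‖f.curryLeft (π x)‖) := hx
          _ ≤ (m + 1) * C ^ m * (‖v‖ * (‖f‖ * (‖π‖ * ‖x‖))) := by
              have hm : (0 : ℝ) ≤ (m + 1) * C ^ m := by positivity
              gcongr
          _ = (m + 1) * C ^ m * (‖v‖ * (‖f‖ * ‖π‖)) * ‖x‖ := by ring
      rw [DD_succ_apply]
      refine le_trans (norm_add_le _ _) ?_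
      rw [ContinuousLinearMap.uncurryLeft_norm]
      refine le_trans (add_le_add h1 hA) ?_
      · have hCm : (1 : ℝ) ≤ C ^ (m + 1) := one_le_pow₀ hC1
        have hCm' : C ^ m * ‖π‖ ≤ C ^ (m + 1) := by
          rw [pow_succ]
          have h0 : (0 : ℝ) ≤ C ^ m := by positivity
          gcongr
        have hv0 : (0 : ℝ) ≤ ‖v‖ * ‖f‖ := by positivity
        have hmp : (0 : ℝ) ≤ (m : ℝ) + 1 := by positivity
        push_cast
        nlinarith [mul_nonneg hmp hv0]

/-- Key local division lemma. -/
theorem key_lemma (ℓ : E →L[ℝ] ℝ) (v : E) (hv : ℓ v = 1)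
    (U : Set E) (hU : IsOpen U) (q : E → ℝ)
    (hq : ∀ x ∈ U, AnalyticAt ℝ q x)
    (hzero : ∀ x ∈ U, ℓ x = 0 → q x = 0) :
    ∃ r : E → ℝ, (∀ x ∈ U, AnalyticAt ℝ r x) ∧ ∀ x ∈ U, q x = ℓ x * r x := by
  classical
  set π : E →L[ℝ] E := ContinuousLinearMap.id ℝ E - ℓ.smulRight v with hπdef
  have hπ : ∀ x, π x = x - ℓ x • v := fun x => rfl
  have hsub : ∀ x, x - π x = ℓ x • v := by
    intro x; rw [hπ]; abel
  have hℓπ : ∀ x, ℓ (π x) = 0 := by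
    intro x; rw [hπ, map_sub, map_smul, hv, smul_eq_mul, mul_one, sub_self]
  set r : E → ℝ := fun x => if ℓ x = 0 then fderiv ℝ q x v else q x / ℓ x with hrdef
  refine ⟨r, ?_, ?_⟩
  · intro x₀ hx₀
    by_cases h0 : ℓ x₀ = 0
    · -- hard case: ℓ x₀ = 0
      obtain ⟨p, hpAt⟩ := hq x₀ hx₀
      obtain ⟨εp, hp0⟩ := hpAt
      obtain ⟨δ, hδpos, hδU⟩ := EMetric.isOpen_iff.1 hU x₀ hx₀
      have hεpos : 0 < min εp δ := lt_min hp0.r_pos hδpos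
      have hp : HasFPowerSeriesOnBall q p x₀ (min εp δ) := hp0.mono hεpos (min_le_left _ _)
      have hball : Metric.eball x₀ (min εp δ) ⊆ U :=
        le_trans (EMetric.ball_subset_ball (min_le_right _ _)) hδU
      obtain ⟨R, hR0, hRε⟩ : ∃ R : ℝ≥0, 0 < R ∧ (R : ℝ≥0∞) < min εp δ := by
        rcases ENNReal.lt_iff_exists_nnreal_btwn.1 hεpos with ⟨R, hR1, hR2⟩
        exact ⟨R, by exact_mod_cast hR1, hR2⟩
      have hRpos : (0 : ℝ) < R := by exact_mod_cast hR0
      obtain ⟨M, hM0, hM⟩ := p.norm_mul_pow_le_of_lt_radius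
        (lt_of_lt_of_le hRε (le_trans (min_le_left _ _) hp0.r_le))
      set Cnn : ℝ≥0 := max 1 ‖π‖₊ with hCnn
      have hC1 : (1 : ℝ) ≤ (Cnn : ℝ) := by
        have : (1 : ℝ≥0) ≤ Cnn := le_max_left _ _
        exact_mod_cast this
      have hCpos : (0 : ℝ) < (Cnn : ℝ) := lt_of_lt_of_le one_pos hC1
      have hπC : ‖π‖ ≤ (Cnn : ℝ) := by
        have : ‖π‖₊ ≤ Cnn := le_max_right _ _
        exact_mod_cast this
      have hCr : ((Cnn : ℝ)) = max 1 ‖π‖ := by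
        rw [hCnn]; push_cast; rfl
      set ρ : ℝ≥0 := R / (2 * Cnn) with hρ
      have hCnn0 : Cnn ≠ 0 := by
        intro hcc; rw [hcc] at hCpos; simp at hCpos
      have hρ0 : ρ ≠ 0 := div_ne_zero hR0.ne' (mul_ne_zero two_ne_zero hCnn0)
      have hρpos' : 0 < ρ := pos_iff_ne_zero.mpr hρ0
      have hρreal : (ρ : ℝ) = (R : ℝ) / (2 * (Cnn : ℝ)) := by
        rw [hρ]; push_cast; ring
      have hρCeq : (ρ : ℝ) * (Cnn : ℝ) = (R : ℝ) / 2 := by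
        rw [hρreal]; field_simp
      have hρR : (ρ : ℝ) ≤ (R : ℝ) := by
        nlinarith [mul_le_mul_of_nonneg_left hC1 (NNReal.coe_nonneg ρ)]
      set q' : FormalMultilinearSeries ℝ E ℝ := fun n => DD v π n (p (n + 1)) with hq'def
      -- summability and radius
      have hqn : ∀ n : ℕ, ‖q' n‖ * (ρ : ℝ) ^ n ≤ (M * ‖v‖ / R) * ((n + 1) * (1 / 2) ^ n) := by
        intro n
        have h1 : ‖q' n‖ ≤ (n + 1) * (Cnn : ℝ) ^ n * (‖v‖ * ‖p (n + 1)‖) := by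
          have := DD_norm v π n (p (n + 1))
          rwa [← hCr] at this
        have h2 : ‖p (n + 1)‖ * (R : ℝ) ^ (n + 1) ≤ M := hM (n + 1)
        have h4 : ‖p (n + 1)‖ ≤ M / (R : ℝ) ^ (n + 1) :=
          (le_div_iff₀ (by positivity)).2 h2
        have h3 : ‖q' n‖ * (ρ : ℝ) ^ n ≤
            (n + 1) * ((Cnn : ℝ) * ρ) ^ n * ‖v‖ * ‖p (n + 1)‖ := by
          calc ‖q' n‖ * (ρ : ℝ) ^ n
              ≤ ((n + 1) * (Cnn : ℝ) ^ n * (‖v‖ * ‖p (n + 1)‖)) * (ρ : ℝ) ^ n := by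
                have : (0:ℝ) ≤ (ρ : ℝ) ^ n := by positivity
                exact mul_le_mul_of_nonneg_right h1 this
            _ = (n + 1) * ((Cnn : ℝ) * ρ) ^ n * ‖v‖ * ‖p (n + 1)‖ := by
                rw [mul_pow]; ring
        calc ‖q' n‖ * (ρ : ℝ) ^ n
            ≤ (n + 1) * ((Cnn : ℝ) * ρ) ^ n * ‖v‖ * ‖p (n + 1)‖ := h3
          _ ≤ (n + 1) * ((R : ℝ) / 2) ^ n * ‖v‖ * (M / (R : ℝ) ^ (n + 1)) := by
              have hb : ((Cnn : ℝ) * ρ) ^ n ≤ ((R : ℝ) / 2) ^ n := by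
                apply pow_le_pow_left₀ (by positivity)
                rw [mul_comm]; exact le_of_eq hρCeq
              have hnn : (0:ℝ) ≤ (n + 1 : ℝ) := by positivity
              have h5 : (0:ℝ) ≤ ‖v‖ := norm_nonneg v
              have h6 : (0:ℝ) ≤ ((R:ℝ)/2)^n := by positivity
              have h7 : (0:ℝ) ≤ ‖p (n+1)‖ := norm_nonneg _
              have h8 : (0:ℝ) ≤ M / (R:ℝ)^(n+1) := by positivity
              calc (n + 1 : ℝ) * ((Cnn : ℝ) * ρ) ^ n * ‖v‖ * ‖p (n + 1)‖
                  ≤ (n + 1 : ℝ) * ((R : ℝ) / 2) ^ n * ‖v‖ * ‖p (n + 1)‖ := by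
                    have h9 : (0:ℝ) ≤ ((Cnn:ℝ) * ρ)^n := by positivity
                    gcongr
                _ ≤ (n + 1 : ℝ) * ((R : ℝ) / 2) ^ n * ‖v‖ * (M / (R : ℝ) ^ (n + 1)) := by
                    gcongr
          _ = (M * ‖v‖ / R) * ((n + 1) * (1 / 2) ^ n) := by
              rw [div_pow]
              field_simp
              have h2n : ((1:ℝ)/2)^n * 2^n = 1 := by rw [← mul_pow]; norm_num
              linear_combination (-(R:ℝ) * (R:ℝ)^n * ‖v‖) * h2n
      have hhalf : Summable (fun n : ℕ => ((n : ℝ) + 1) * (1 / 2) ^ n) := by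
        have h1 := summable_pow_mul_geometric_of_norm_lt_one (R := ℝ) 1
          (r := (1 / 2 : ℝ)) (by norm_num)
        have h2 : Summable (fun n : ℕ => ((1 : ℝ) / 2) ^ n) :=
          summable_geometric_of_lt_one (by norm_num) (by norm_num)
        refine (h1.add h2).congr fun n => ?_
        push_cast; ring
      have hsummable : Summable (fun n => ‖q' n‖ * (ρ : ℝ) ^ n) :=
        Summable.of_nonneg_of_le (fun n => by positivity) hqn (hhalf.mul_left _)
      have hradius : (ρ : ℝ≥0∞) ≤ q'.radius := q'.le_radius_of_summable_norm hsummable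
      have hradpos : (0 : ℝ≥0∞) < q'.radius :=
        lt_of_lt_of_le (by exact_mod_cast hρpos') hradius
      -- memberships
      have hmemε : ∀ y : E, ‖y‖ < (ρ : ℝ) → (‖y‖₊ : ℝ≥0∞) < min εp δ := by
        intro y hy
        have h1 : ‖y‖₊ < R := by
          have h2 : ‖y‖ < (R : ℝ) := lt_of_lt_of_le hy hρR
          exact_mod_cast h2
        exact lt_trans (ENNReal.coe_lt_coe.2 h1) hRε
      have hmemU : ∀ y : E, (‖y‖₊ : ℝ≥0∞) < min εp δ → x₀ + y ∈ U := by
        intro y hy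
        apply hball
        rw [EMetric.mem_ball, edist_eq_enorm_sub, add_sub_cancel_left]
        exact hy
      have hπmem : ∀ y : E, ‖y‖ < (ρ : ℝ) → (‖π y‖₊ : ℝ≥0∞) < min εp δ := by
        intro y hy
        have h1 : ‖π y‖ < (R : ℝ) := by
          calc ‖π y‖ ≤ ‖π‖ * ‖y‖ := π.le_opNorm y
            _ ≤ (Cnn : ℝ) * ‖y‖ := mul_le_mul_of_nonneg_right hπC (norm_nonneg y)
            _ < (Cnn : ℝ) * ρ := mul_lt_mul_of_pos_left hy hCpos
            _ ≤ (R : ℝ) / 2 := by rw [mul_comm]; exact le_of_eq hρCeq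
            _ < R := by linarith
        have h2 : ‖π y‖₊ < R := by exact_mod_cast h1
        exact lt_trans (ENNReal.coe_lt_coe.2 h2) hRε
      -- sum identities
      have key2 : ∀ y : E, ‖y‖ < (ρ : ℝ) → ℓ y ≠ 0 → q'.sum y = q (x₀ + y) / ℓ y := by
        intro y hy hℓy
        have hy' : (‖y‖₊ : ℝ≥0∞) < min εp δ := hmemε y hy
        have hs1 : HasSum (fun n => p n (fun _ => y)) (q (x₀ + y)) :=
          hp.hasSum (mem_emetric_ball_zero_iff.2 hy')
        have hπy' : (‖π y‖₊ : ℝ≥0∞) < min εp δ := hπmem y hy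
        have hs2 : HasSum (fun n => p n (fun _ => π y)) (q (x₀ + π y)) :=
          hp.hasSum (mem_emetric_ball_zero_iff.2 hπy')
        have hq0 : q (x₀ + π y) = 0 :=
          hzero _ (hmemU _ hπy') (by rw [map_add, h0, hℓπ, add_zero])
        rw [hq0] at hs2
        have hs3 := hs1.sub hs2
        rw [sub_zero] at hs3
        have hf0 : p 0 (fun _ => y) - p 0 (fun _ => π y) = 0 := by
          rw [show (fun _ : Fin 0 => y) = (fun _ : Fin 0 => π y) from
            funext fun j => j.elim0, sub_self]
        have hs4 : HasSum (fun n => p (n + 1) (fun _ => y) - p (n + 1) (fun _ => π y))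
            (q (x₀ + y)) := by
          have := (hasSum_nat_add_iff' 1).2 hs3
          simpa [hf0] using this
        have heq : (fun n => p (n + 1) (fun _ => y) - p (n + 1) (fun _ => π y))
            = fun n => ℓ y * q' n (fun _ => y) :=
          funext fun n => DD_spec ℓ v π hsub n (p (n + 1)) y
        rw [heq] at hs4
        have hs6 : HasSum (fun n => q' n (fun _ => y)) (q'.sum y) :=
          q'.hasSum (mem_emetric_ball_zero_iff.2
            (lt_of_lt_of_le (by exact_mod_cast hy : (‖y‖₊ : ℝ≥0∞) < ρ) hradius))
        have huniq : ℓ y * q'.sum y = q (x₀ + y) := (hs6.mul_left (ℓ y)).unique hs4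
        rw [eq_div_iff hℓy, mul_comm]
        exact huniq
      have key3 : ∀ y : E, ‖y‖ < (ρ : ℝ) → ℓ y = 0 → q'.sum y = fderiv ℝ q (x₀ + y) v := by
        intro y hy hℓy
        have hymem : x₀ + y ∈ U := hmemU y (hmemε y hy)
        have hqy0 : q (x₀ + y) = 0 := hzero _ hymem (by rw [map_add, h0, hℓy, add_zero])
        have hconty : ContinuousAt q'.sum y :=
          (q'.hasFPowerSeriesOnBall hradpos).continuousOn.continuousAt
            (EMetric.isOpen_ball.mem_nhds (mem_emetric_ball_zero_iff.2
              (lt_of_lt_of_le (by exact_mod_cast hy : (‖y‖₊ : ℝ≥0∞) < ρ) hradius)))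
        have hpath : Tendsto (fun t : ℝ => y + t • v) (𝓝 0) (𝓝 y) := by
          have hcp : Continuous (fun t : ℝ => y + t • v) := by fun_prop
          simpa using hcp.tendsto 0
        have T1 : Tendsto (fun t : ℝ => q'.sum (y + t • v)) (𝓝[≠] (0 : ℝ))
            (𝓝 (q'.sum y)) := by
          have h3 := hconty.tendsto.comp hpath
          have h4 : Tendsto (fun t : ℝ => q'.sum (y + t • v)) (𝓝 (0 : ℝ))
              (𝓝 (q'.sum y)) := by
            simpa [Function.comp_def] using h3
          exact h4.mono_left nhdsWithin_le_nhds
        have hsmall : ∀ᶠ t in 𝓝 (0 : ℝ), ‖y + t • v‖ < (ρ : ℝ) := by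
          have h4 : Tendsto (fun t : ℝ => ‖y + t • v‖) (𝓝 0) (𝓝 ‖y‖) := by
            have hcn : Continuous (fun t : ℝ => ‖y + t • v‖) := by fun_prop
            simpa using hcn.tendsto 0
          exact h4.eventually_lt_const hy
        have hev : ∀ᶠ t in 𝓝[≠] (0 : ℝ), q'.sum (y + t • v)
            = slope (fun t : ℝ => q (x₀ + y + t • v)) 0 t := by
          filter_upwards [hsmall.filter_mono nhdsWithin_le_nhds,
            self_mem_nhdsWithin] with t ht hne
          have hℓt : ℓ (y + t • v) = t := by
            rw [map_add, hℓy, map_smul, hv, smul_eq_mul, mul_one, zero_add]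
          have hassoc : x₀ + (y + t • v) = x₀ + y + t • v := by rw [add_assoc]
          rw [key2 _ ht (by rw [hℓt]; exact hne), hℓt, hassoc, slope_def_field]
          simp [hqy0]
        have hdiff : DifferentiableAt ℝ q (x₀ + y) := (hq _ hymem).differentiableAt
        have hpathd : HasDerivAt (fun t : ℝ => x₀ + y + t • v) v 0 := by
          simpa using ((hasDerivAt_id (0 : ℝ)).smul_const v).const_add (x₀ + y)
        have h00 : x₀ + y + (0 : ℝ) • v = x₀ + y := by simp
        have hf' : HasFDerivAt q (fderiv ℝ q (x₀ + y)) (x₀ + y + (0 : ℝ) • v) := by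
          rw [h00]; exact hdiff.hasFDerivAt
        have hcomp : HasDerivAt (fun t : ℝ => q (x₀ + y + t • v))
            (fderiv ℝ q (x₀ + y) v) 0 := hf'.comp_hasDerivAt 0 hpathd
        have T2 := hasDerivAt_iff_tendsto_slope.1 hcomp
        exact tendsto_nhds_unique (T1.congr' hev) T2
      have hrball : HasFPowerSeriesOnBall r q' x₀ (ρ : ℝ≥0∞) := by
        refine ⟨hradius, by exact_mod_cast hρpos', fun {y} hy => ?_⟩
        have hy' : ‖y‖ < (ρ : ℝ) := by
          have := mem_emetric_ball_zero_iff.1 hy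
          exact_mod_cast this
        have hs6 : HasSum (fun n => q' n (fun _ => y)) (q'.sum y) :=
          q'.hasSum (mem_emetric_ball_zero_iff.2 (lt_of_lt_of_le
            (by exact_mod_cast hy' : (‖y‖₊ : ℝ≥0∞) < ρ) hradius))
        have hℓxy : ℓ (x₀ + y) = ℓ y := by rw [map_add, h0, zero_add]
        have hrv : r (x₀ + y) = q'.sum y := by
          simp only [hrdef]
          by_cases hc : ℓ y = 0
          · rw [if_pos (by rw [hℓxy]; exact hc)]
            exact (key3 y hy' hc).symm
          · rw [if_neg (by rw [hℓxy]; exact hc), hℓxy]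
            exact (key2 y hy' hc).symm
        rwa [hrv]
      exact hrball.analyticAt
    · have hev : ∀ᶠ x in 𝓝 x₀, q x / ℓ x = r x := by
        have hne : ∀ᶠ x in 𝓝 x₀, ℓ x ≠ 0 :=
          (ℓ.continuous.continuousAt).eventually_ne h0
        filter_upwards [hne] with x hx
        rw [hrdef]; simp [hx]
      exact (((hq x₀ hx₀).div (ℓ.analyticAt x₀) h0)).congr hev
  · intro x hx
    by_cases hℓx : ℓ x = 0
    · rw [hzero x hx hℓx, hℓx, zero_mul]
    · rw [hrdef]; simp only [hℓx, if_false]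
      field_simp
end Aux

/-- If `a ∈ ℝ^d` is nonzero, `U ⊆ ℝ^d` is open and `q` is real-analytic on `U`
and vanishes on `U ∩ {x : ∑ k, a k * x k = 0}`, then `q x = (∑ k, a k * x k) * r x` on `U` for
some function `r` real-analytic on `U`. -/
theorem stmt_1 (d : ℕ) (hd : 1 ≤ d)
    (a : EuclideanSpace ℝ (Fin d)) (ha : a ≠ 0)
    (U : Set (EuclideanSpace ℝ (Fin d))) (hU : IsOpen U)
    (q : EuclideanSpace ℝ (Fin d) → ℝ)
    (hq : ∀ x ∈ U, AnalyticAt ℝ q x)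
    (hzero : ∀ x ∈ U, (∑ k : Fin d, a k * x k) = 0 → q x = 0) :
    ∃ r : EuclideanSpace ℝ (Fin d) → ℝ,
      (∀ x ∈ U, AnalyticAt ℝ r x) ∧
      ∀ x ∈ U, q x = (∑ k : Fin d, a k * x k) * r x := by
  set ℓ : EuclideanSpace ℝ (Fin d) →L[ℝ] ℝ := innerSL ℝ a with hℓdef
  have hℓeq : ∀ x : EuclideanSpace ℝ (Fin d), ℓ x = ∑ k : Fin d, a k * x k := by
    intro x
    simp [hℓdef, PiLp.inner_apply, RCLike.inner_apply, conj_trivial]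
    exact Finset.sum_congr rfl fun i _ => mul_comm _ _
  have hna : ‖a‖ ^ 2 ≠ 0 := pow_ne_zero 2 (norm_ne_zero_iff.2 ha)
  have hv : ℓ ((‖a‖ ^ 2)⁻¹ • a) = 1 := by
    simp only [hℓdef, innerSL_apply_apply, real_inner_smul_right, real_inner_self_eq_norm_sq]
    field_simp
  obtain ⟨r, hr1, hr2⟩ := key_lemma ℓ _ hv U hU q hq (fun x hx h => hzero x hx (by rwa [hℓeq] at h))
  exact ⟨r, hr1, fun x hx => by rw [← hℓeq]; exact hr2 x hx⟩
end

section
/- Let d ≥ 1 and let α₁, …, αₙ ∈ ℝ^d be nonzero vectors, no one of which is a real scalar multiple of another. Set p(X) = ∏_{i=1}^n ⟨α_i, X⟩. Let U ⊆ ℝ^d be open and let q be a real-analytic function on U such that q(X) = 0 for every X ∈ U with ⟨α_i, X⟩ = 0 for some i. Then there exists a real-analytic function r on U such that q(X) = p(X)·r(X) for all X ∈ U. -/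
open Filter Topology
open scoped BigOperators RealInnerProductSpace


open Filter Topology

noncomputable section

variable {E : Type*} [NormedAddCommGroup E] [NormedSpace ℝ E]

/-- The `j`-th piece of the divided series. -/
def divTerm (p : FormalMultilinearSeries ℝ E ℝ) (π : E →L[ℝ] E) (v : E) (m : ℕ)
    (j : Fin (m + 1)) : ContinuousMultilinearMap ℝ (fun _ : Fin m => E) ℝ :=
  ((((p (m + 1)).compContinuousLinearMap
      (fun i => if (i : ℕ) < (j : ℕ) then π else ContinuousLinearMap.id ℝ E)).domDomCongr
        (Equiv.swap 0 j)).curryLeft v)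

def divSeries (p : FormalMultilinearSeries ℝ E ℝ) (π : E →L[ℝ] E) (v : E) :
    FormalMultilinearSeries ℝ E ℝ :=
  fun m => ∑ j : Fin (m + 1), divTerm p π v m j

lemma divTerm_apply_diag (p : FormalMultilinearSeries ℝ E ℝ) (π : E →L[ℝ] E) (v : E) (m : ℕ)
    (j : Fin (m + 1)) (x : E) :
    divTerm p π v m j (fun _ => x)
      = p (m + 1) (fun i => if (i : ℕ) < (j : ℕ) then π x else if i = j then v else x) := by
  have hcons : ∀ k : Fin (m + 1), (Fin.cons v (fun _ : Fin m => x) : ∀ _ : Fin (m+1), E) k = if k = 0 then v else x := by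
    intro k
    refine Fin.cases ?_ (fun i => ?_) k
    · simp
    · simp [Fin.succ_ne_zero]
  rw [divTerm, ContinuousMultilinearMap.curryLeft_apply,
    ContinuousMultilinearMap.domDomCongr_apply,
    ContinuousMultilinearMap.compContinuousLinearMap_apply]
  congr 1
  funext i
  rw [hcons]
  have hswap : ((Equiv.swap 0 j) i = 0) ↔ (i = j) := by
    rw [Equiv.apply_eq_iff_eq_symm_apply]; simp
  by_cases hij : i = j
  · have : ¬ ((i : ℕ) < (j : ℕ)) := by simp [hij]
    simp [hij, this, hswap]
  · have : ¬ ((Equiv.swap 0 j) i = 0) := by simp [hswap, hij]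
    by_cases hlt : (i : ℕ) < (j : ℕ) <;> simp [hlt, this, hij]

lemma divTerm_norm_le (p : FormalMultilinearSeries ℝ E ℝ) (π : E →L[ℝ] E) (v : E) (m : ℕ)
    (j : Fin (m + 1)) :
    ‖divTerm p π v m j‖ ≤ ‖p (m + 1)‖ * (max 1 ‖π‖) ^ (m + 1) * ‖v‖ := by
  set g := fun i : Fin (m + 1) => if (i : ℕ) < (j : ℕ) then π else ContinuousLinearMap.id ℝ E
    with hg
  set A := (p (m + 1)).compContinuousLinearMap g with hA
  set B := A.domDomCongr (Equiv.swap 0 j) with hB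
  have step1 : ‖divTerm p π v m j‖ ≤ ‖B‖ * ‖v‖ := by
    calc ‖divTerm p π v m j‖ = ‖B.curryLeft v‖ := rfl
      _ ≤ ‖B.curryLeft‖ * ‖v‖ := B.curryLeft.le_opNorm v
      _ = ‖B‖ * ‖v‖ := by rw [ContinuousMultilinearMap.curryLeft_norm]
  have hBA : ‖B‖ = ‖A‖ := ContinuousMultilinearMap.norm_domDomCongr ℝ E ℝ (Equiv.swap 0 j) A
  have hAle : ‖A‖ ≤ ‖p (m + 1)‖ * (max 1 ‖π‖) ^ (m + 1) := by
    refine le_trans ((p (m + 1)).norm_compContinuousLinearMap_le g) ?_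
    have : ∏ i : Fin (m + 1), ‖g i‖ ≤ (max 1 ‖π‖) ^ (m + 1) := by
      calc ∏ i : Fin (m + 1), ‖g i‖ ≤ ∏ _i : Fin (m + 1), max 1 ‖π‖ := by
            refine Finset.prod_le_prod (fun i _ => norm_nonneg _) (fun i _ => ?_)
            by_cases h : (i : ℕ) < (j : ℕ)
            · simp only [hg, h, if_true]; exact le_max_right _ _
            · simp only [hg, h, if_false]
              exact le_trans (ContinuousLinearMap.norm_id_le) (le_max_left _ _)
        _ = (max 1 ‖π‖) ^ (m + 1) := by rw [Finset.prod_const]; simp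
    exact mul_le_mul_of_nonneg_left this (norm_nonneg _)
  refine le_trans step1 ?_
  rw [hBA]
  exact mul_le_mul_of_nonneg_right hAle (norm_nonneg _)

end

noncomputable section

variable {E : Type*} [NormedAddCommGroup E] [NormedSpace ℝ E]

lemma divSeries_radius_pos (p : FormalMultilinearSeries ℝ E ℝ) (π : E →L[ℝ] E) (v : E)
    (hp : 0 < p.radius) : 0 < (divSeries p π v).radius := by
  obtain ⟨r0, hr0pos, hr0lt⟩ := ENNReal.lt_iff_exists_nnreal_btwn.1 hp
  obtain ⟨C, hCpos, hbound⟩ := p.norm_mul_pow_le_of_lt_radius hr0lt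
  have hr0R : (0 : ℝ) < (r0 : ℝ) := by exact_mod_cast hr0pos
  set C1 : ℝ := max 1 ‖π‖ with hC1
  have hC1pos : (0 : ℝ) < C1 := lt_of_lt_of_le one_pos (le_max_left _ _)
  set tR : ℝ := (r0 : ℝ) / (2 * C1) with htR
  have htRpos : 0 < tR := by positivity
  have aux : ∀ m : ℕ, ‖p (m + 1)‖ * (r0 : ℝ) ^ m ≤ C / (r0 : ℝ) := by
    intro m
    have h1 := hbound (m + 1)
    rw [pow_succ] at h1
    rw [le_div_iff₀ hr0R, mul_assoc]
    exact h1
  have hsum_le : ∀ m : ℕ, ‖divSeries p π v m‖ ≤ (m + 1 : ℝ) * (‖p (m + 1)‖ * C1 ^ (m + 1) * ‖v‖) := by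
    intro m
    calc ‖divSeries p π v m‖ ≤ ∑ j : Fin (m + 1), ‖divTerm p π v m j‖ := norm_sum_le _ _
      _ ≤ ∑ _j : Fin (m + 1), ‖p (m + 1)‖ * C1 ^ (m + 1) * ‖v‖ :=
          Finset.sum_le_sum (fun j _ => divTerm_norm_le p π v m j)
      _ = (m + 1 : ℝ) * (‖p (m + 1)‖ * C1 ^ (m + 1) * ‖v‖) := by
          rw [Finset.sum_const]; simp [mul_comm]
  have hbig : ∀ m : ℕ, ‖divSeries p π v m‖ * tR ^ m ≤ 2 * ‖v‖ * C1 * (C / (r0 : ℝ)) := by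
    intro m
    have h2pow : ((m : ℝ) + 1) ≤ 2 * 2 ^ m := by
      have := Nat.lt_two_pow_self (n := m + 1)
      have h' : (m + 1 : ℝ) < 2 ^ (m + 1) := by exact_mod_cast this
      rw [pow_succ] at h'
      push_cast at h' ⊢
      nlinarith
    have step1 : ‖divSeries p π v m‖ * tR ^ m
        ≤ ((m + 1 : ℝ) * (‖p (m + 1)‖ * C1 ^ (m + 1) * ‖v‖)) * tR ^ m :=
      mul_le_mul_of_nonneg_right (hsum_le m) (pow_nonneg htRpos.le m)
    have step2 : ((m + 1 : ℝ) * (‖p (m + 1)‖ * C1 ^ (m + 1) * ‖v‖)) * tR ^ m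
        ≤ ((2 * 2 ^ m) * (‖p (m + 1)‖ * C1 ^ (m + 1) * ‖v‖)) * tR ^ m := by
      have hnn : (0:ℝ) ≤ (‖p (m + 1)‖ * C1 ^ (m + 1) * ‖v‖) * tR ^ m := by positivity
      nlinarith [h2pow, hnn]
    have step3 : ((2 * 2 ^ m) * (‖p (m + 1)‖ * C1 ^ (m + 1) * ‖v‖)) * tR ^ m
        = 2 * ‖v‖ * C1 * (‖p (m + 1)‖ * (r0 : ℝ) ^ m) := by
      rw [htR, div_pow, mul_pow]
      have h2m : (2:ℝ) ^ m ≠ 0 := by positivity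
      have hC1m : C1 ^ m ≠ 0 := by positivity
      field_simp
      ring
    have step4 : 2 * ‖v‖ * C1 * (‖p (m + 1)‖ * (r0 : ℝ) ^ m)
        ≤ 2 * ‖v‖ * C1 * (C / (r0 : ℝ)) := by
      have : (0:ℝ) ≤ 2 * ‖v‖ * C1 := by positivity
      exact mul_le_mul_of_nonneg_left (aux m) this
    linarith
  have hle := (divSeries p π v).le_radius_of_bound (2 * ‖v‖ * C1 * (C / (r0 : ℝ)))
    (r := tR.toNNReal) (fun m => by
      rw [Real.coe_toNNReal _ htRpos.le]; exact hbig m)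
  refine lt_of_lt_of_le ?_ hle
  exact_mod_cast Real.toNNReal_pos.2 htRpos

end


noncomputable section
variable {E : Type*} [NormedAddCommGroup E] [NormedSpace ℝ E]

lemma divTerm_diag_telescope (p : FormalMultilinearSeries ℝ E ℝ) (π : E →L[ℝ] E)
    (L : E →L[ℝ] ℝ) (v : E) (hπ : ∀ y, π y = y - L y • v) (m : ℕ) (x : E) (j : Fin (m + 1)) :
    L x * p (m + 1) (fun i : Fin (m + 1) => if (i : ℕ) < (j : ℕ) then π x else if i = j then v else x)
      = p (m + 1) (fun i : Fin (m + 1) => if (i : ℕ) < (j : ℕ) then π x else x)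
        - p (m + 1) (fun i : Fin (m + 1) => if (i : ℕ) < (j : ℕ) + 1 then π x else x) := by
  classical
  set base : Fin (m + 1) → E := fun i : Fin (m + 1) => if (i : ℕ) < (j : ℕ) then π x else x with hbase
  have hG : (fun i : Fin (m + 1) => if (i : ℕ) < (j : ℕ) then π x else if i = j then v else x)
      = Function.update base j v := by
    funext i
    rw [Function.update_apply]
    by_cases hij : i = j
    · have : ¬ ((i : ℕ) < (j : ℕ)) := by simp [hij]
      simp [hij, this]
    · simp [hij, hbase]
  have hF1 : base = Function.update base j x := by
    rw [show x = base j by simp [hbase], Function.update_eq_self]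
  have hF2 : (fun i : Fin (m + 1) => if (i : ℕ) < (j : ℕ) + 1 then π x else x)
      = Function.update base j (π x) := by
    funext i
    rw [Function.update_apply]
    by_cases hij : i = j
    · simp [hij, Nat.lt_succ_self]
    · have hne : (i : ℕ) ≠ (j : ℕ) := fun h => hij (Fin.ext h)
      have : (i : ℕ) < (j : ℕ) + 1 ↔ (i : ℕ) < (j : ℕ) := by omega
      simp [hij, this, hbase]
  rw [hG, hF2]
  conv_rhs => rw [hF1]
  rw [Function.update_idem, ← ContinuousMultilinearMap.map_update_sub]
  have hsub : x - π x = L x • v := by rw [hπ x]; abel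
  rw [hsub, ContinuousMultilinearMap.map_update_smul, smul_eq_mul]

lemma divSeries_key (p : FormalMultilinearSeries ℝ E ℝ) (π : E →L[ℝ] E)
    (L : E →L[ℝ] ℝ) (v : E) (hπ : ∀ y, π y = y - L y • v) (m : ℕ) (x : E) :
    L x * (divSeries p π v m (fun _ => x))
      = p (m + 1) (fun _ => x) - p (m + 1) (fun _ => π x) := by
  rw [divSeries, ContinuousMultilinearMap.sum_apply, Finset.mul_sum]
  set F : ℕ → ℝ := fun k => p (m + 1) (fun i : Fin (m + 1) => if (i : ℕ) < k then π x else x)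
    with hF
  have hterm : ∀ j : Fin (m + 1),
      L x * divTerm p π v m j (fun _ => x) = F (j : ℕ) - F ((j : ℕ) + 1) := by
    intro j
    rw [divTerm_apply_diag]
    exact divTerm_diag_telescope p π L v hπ m x j
  rw [Finset.sum_congr rfl (fun j _ => hterm j)]
  rw [Fin.sum_univ_eq_sum_range (fun k => F k - F (k + 1)) (m + 1), Finset.sum_range_sub' F]
  have h1 : F 0 = p (m + 1) (fun _ => x) := by simp [hF]
  have h2 : F (m + 1) = p (m + 1) (fun _ => π x) := by
    rw [hF]
    simp only []
    congr 1
    funext i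
    simp [i.isLt]
  rw [h1, h2]

end


noncomputable section
variable {E : Type*} [NormedAddCommGroup E] [NormedSpace ℝ E]

lemma div_linear_zero (L : E →L[ℝ] ℝ) (v : E) (hv : L v = 1)
    {q : E → ℝ} (hq : AnalyticAt ℝ q 0)
    (h0 : ∀ᶠ x in 𝓝 (0 : E), L x = 0 → q x = 0) :
    ∃ r : E → ℝ, AnalyticAt ℝ r 0 ∧ ∀ᶠ x in 𝓝 (0 : E), q x = L x * r x := by
  obtain ⟨p, hpa⟩ := hq
  obtain ⟨ρ, hp⟩ := hpa
  set π : E →L[ℝ] E := ContinuousLinearMap.id ℝ E - L.smulRight v with hπdef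
  have hπ : ∀ y, π y = y - L y • v := fun y => rfl
  have hLπ : ∀ y, L (π y) = 0 := by
    intro y
    rw [hπ y]
    simp [hv]
  set s := divSeries p π v with hs
  have hrad : 0 < s.radius := divSeries_radius_pos p π v hp.radius_pos
  have hsum := s.hasFPowerSeriesOnBall hrad
  refine ⟨s.sum, hsum.analyticAt, ?_⟩
  have hπt : Tendsto (fun x : E => π x) (𝓝 0) (𝓝 0) := by
    have := π.continuous.tendsto 0
    simpa using this
  have e1 : ∀ᶠ x : E in 𝓝 0, x ∈ EMetric.ball (0 : E) ρ :=
    eventually_of_mem (EMetric.ball_mem_nhds (0 : E) hp.r_pos) (fun x hx => hx)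
  have e2 : ∀ᶠ x : E in 𝓝 0, x ∈ EMetric.ball (0 : E) s.radius :=
    eventually_of_mem (EMetric.ball_mem_nhds (0 : E) hrad) (fun x hx => hx)
  have e3 : ∀ᶠ x : E in 𝓝 0, π x ∈ EMetric.ball (0 : E) ρ := hπt.eventually e1
  have e4 : ∀ᶠ x : E in 𝓝 0, (L (π x) = 0 → q (π x) = 0) := hπt.eventually h0
  filter_upwards [e1, e2, e3, e4] with x hx1 hx2 hx3 hx4
  have hqπ : q (π x) = 0 := hx4 (hLπ x)
  have A : HasSum (fun n => p n fun _ => x) (q x) := by simpa using hp.hasSum hx1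
  have B : HasSum (fun n => p n fun _ => π x) 0 := by
    have := hp.hasSum hx3
    rw [zero_add, hqπ] at this
    exact this
  have S : HasSum (fun m => s m fun _ => x) (s.sum x) := s.hasSum hx2
  have S' : HasSum (fun m => L x * (s m fun _ => x)) (L x * s.sum x) := S.mul_left _
  have hk : (fun m => L x * (s m fun _ => x))
      = fun m => (p (m + 1) fun _ => x) - (p (m + 1) fun _ => π x) :=
    funext (fun m => divSeries_key p π L v hπ m x)
  rw [hk] at S'
  have D : HasSum (fun n => (p n fun _ => x) - (p n fun _ => π x)) (q x - 0) := A.sub B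
  have h00 : (p 0 fun _ => x) - (p 0 fun _ => π x) = 0 := by
    have h : (fun _ : Fin 0 => x) = (fun _ : Fin 0 => π x) := funext (fun i => i.elim0)
    rw [h, sub_self]
  have D' : HasSum (fun m => (p (m + 1) fun _ => x) - (p (m + 1) fun _ => π x)) (q x - 0) := by
    refine (hasSum_nat_add_iff (f := fun n => (p n fun _ => x) - (p n fun _ => π x)) 1).2 ?_
    simpa [h00] using D
  have := D'.unique S'
  rw [sub_zero] at this
  exact this

lemma div_linear (L : E →L[ℝ] ℝ) (v : E) (hv : L v = 1) {q : E → ℝ} {x₀ : E}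
    (hq : AnalyticAt ℝ q x₀) (h0 : ∀ᶠ x in 𝓝 x₀, L x = 0 → q x = 0) :
    ∃ r : E → ℝ, AnalyticAt ℝ r x₀ ∧ ∀ᶠ x in 𝓝 x₀, q x = L x * r x := by
  by_cases hx₀ : L x₀ = 0
  · have h1 : AnalyticAt ℝ (fun y : E => x₀ + y) 0 := analyticAt_const.add analyticAt_id
    have hq' : AnalyticAt ℝ (fun y => q (x₀ + y)) 0 := by
      have := AnalyticAt.comp (g := q) (f := fun y : E => x₀ + y) (by simpa using hq) h1
      exact this
    have htr : Tendsto (fun y : E => x₀ + y) (𝓝 0) (𝓝 x₀) := by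
      have := Continuous.tendsto (f := fun y : E => x₀ + y) (continuous_const.add continuous_id) 0
      simpa only [add_zero] using this
    have h0' : ∀ᶠ y in 𝓝 (0 : E), L y = 0 → q (x₀ + y) = 0 := by
      filter_upwards [htr.eventually h0] with y hy hLy
      exact hy (by rw [map_add, hx₀, zero_add, hLy])
    obtain ⟨r', hr', heq⟩ := div_linear_zero L v hv hq' h0'
    have h2 : AnalyticAt ℝ (fun x : E => x - x₀) x₀ := analyticAt_id.sub analyticAt_const
    refine ⟨fun x => r' (x - x₀), ?_, ?_⟩
    · have := AnalyticAt.comp (g := r') (f := fun x : E => x - x₀) (by simpa using hr') h2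
      exact this
    · have htr2 : Tendsto (fun x : E => x - x₀) (𝓝 x₀) (𝓝 0) := by
        have := Continuous.tendsto (f := fun x : E => x - x₀) (continuous_id.sub continuous_const) x₀
        simpa only [sub_self] using this
      filter_upwards [htr2.eventually heq] with x hx
      rw [show x₀ + (x - x₀) = x by abel] at hx
      rw [hx, map_sub, hx₀, sub_zero]
  · refine ⟨fun x => q x / L x, ?_, ?_⟩
    · exact hq.div (L.analyticAt x₀) hx₀
    · have hne : ∀ᶠ x in 𝓝 x₀, L x ≠ 0 := (L.continuous.continuousAt).eventually_ne hx₀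
      filter_upwards [hne] with x hx
      field_simp

end

noncomputable section
variable {E : Type*} [NormedAddCommGroup E] [NormedSpace ℝ E]

/-- A vector in `W` avoiding finitely many functionals that don't vanish identically on `W`. -/
lemma avoid {ι : Type*} (s : Finset ι) (f : ι → E →L[ℝ] ℝ) (W : Submodule ℝ E)
    (hf : ∀ i ∈ s, ∃ w ∈ W, f i w ≠ 0) :
    ∃ w ∈ W, ∀ i ∈ s, f i w ≠ 0 := by
  classical
  induction s using Finset.induction_on with
  | empty => exact ⟨0, W.zero_mem, by simp⟩
  | @insert a s ha ih =>
    obtain ⟨w, hwW, hw⟩ := ih (fun i hi => hf i (Finset.mem_insert_of_mem hi))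
    obtain ⟨u, huW, hu⟩ := hf a (Finset.mem_insert_self a s)
    set bad : Finset ℝ :=
      ((insert a s).filter (fun i => f i u ≠ 0)).image (fun i => -(f i w / f i u)) with hbad
    obtain ⟨t, ht⟩ := Infinite.exists_notMem_finset bad
    refine ⟨w + t • u, W.add_mem hwW (W.smul_mem t huW), ?_⟩
    intro i hi
    have happ : f i (w + t • u) = f i w + t * f i u := by
      rw [map_add, map_smul, smul_eq_mul]
    by_cases hfiu : f i u = 0
    · have hia : i ≠ a := fun h => hu (h ▸ hfiu)
      have his : i ∈ s := (Finset.mem_insert.1 hi).resolve_left hia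
      rw [happ, hfiu, mul_zero, add_zero]
      exact hw i his
    · rw [happ]
      intro hcon
      apply ht
      rw [hbad]
      refine Finset.mem_image.2 ⟨i, Finset.mem_filter.2 ⟨hi, hfiu⟩, ?_⟩
      field_simp
      linarith [hcon]

lemma eventually_line_nonzero {ι : Type*} (x w : E) (s : Finset ι) (f : ι → E →L[ℝ] ℝ)
    (hw : ∀ i ∈ s, f i w ≠ 0) :
    ∀ᶠ t in 𝓝[≠] (0 : ℝ), ∀ i ∈ s, f i (x + t • w) ≠ 0 := by
  rw [eventually_all_finset]
  intro i hi
  set t₀ : ℝ := -(f i x / f i w) with ht₀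
  have hne : ∀ᶠ t in 𝓝[≠] (0 : ℝ), t ≠ t₀ := by
    by_cases h0 : t₀ = 0
    · rw [h0]
      exact eventually_mem_nhdsWithin
    · have : ∀ᶠ t in 𝓝 (0 : ℝ), t ≠ t₀ := eventually_ne_nhds (fun h => h0 h.symm)
      exact this.filter_mono nhdsWithin_le_nhds
  filter_upwards [hne] with t ht
  have happ : f i (x + t • w) = f i x + t * f i w := by rw [map_add, map_smul, smul_eq_mul]
  rw [happ]
  intro hcon
  apply ht
  rw [ht₀]
  have := hw i hi
  field_simp
  linarith [hcon]

lemma vanish_of_dense {ι : Type*} (r : E → ℝ) (x w : E) (hr : ContinuousAt r x)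
    (s : Finset ι) (f : ι → E →L[ℝ] ℝ) (hw : ∀ i ∈ s, f i w ≠ 0)
    (P : E → Prop) (hP : ∀ t : ℝ, P (x + t • w))
    (h : ∀ᶠ y in 𝓝 x, (P y ∧ ∀ i ∈ s, f i y ≠ 0) → r y = 0) : r x = 0 := by
  have hten : Tendsto (fun t : ℝ => x + t • w) (𝓝[≠] 0) (𝓝 x) := by
    have hc : Continuous (fun t : ℝ => x + t • w) := by continuity
    have := (hc.tendsto 0).mono_left (nhdsWithin_le_nhds (s := {(0:ℝ)}ᶜ))
    simpa using this
  have hzero : ∀ᶠ t in 𝓝[≠] (0 : ℝ), r (x + t • w) = 0 := by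
    filter_upwards [hten.eventually h, eventually_line_nonzero x w s f hw] with t h1 h2
    exact h1 ⟨hP t, h2⟩
  have h1 : Tendsto (fun t : ℝ => r (x + t • w)) (𝓝[≠] 0) (𝓝 (r x)) := hr.tendsto.comp hten
  have h2 : Tendsto (fun t : ℝ => r (x + t • w)) (𝓝[≠] 0) (𝓝 0) := by
    rw [tendsto_congr' hzero]
    exact tendsto_const_nhds
  exact tendsto_nhds_unique h1 h2

end

noncomputable section
variable {F : Type*} [NormedAddCommGroup F] [InnerProductSpace ℝ F]

lemma inner_witness (a b : F) (hb : b ≠ 0) (hnp : ∀ t : ℝ, a ≠ t • b) :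
    ∃ w : F, ⟪b, w⟫ = 0 ∧ ⟪a, w⟫ ≠ 0 := by
  set c : ℝ := ⟪b, a⟫ / (‖b‖ ^ 2) with hc
  refine ⟨a - c • b, ?_, ?_⟩
  · rw [inner_sub_right, real_inner_smul_right, real_inner_self_eq_norm_sq]
    have hbn : ‖b‖ ≠ 0 := norm_ne_zero_iff.2 hb
    rw [hc]
    field_simp
    ring
  · intro hcon
    have hw0 : ⟪b, a - c • b⟫ = 0 := by
      rw [inner_sub_right, real_inner_smul_right, real_inner_self_eq_norm_sq]
      have hbn : ‖b‖ ≠ 0 := norm_ne_zero_iff.2 hb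
      rw [hc]
      field_simp
      ring
    have hself : ⟪a - c • b, a - c • b⟫ = 0 := by
      rw [inner_sub_left, real_inner_smul_left, hcon, hw0]
      ring
    have : a - c • b = 0 := by
      rwa [inner_self_eq_zero] at hself
    exact hnp c (by rw [← sub_eq_zero]; exact this)

end

noncomputable section
variable {F : Type*} [NormedAddCommGroup F] [InnerProductSpace ℝ F]

lemma local_factor {n : ℕ} (α : Fin n → F) (hα : ∀ i, α i ≠ 0)
    (hprop : ∀ i j : Fin n, i ≠ j → ∀ t : ℝ, α i ≠ t • α j)
    (s : Finset (Fin n)) (x₀ : F) :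
    ∀ q : F → ℝ, AnalyticAt ℝ q x₀ →
      (∀ᶠ x in 𝓝 x₀, (∃ i ∈ s, ⟪α i, x⟫ = 0) → q x = 0) →
      ∃ r : F → ℝ, AnalyticAt ℝ r x₀ ∧
        ∀ᶠ x in 𝓝 x₀, q x = (∏ i ∈ s, ⟪α i, x⟫) * r x := by
  classical
  induction s using Finset.induction_on with
  | empty =>
    intro q hq _
    exact ⟨q, hq, Eventually.of_forall (fun x => by simp)⟩
  | @insert a s ha ih =>
    intro q hq hvan
    set L : F →L[ℝ] ℝ := innerSL ℝ (α a) with hL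
    have hna : ‖α a‖ ≠ 0 := norm_ne_zero_iff.2 (hα a)
    set v : F := (‖α a‖ ^ 2)⁻¹ • α a with hv'
    have hv : L v = 1 := by
      rw [hL, hv']
      simp only [innerSL_apply_apply, real_inner_smul_right, real_inner_self_eq_norm_sq]
      field_simp
    have h0 : ∀ᶠ x in 𝓝 x₀, L x = 0 → q x = 0 :=
      hvan.mono (fun x h hLx => h ⟨a, Finset.mem_insert_self a s, by
        simpa [hL] using hLx⟩)
    obtain ⟨r₁, hr₁, heq₁⟩ := div_linear L v hv hq h0
    have hvan₁ : ∀ᶠ x in 𝓝 x₀, (∃ i ∈ s, ⟪α i, x⟫ = 0) → r₁ x = 0 := by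
      have H1 := (heq₁.and hvan).eventually_nhds
      filter_upwards [H1, hr₁.eventually_analyticAt] with x hx hax
      rintro ⟨j, hjs, hjx⟩
      have hja : j ≠ a := fun h => ha (h ▸ hjs)
      obtain ⟨w, hw0, hwa⟩ := inner_witness (α a) (α j) (hα j)
        (hprop a j (fun h => hja h.symm))
      refine vanish_of_dense r₁ x w hax.continuousAt {a} (fun i => innerSL ℝ (α i))
        ?_ (fun y => ⟪α j, y⟫ = 0) ?_ ?_
      · intro i hi
        rw [Finset.mem_singleton] at hi
        subst hi
        simpa using hwa
      · intro t
        rw [inner_add_right, real_inner_smul_right, hjx, hw0]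
        ring
      · filter_upwards [hx] with y hy
        rintro ⟨hPy, hay⟩
        have hq0 : q y = 0 := hy.2 ⟨j, Finset.mem_insert_of_mem hjs, hPy⟩
        have h1 := hy.1
        rw [hq0] at h1
        have hLy : L y ≠ 0 := by
          have := hay a (Finset.mem_singleton_self a)
          simpa [hL] using this
        rcases mul_eq_zero.1 h1.symm with h | h
        · exact absurd h hLy
        · exact h
    obtain ⟨r₂, hr₂, heq₂⟩ := ih r₁ hr₁ hvan₁
    refine ⟨r₂, hr₂, ?_⟩
    filter_upwards [heq₁, heq₂] with x h1 h2
    rw [Finset.prod_insert ha, h1, h2]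
    have : L x = ⟪α a, x⟫ := by simp [hL]
    rw [this]
    ring

end

/-- Let `α 1, …, α n` be nonzero vectors in `ℝ^d`, no one of which is a real
scalar multiple of another, and `p X = ∏ i, ⟪α i, X⟫`. If `q` is real-analytic on an open set
`U` and vanishes at every `X ∈ U` with `⟪α i, X⟫ = 0` for some `i`, then `q = p * r` on `U`
for some `r` real-analytic on `U`. -/
theorem stmt_2 (d : ℕ) (hd : 1 ≤ d) (n : ℕ)
    (α : Fin n → EuclideanSpace ℝ (Fin d))
    (hα : ∀ i, α i ≠ 0)
    (hprop : ∀ i j : Fin n, i ≠ j → ∀ t : ℝ, α i ≠ t • α j)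
    (U : Set (EuclideanSpace ℝ (Fin d))) (hU : IsOpen U)
    (q : EuclideanSpace ℝ (Fin d) → ℝ)
    (hq : ∀ x ∈ U, AnalyticAt ℝ q x)
    (hzero : ∀ x ∈ U, (∃ i : Fin n, ⟪α i, x⟫ = 0) → q x = 0) :
    ∃ r : EuclideanSpace ℝ (Fin d) → ℝ,
      (∀ x ∈ U, AnalyticAt ℝ r x) ∧
      ∀ x ∈ U, q x = (∏ i : Fin n, ⟪α i, x⟫) * r x := by
  classical
  set P : EuclideanSpace ℝ (Fin d) → ℝ := fun x => ∏ i : Fin n, ⟪α i, x⟫ with hPdef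
  -- a direction avoiding all hyperplanes
  obtain ⟨w, -, hw⟩ := avoid (Finset.univ : Finset (Fin n)) (fun i => innerSL ℝ (α i)) ⊤
    (fun i _ => ⟨α i, Submodule.mem_top, by
      rw [show ((innerSL ℝ (α i)) (α i) : ℝ) = ⟪α i, α i⟫ from rfl,
        real_inner_self_eq_norm_sq]
      exact pow_ne_zero 2 (norm_ne_zero_iff.2 (hα i))⟩)
  -- the set {P ≠ 0} clusters at every point
  have hNeBot : ∀ x : EuclideanSpace ℝ (Fin d), (𝓝[{y : EuclideanSpace ℝ (Fin d) | P y ≠ 0}] x).NeBot := by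
    intro x
    rw [← mem_closure_iff_nhdsWithin_neBot]
    rw [mem_closure_iff_frequently]
    have hev := eventually_line_nonzero x w Finset.univ (fun i => innerSL ℝ (α i)) hw
    have hten : Tendsto (fun t : ℝ => x + t • w) (𝓝[≠] 0) (𝓝 x) := by
      have hc : Continuous (fun t : ℝ => x + t • w) := by continuity
      have := (hc.tendsto 0).mono_left (nhdsWithin_le_nhds (s := {(0:ℝ)}ᶜ))
      simpa using this
    apply hten.frequently
    apply hev.frequently.mono
    intro t ht
    simp only [hPdef, Set.mem_setOf_eq]
    rw [Finset.prod_ne_zero_iff]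
    intro i _
    simpa using ht i (Finset.mem_univ i)
  -- global function
  set r : EuclideanSpace ℝ (Fin d) → ℝ := fun x => limUnder (𝓝[{y : EuclideanSpace ℝ (Fin d) | P y ≠ 0}] x) (fun y => q y / P y) with hrdef
  -- local description of r near each point of U
  have key : ∀ x₀ ∈ U, AnalyticAt ℝ r x₀ ∧ q x₀ = P x₀ * r x₀ := by
    intro x₀ hx₀
    have hmem : ∀ᶠ x in 𝓝 x₀, x ∈ U := eventually_of_mem (hU.mem_nhds hx₀) (fun x hx => hx)
    have hvan : ∀ᶠ x in 𝓝 x₀, (∃ i ∈ Finset.univ, ⟪α i, x⟫ = 0) → q x = 0 := by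
      filter_upwards [hmem] with x hxU
      rintro ⟨i, -, hi⟩
      exact hzero x hxU ⟨i, hi⟩
    obtain ⟨r₀, hr₀, heq₀⟩ := local_factor α hα hprop Finset.univ x₀ q (hq x₀ hx₀) hvan
    have hEq : ∀ᶠ x in 𝓝 x₀, r x = r₀ x := by
      filter_upwards [hr₀.eventually_analyticAt, heq₀.eventually_nhds] with x hax hex
      haveI := hNeBot x
      have hc : Tendsto r₀ (𝓝[{y : EuclideanSpace ℝ (Fin d) | P y ≠ 0}] x) (𝓝 (r₀ x)) :=
        (hax.continuousAt.tendsto).mono_left nhdsWithin_le_nhds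
      have hcongr : (fun y => q y / P y) =ᶠ[𝓝[{y : EuclideanSpace ℝ (Fin d) | P y ≠ 0}] x] r₀ := by
        have h1 : ∀ᶠ y in 𝓝[{y : EuclideanSpace ℝ (Fin d) | P y ≠ 0}] x, q y = P y * r₀ y :=
          hex.filter_mono nhdsWithin_le_nhds
        have h2 : ∀ᶠ y in 𝓝[{y : EuclideanSpace ℝ (Fin d) | P y ≠ 0}] x, y ∈ {y : EuclideanSpace ℝ (Fin d) | P y ≠ 0} :=
          eventually_mem_nhdsWithin
        filter_upwards [h1, h2] with y hy hyP
        rw [hy]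
        have : P y ≠ 0 := hyP
        field_simp
      exact (hc.congr' hcongr.symm).limUnder_eq
    constructor
    · exact hr₀.congr (hEq.mono (fun x hx => hx.symm))
    · rw [hEq.self_of_nhds]
      exact heq₀.self_of_nhds
  exact ⟨r, fun x hx => (key x hx).1, fun x hx => (key x hx).2⟩
end

section
/- With ∂(π) denoting the constant-coefficient differential operator obtained by composing the directional-derivative operators along the vectors α ∈ Σ⁺ (any fixed order; there are γ of them), the following identities hold for every X ∈ ℝ^d, X ≠ 0: (a) ∂(π)(|·|^{−d})(X) = 2^γ · (∏_{k=0}^{γ−1}(−d/2 − k)) · π(X) · |X|^{−d−2γ}; and (b) if γ ≥ 1, ∂(π)(log|·|)(X) = (−2)^{γ−1} (γ−1)! · π(X) · |X|^{−2γ}. -/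
open scoped BigOperators RealInnerProductSpace Classical
open Finset

noncomputable section

/-- Euclidean space `ℝ^d`. -/
abbrev E (d : ℕ) := EuclideanSpace ℝ (Fin d)

/-- The reflection `s_α x = x - 2 (⟪α, x⟫/⟪α, α⟫) α` fixing the hyperplane `α^⊥`. -/
def reflVec {d : ℕ} (α x : E d) : E d := x - (2 * ⟪α, x⟫ / ⟪α, α⟫) • α

/-- `Sig` is a reduced root system in `ℝ^d`: a finite set of nonzero vectors spanning `ℝ^d`,
with `Sig ∩ ℝα = {α, -α}` and `s_α (Sig) = Sig` for all `α ∈ Sig`. -/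
def IsRootSystem {d : ℕ} (Sig : Finset (E d)) : Prop :=
  (0 : E d) ∉ Sig ∧
  Submodule.span ℝ (Sig : Set (E d)) = ⊤ ∧
  (∀ α ∈ Sig, ∀ t : ℝ, t • α ∈ Sig → t = 1 ∨ t = -1) ∧
  (∀ α ∈ Sig, ∀ β ∈ Sig, reflVec α β ∈ Sig)

/-- `Sp` is a positive system for `Sig`: `Sp = {α ∈ Sig : ⟪α, v⟫ > 0}` for a vector `v` not
orthogonal to any root. -/
def IsPositiveSystem {d : ℕ} (Sig Sp : Finset (E d)) : Prop :=
  ∃ v : E d, (∀ α ∈ Sig, ⟪α, v⟫ ≠ 0) ∧ ∀ α : E d, α ∈ Sp ↔ α ∈ Sig ∧ 0 < ⟪α, v⟫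

/-- The Weyl group of `Sig`: the subgroup of the orthogonal group of `ℝ^d` generated by the
reflections `s_α`, `α ∈ Sig`. -/
def weylGroup {d : ℕ} (Sig : Finset (E d)) : Subgroup (E d ≃ₗᵢ[ℝ] E d) :=
  Subgroup.closure {w : E d ≃ₗᵢ[ℝ] E d | ∃ α ∈ Sig, ∀ x : E d, w x = reflVec α x}

/-- Determinant of an orthogonal transformation (`±1`). -/
def dsign {d : ℕ} (w : E d ≃ₗᵢ[ℝ] E d) : ℝ := LinearMap.det (w.toLinearEquiv.toLinearMap)

/-- `π(X) = ∏_{α ∈ Sp} ⟪α, X⟫`. -/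
def piP {d : ℕ} (Sp : Finset (E d)) (X : E d) : ℝ := ∏ α ∈ Sp, ⟪α, X⟫

/-- Composition of directional-derivative operators along the vectors of a list. -/
def Dop {d : ℕ} : List (E d) → (E d → ℝ) → E d → ℝ
  | [], f => f
  | v :: L, f => fun x => fderiv ℝ (Dop L f) x v

/-- `QQ j S x` : normalized `j`-fold pair-contracted product of the linear forms `⟪v,·⟫`, `v ∈ S`;
equals `Δ^j (∏_{v∈S} ⟪v,·⟫) / (2^j j!)`. -/
def QQ {d : ℕ} : ℕ → Finset (E d) → E d → ℝ
  | 0, S, x => ∏ v ∈ S, ⟪v, x⟫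
  | j+1, S, x => (2 * ((j:ℝ)+1))⁻¹ *
      ∑ a ∈ S, ∑ b ∈ S.erase a, ⟪a, b⟫ * QQ j ((S.erase a).erase b) x

lemma QQ_zero {d : ℕ} (S : Finset (E d)) (x : E d) : QQ 0 S x = ∏ v ∈ S, ⟪v, x⟫ := rfl

lemma QQ_succ {d : ℕ} (j : ℕ) (S : Finset (E d)) (x : E d) :
    QQ (j+1) S x = (2 * ((j:ℝ)+1))⁻¹ *
      ∑ a ∈ S, ∑ b ∈ S.erase a, ⟪a, b⟫ * QQ j ((S.erase a).erase b) x := rfl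

lemma sum_erase_swap {ι M : Type*} [DecidableEq ι] [AddCommMonoid M] (T : Finset ι)
    (f : ι → ι → M) :
    ∑ a ∈ T, ∑ b ∈ T.erase a, f a b = ∑ b ∈ T, ∑ a ∈ T.erase b, f a b := by
  have key : ∀ (g : ι → ι → M) (a : ι), ∑ b ∈ T.erase a, g a b
      = ∑ b ∈ T, if b = a then 0 else g a b := by
    intro g a
    by_cases haT : a ∈ T
    · rw [← Finset.add_sum_erase T _ haT, if_pos rfl, zero_add]
      exact (Finset.sum_congr rfl (fun b hb => by
        rw [if_neg (Finset.ne_of_mem_erase hb)])).symm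
    · rw [Finset.erase_eq_of_notMem haT]
      exact Finset.sum_congr rfl (fun b hb => by
        rw [if_neg (fun (h : b = a) => haT (h ▸ hb))])
  rw [Finset.sum_congr rfl (fun a _ => key f a), Finset.sum_comm]
  refine Finset.sum_congr rfl fun b _ => ?_
  rw [key (fun b a => f a b) b]
  refine Finset.sum_congr rfl fun a _ => ?_
  by_cases h : b = a
  · rw [if_pos h, if_pos h.symm]
  · rw [if_neg h, if_neg (fun hh => h hh.symm)]

lemma sum_erase_rotate {ι M : Type*} [DecidableEq ι] [AddCommMonoid M] (S : Finset ι)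
    (f : ι → ι → ι → M) :
    ∑ a ∈ S, ∑ b ∈ S.erase a, ∑ c ∈ (S.erase a).erase b, f a b c
  = ∑ c ∈ S, ∑ a ∈ S.erase c, ∑ b ∈ (S.erase c).erase a, f a b c := by
  have h1 : ∀ a ∈ S, ∑ b ∈ S.erase a, ∑ c ∈ (S.erase a).erase b, f a b c
      = ∑ c ∈ S.erase a, ∑ b ∈ (S.erase a).erase c, f a b c := by
    intro a _; exact sum_erase_swap (S.erase a) (fun b c => f a b c)
  rw [Finset.sum_congr rfl h1, sum_erase_swap S
    (fun a c => ∑ b ∈ (S.erase a).erase c, f a b c)]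
  exact Finset.sum_congr rfl fun c _ => Finset.sum_congr rfl fun a _ => by
    rw [Finset.erase_right_comm]

lemma QQ_eq_zero_of_card_lt {d : ℕ} : ∀ (j : ℕ) (S : Finset (E d)) (x : E d),
    S.card < 2*j → QQ j S x = 0 := by
  intro j
  induction j with
  | zero => intro S x h; omega
  | succ j ih =>
    intro S x h
    rw [QQ_succ]
    have : ∑ a ∈ S, ∑ b ∈ S.erase a, ⟪a, b⟫ * QQ j ((S.erase a).erase b) x = 0 := by
      refine Finset.sum_eq_zero fun a ha => Finset.sum_eq_zero fun b hb => ?_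
      rw [ih _ x ?_, mul_zero]
      have hb' : b ∈ S := Finset.mem_of_mem_erase hb
      rw [Finset.card_erase_of_mem hb, Finset.card_erase_of_mem ha]
      have h2 : 2 ≤ S.card := Finset.one_lt_card.mpr ⟨a, ha, b, hb', (Finset.ne_of_mem_erase hb).symm⟩
      omega
    rw [this, mul_zero]

lemma QQ_succ' {d : ℕ} (j : ℕ) (S : Finset (E d)) (x : E d) :
    ∑ a ∈ S, ∑ b ∈ S.erase a, ⟪a, b⟫ * QQ j ((S.erase a).erase b) x
      = (2 * ((j:ℝ)+1)) * QQ (j+1) S x := by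
  rw [QQ_succ, ← mul_assoc, mul_inv_cancel₀ (by positivity), one_mul]

lemma QQ_insert_zero {d : ℕ} {v : E d} {S : Finset (E d)} (hv : v ∉ S) (x : E d) :
    QQ 0 (insert v S) x = ⟪v,x⟫ * QQ 0 S x := by
  rw [QQ_zero, QQ_zero, Finset.prod_insert hv]

lemma QQ_insert_expand {d : ℕ} (j : ℕ) {v : E d} {S : Finset (E d)} (hv : v ∉ S) (x : E d) :
    QQ (j+1) (insert v S) x = (2 * ((j:ℝ)+1))⁻¹ *
      ((∑ b ∈ S, ⟪v,b⟫ * QQ j (S.erase b) x) +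
       ∑ a ∈ S, (⟪a,v⟫ * QQ j (S.erase a) x +
         ∑ b ∈ S.erase a, ⟪a,b⟫ * QQ j (insert v ((S.erase a).erase b)) x)) := by
  rw [QQ_succ, Finset.sum_insert hv, Finset.erase_insert hv]
  congr 1
  congr 1
  refine Finset.sum_congr rfl fun a ha => ?_
  have hva : v ≠ a := fun h => hv (h ▸ ha)
  have hvea : v ∉ S.erase a := fun h => hv (Finset.mem_of_mem_erase h)
  rw [Finset.erase_insert_of_ne hva, Finset.sum_insert hvea,
    Finset.erase_insert hvea]
  congr 1
  refine Finset.sum_congr rfl fun b hb => ?_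
  have hvb : v ≠ b := fun h => hv (Finset.mem_of_mem_erase (h ▸ hb))
  rw [Finset.erase_insert_of_ne hvb]

lemma QQ_insert_succ {d : ℕ} : ∀ (j : ℕ) {v : E d} {S : Finset (E d)}, v ∉ S → ∀ x : E d,
    QQ (j+1) (insert v S) x
      = ⟪v,x⟫ * QQ (j+1) S x + ∑ b ∈ S, ⟪v,b⟫ * QQ j (S.erase b) x := by
  intro j
  induction j with
  | zero =>
    intro v S hv x
    rw [QQ_insert_expand 0 hv x]
    have e1 : ∀ a ∈ S, (⟪a,v⟫ * QQ 0 (S.erase a) x +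
        ∑ b ∈ S.erase a, ⟪a,b⟫ * QQ 0 (insert v ((S.erase a).erase b)) x)
        = ⟪v,a⟫ * QQ 0 (S.erase a) x +
          ⟪v,x⟫ * ∑ b ∈ S.erase a, ⟪a,b⟫ * QQ 0 ((S.erase a).erase b) x := by
      intro a ha
      rw [real_inner_comm a v, Finset.mul_sum]
      congr 1
      refine Finset.sum_congr rfl fun b hb => ?_
      have hvb : v ∉ (S.erase a).erase b := fun h => hv
        (Finset.mem_of_mem_erase (Finset.mem_of_mem_erase h))
      rw [QQ_insert_zero hvb]; ring
    rw [Finset.sum_congr rfl e1, Finset.sum_add_distrib, ← Finset.mul_sum, QQ_succ' 0, QQ_succ]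
    ring
  | succ k ih =>
    intro v S hv x
    rw [QQ_insert_expand (k+1) hv x]
    have e1 : ∀ a ∈ S, (⟪a,v⟫ * QQ (k+1) (S.erase a) x +
        ∑ b ∈ S.erase a, ⟪a,b⟫ * QQ (k+1) (insert v ((S.erase a).erase b)) x)
        = ⟪v,a⟫ * QQ (k+1) (S.erase a) x +
          (⟪v,x⟫ * ∑ b ∈ S.erase a, ⟪a,b⟫ * QQ (k+1) ((S.erase a).erase b) x +
           ∑ b ∈ S.erase a, ∑ c ∈ ((S.erase a).erase b),
             ⟪a,b⟫ * (⟪v,c⟫ * QQ k (((S.erase a).erase b).erase c) x)) := by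
      intro a ha
      rw [real_inner_comm a v]
      congr 1
      have e2 : ∀ b ∈ S.erase a, ⟪a,b⟫ * QQ (k+1) (insert v ((S.erase a).erase b)) x
          = ⟪v,x⟫ * (⟪a,b⟫ * QQ (k+1) ((S.erase a).erase b) x) +
            ∑ c ∈ ((S.erase a).erase b),
              ⟪a,b⟫ * (⟪v,c⟫ * QQ k (((S.erase a).erase b).erase c) x) := by
        intro b hb
        have hvb : v ∉ (S.erase a).erase b := fun h => hv
          (Finset.mem_of_mem_erase (Finset.mem_of_mem_erase h))
        rw [ih hvb x, mul_add, Finset.mul_sum, mul_left_comm]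
      rw [Finset.sum_congr rfl e2, Finset.sum_add_distrib, ← Finset.mul_sum]
    rw [Finset.sum_congr rfl e1, Finset.sum_add_distrib, Finset.sum_add_distrib,
      ← Finset.mul_sum, QQ_succ' (k+1), sum_erase_rotate S
        (fun a b c => ⟪a,b⟫ * (⟪v,c⟫ * QQ k (((S.erase a).erase b).erase c) x))]
    have e3 : ∀ c ∈ S, ∑ a ∈ S.erase c, ∑ b ∈ (S.erase c).erase a,
          ⟪a,b⟫ * (⟪v,c⟫ * QQ k (((S.erase a).erase b).erase c) x)
        = (2*((k:ℝ)+1)) * (⟪v,c⟫ * QQ (k+1) (S.erase c) x) := by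
      intro c hc
      calc ∑ a ∈ S.erase c, ∑ b ∈ (S.erase c).erase a,
            ⟪a,b⟫ * (⟪v,c⟫ * QQ k (((S.erase a).erase b).erase c) x)
          = ⟪v,c⟫ * ∑ a ∈ S.erase c, ∑ b ∈ (S.erase c).erase a,
            ⟪a,b⟫ * QQ k (((S.erase c).erase a).erase b) x := by
            rw [Finset.mul_sum]
            refine Finset.sum_congr rfl fun a ha => ?_
            rw [Finset.mul_sum]
            refine Finset.sum_congr rfl fun b hb => ?_
            rw [show ((S.erase a).erase b).erase c = ((S.erase c).erase a).erase b by
              rw [Finset.erase_right_comm (a := b), Finset.erase_right_comm (a := a)]]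
            ring
        _ = ⟪v,c⟫ * ((2*((k:ℝ)+1)) * QQ (k+1) (S.erase c) x) := by rw [QQ_succ']
        _ = (2*((k:ℝ)+1)) * (⟪v,c⟫ * QQ (k+1) (S.erase c) x) := by ring
    rw [Finset.sum_congr rfl e3, ← Finset.mul_sum]
    push_cast
    field_simp
    ring

lemma QQ_hasFDerivAt {d : ℕ} : ∀ (j : ℕ) (S : Finset (E d)) (x : E d),
    HasFDerivAt (QQ j S)
      (∑ c ∈ S, QQ j (S.erase c) x • (innerSL ℝ c : E d →L[ℝ] ℝ)) x := by
  intro j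
  induction j with
  | zero =>
    intro S
    induction S using Finset.induction_on with
    | empty =>
      intro x
      have : QQ 0 (∅ : Finset (E d)) = fun _ => (1:ℝ) := by
        funext y; rw [QQ_zero, Finset.prod_empty]
      rw [this, Finset.sum_empty]
      exact hasFDerivAt_const 1 x
    | @insert v S hv ih =>
      intro x
      have hfun : QQ 0 (insert v S) = fun y => ⟪v,y⟫ * QQ 0 S y := by
        funext y; rw [QQ_zero, Finset.prod_insert hv, QQ_zero]
      rw [hfun]
      have h1 : HasFDerivAt (fun y : E d => ⟪v,y⟫) (innerSL ℝ v : E d →L[ℝ] ℝ) x :=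
        (innerSL ℝ v).hasFDerivAt
      have h2 := (h1.mul (ih x))
      have hder : (⟪v,x⟫ • ∑ c ∈ S, QQ 0 (S.erase c) x • (innerSL ℝ c : E d →L[ℝ] ℝ))
            + QQ 0 S x • (innerSL ℝ v : E d →L[ℝ] ℝ)
          = ∑ c ∈ insert v S, QQ 0 ((insert v S).erase c) x • (innerSL ℝ c : E d →L[ℝ] ℝ) := by
        rw [Finset.sum_insert hv, Finset.erase_insert hv, Finset.smul_sum]
        rw [add_comm]
        congr 1
        refine Finset.sum_congr rfl fun c hc => ?_
        have hvc : v ≠ c := fun h => hv (h ▸ hc)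
        rw [Finset.erase_insert_of_ne hvc, QQ_insert_zero
          (fun h => hv (Finset.mem_of_mem_erase h)), smul_smul]
      rw [← hder]
      exact h2
  | succ j ih =>
    intro S x
    have hfun : QQ (j+1) S = fun y => (2 * ((j:ℝ)+1))⁻¹ *
        ∑ a ∈ S, ∑ b ∈ S.erase a, ⟪a, b⟫ * QQ j ((S.erase a).erase b) y := by
      funext y; rw [QQ_succ]
    rw [hfun]
    have h2 : HasFDerivAt
        (fun y => ∑ a ∈ S, ∑ b ∈ S.erase a, ⟪a, b⟫ * QQ j ((S.erase a).erase b) y)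
        (∑ a ∈ S, ∑ b ∈ S.erase a, ⟪a, b⟫ •
          (∑ c ∈ (S.erase a).erase b, QQ j (((S.erase a).erase b).erase c) x •
            (innerSL ℝ c : E d →L[ℝ] ℝ))) x := by
      refine HasFDerivAt.fun_sum fun a ha => ?_
      refine HasFDerivAt.fun_sum fun b hb => ?_
      exact (ih ((S.erase a).erase b) x).const_mul _
    have h3 := h2.const_mul ((2 * ((j:ℝ)+1))⁻¹)
    have hder : (2 * ((j:ℝ)+1))⁻¹ • (∑ a ∈ S, ∑ b ∈ S.erase a, ⟪a, b⟫ •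
          (∑ c ∈ (S.erase a).erase b, QQ j (((S.erase a).erase b).erase c) x •
            (innerSL ℝ c : E d →L[ℝ] ℝ)))
        = ∑ c ∈ S, QQ (j+1) (S.erase c) x • (innerSL ℝ c : E d →L[ℝ] ℝ) := by
      ext w
      simp only [ContinuousLinearMap.coe_smul', Pi.smul_apply, ContinuousLinearMap.coe_sum',
        Finset.sum_apply, smul_eq_mul]
      have step1 : ∑ a ∈ S, ∑ b ∈ S.erase a, ⟪a,b⟫ *
            ∑ c ∈ (S.erase a).erase b, QQ j (((S.erase a).erase b).erase c) x * (innerSL ℝ c) w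
          = ∑ a ∈ S, ∑ b ∈ S.erase a, ∑ c ∈ (S.erase a).erase b,
              ⟪a,b⟫ * (QQ j (((S.erase a).erase b).erase c) x * (innerSL ℝ c) w) := by
        refine Finset.sum_congr rfl fun a _ => Finset.sum_congr rfl fun b _ => ?_
        rw [Finset.mul_sum]
      rw [step1, sum_erase_rotate S (fun a b c =>
        ⟪a,b⟫ * (QQ j (((S.erase a).erase b).erase c) x * (innerSL ℝ c) w))]
      have step3 : ∀ c ∈ S, ∑ a ∈ S.erase c, ∑ b ∈ (S.erase c).erase a,
            ⟪a,b⟫ * (QQ j (((S.erase a).erase b).erase c) x * (innerSL ℝ c) w)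
          = (2*((j:ℝ)+1)) * (QQ (j+1) (S.erase c) x * (innerSL ℝ c) w) := by
        intro c hc
        calc ∑ a ∈ S.erase c, ∑ b ∈ (S.erase c).erase a,
              ⟪a,b⟫ * (QQ j (((S.erase a).erase b).erase c) x * (innerSL ℝ c) w)
            = (∑ a ∈ S.erase c, ∑ b ∈ (S.erase c).erase a,
                ⟪a,b⟫ * QQ j (((S.erase c).erase a).erase b) x) * (innerSL ℝ c) w := by
              rw [Finset.sum_mul]
              refine Finset.sum_congr rfl fun a _ => ?_
              rw [Finset.sum_mul]
              refine Finset.sum_congr rfl fun b _ => ?_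
              rw [show ((S.erase a).erase b).erase c = ((S.erase c).erase a).erase b by
                rw [Finset.erase_right_comm (a := b), Finset.erase_right_comm (a := a)]]
              ring
          _ = (2*((j:ℝ)+1)) * (QQ (j+1) (S.erase c) x * (innerSL ℝ c) w) := by
              rw [QQ_succ']; ring
      rw [Finset.sum_congr rfl step3, Finset.mul_sum]
      refine Finset.sum_congr rfl fun c _ => ?_
      rw [← mul_assoc, inv_mul_cancel₀ (by positivity), one_mul]
    rw [← hder]
    exact h3

section Reflection

variable {d : ℕ}

lemma refl_inner_left (α : E d) (u w : E d) :
    ⟪reflVec α u, w⟫ = ⟪u, w⟫ - (2 * ⟪α, u⟫ / ⟪α, α⟫) * ⟪α, w⟫ := by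
  rw [reflVec, inner_sub_left, real_inner_smul_left]

lemma refl_sym (α u w : E d) : ⟪reflVec α u, w⟫ = ⟪u, reflVec α w⟫ := by
  simp only [reflVec, inner_sub_left, inner_sub_right, real_inner_smul_left,
    real_inner_smul_right]
  rw [real_inner_comm α u, real_inner_comm u α]
  ring

lemma refl_invol {α : E d} (hα : α ≠ 0) (x : E d) : reflVec α (reflVec α x) = x := by
  have h : ⟪α,α⟫ ≠ 0 := inner_self_ne_zero.mpr hα
  simp only [reflVec, inner_sub_right, real_inner_smul_right]
  rw [sub_sub, ← add_smul]
  have : (2 * ⟪α, x⟫ / ⟪α, α⟫ + 2 * (⟪α, x⟫ - 2 * ⟪α, x⟫ / ⟪α, α⟫ * ⟪α, α⟫) / ⟪α, α⟫) = 0 := by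
    rw [div_mul_cancel₀ _ h, show ⟪α,x⟫ - 2 * ⟪α,x⟫ = -⟪α,x⟫ by ring]
    rw [show (2:ℝ) * -⟪α,x⟫ = -(2*⟪α,x⟫) by ring, neg_div]
    exact add_neg_cancel _
  rw [this, zero_smul, sub_zero]

lemma refl_inner_inner {α : E d} (hα : α ≠ 0) (u w : E d) :
    ⟪reflVec α u, reflVec α w⟫ = ⟪u, w⟫ := by
  rw [refl_sym, refl_invol hα]

lemma refl_self (α : E d) : reflVec α α = -α := by
  by_cases hα : α = 0
  · simp [reflVec, hα]
  · have h : ⟪α,α⟫ ≠ 0 := inner_self_ne_zero.mpr hα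
    simp only [reflVec]
    rw [mul_div_assoc, div_self h, mul_one, two_smul]
    abel

lemma refl_neg (α : E d) (x : E d) : reflVec α (-x) = -(reflVec α x) := by
  simp only [reflVec, inner_neg_right]
  rw [show 2 * -⟪α,x⟫ / ⟪α,α⟫ = -(2 * ⟪α,x⟫ / ⟪α,α⟫) by ring, neg_smul]
  abel

lemma refl_fixed {α x : E d} (hx : ⟪α, x⟫ = 0) : reflVec α x = x := by
  simp [reflVec, hx]

lemma refl_injective {α : E d} (hα : α ≠ 0) : Function.Injective (reflVec α) :=
  Function.Involutive.injective (refl_invol hα)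

end Reflection

/-- `QQ` and isometry-like maps. -/
lemma QQ_image_map {d : ℕ} (s : E d → E d) (hinj : Function.Injective s)
    (hsym : ∀ u w, ⟪s u, w⟫ = ⟪u, s w⟫) (hinn : ∀ u w, ⟪s u, s w⟫ = ⟪u, w⟫) :
    ∀ (j : ℕ) (S : Finset (E d)) (x : E d), QQ j (S.image s) x = QQ j S (s x) := by
  intro j
  induction j with
  | zero =>
    intro S x
    rw [QQ_zero, QQ_zero, Finset.prod_image (fun a _ b _ h => hinj h)]
    exact Finset.prod_congr rfl fun v _ => hsym v x
  | succ j ih =>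
    intro S x
    rw [QQ_succ, QQ_succ]
    congr 1
    rw [Finset.sum_image (fun a _ b _ h => hinj h)]
    refine Finset.sum_congr rfl fun a ha => ?_
    rw [← Finset.image_erase hinj, Finset.sum_image (fun a _ b _ h => hinj h)]
    refine Finset.sum_congr rfl fun b hb => ?_
    rw [hinn, ← Finset.image_erase hinj, ih]

lemma image_erase_injOn {α β : Type*} [DecidableEq α] [DecidableEq β] {f : α → β}
    {S : Finset α} (hinj : Set.InjOn f S) {a : α} (ha : a ∈ S) :
    (S.erase a).image f = (S.image f).erase (f a) := by
  ext y
  simp only [Finset.mem_image, Finset.mem_erase]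
  constructor
  · rintro ⟨b, ⟨hba, hbS⟩, rfl⟩
    exact ⟨fun h => hba (hinj hbS ha h), b, hbS, rfl⟩
  · rintro ⟨hya, b, hbS, rfl⟩
    exact ⟨b, ⟨fun h => hya (h ▸ rfl), hbS⟩, rfl⟩

/-- `QQ` and sign flips. -/
lemma QQ_image_sign {d : ℕ} (ε : E d → ℝ) (hε : ∀ v, ε v = 1 ∨ ε v = -1) :
    ∀ (j : ℕ) (S : Finset (E d)) (x : E d),
      (Set.InjOn (fun v => ε v • v) S) →
      QQ j (S.image (fun v => ε v • v)) x = (∏ v ∈ S, ε v) * QQ j S x := by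
  intro j
  induction j with
  | zero =>
    intro S x hinj
    rw [QQ_zero, QQ_zero, Finset.prod_image (fun a ha b hb h => hinj ha hb h),
      ← Finset.prod_mul_distrib]
    exact Finset.prod_congr rfl fun v _ => by rw [real_inner_smul_left]
  | succ j ih =>
    intro S x hinj
    rw [QQ_succ, QQ_succ, Finset.sum_image (fun a ha b hb h => hinj ha hb h)]
    have key : ∀ a ∈ S, ∑ b ∈ (S.image (fun v => ε v • v)).erase (ε a • a),
          ⟪ε a • a, b⟫ * QQ j (((S.image (fun v => ε v • v)).erase (ε a • a)).erase b) x
        = (∏ v ∈ S, ε v) * ∑ b ∈ S.erase a, ⟪a,b⟫ * QQ j ((S.erase a).erase b) x := by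
      intro a ha
      have hsub : ∀ (T : Finset (E d)), T ⊆ S → Set.InjOn (fun v => ε v • v) ↑T :=
        fun T hT => hinj.mono (fun z hz => Finset.mem_coe.mpr (hT (Finset.mem_coe.mp hz)))
      rw [← image_erase_injOn hinj ha,
        Finset.sum_image (fun p hp q hq h =>
          hsub _ (Finset.erase_subset a S) hp hq h),
        Finset.mul_sum]
      refine Finset.sum_congr rfl fun b hb => ?_
      have hb' : b ∈ S := Finset.mem_of_mem_erase hb
      rw [← image_erase_injOn (hsub _ (Finset.erase_subset a S)) hb,
        ih ((S.erase a).erase b) x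
          (hsub _ (((S.erase a).erase_subset b).trans (Finset.erase_subset a S)))]
      rw [real_inner_smul_left, real_inner_smul_right]
      have hprod : ε a * (ε b * ∏ v ∈ (S.erase a).erase b, ε v) = ∏ v ∈ S, ε v := by
        rw [Finset.mul_prod_erase _ ε hb, Finset.mul_prod_erase _ ε ha]
      calc ε a * (ε b * ⟪a,b⟫) * ((∏ v ∈ (S.erase a).erase b, ε v) *
              QQ j ((S.erase a).erase b) x)
          = (ε a * (ε b * ∏ v ∈ (S.erase a).erase b, ε v)) *
              (⟪a,b⟫ * QQ j ((S.erase a).erase b) x) := by ring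
        _ = (∏ v ∈ S, ε v) * (⟪a,b⟫ * QQ j ((S.erase a).erase b) x) := by rw [hprod]
    rw [Finset.sum_congr rfl key, ← Finset.mul_sum]
    ring

lemma even_card_of_involution {α : Type*} [DecidableEq α] :
    ∀ (n : ℕ) (S : Finset α), S.card = n → ∀ f : α → α,
      (∀ a ∈ S, f a ∈ S) → (∀ a ∈ S, f (f a) = a) → (∀ a ∈ S, f a ≠ a) →
      Even S.card := by
  intro n
  induction n using Nat.strong_induction_on with
  | _ n ih =>
    intro S hcard f hmem hinv hne
    rcases Finset.eq_empty_or_nonempty S with rfl | ⟨a, ha⟩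
    · simp
    · have hfa : f a ∈ S.erase a := Finset.mem_erase.mpr ⟨hne a ha, hmem a ha⟩
      have hTsub : ((S.erase a).erase (f a)) ⊆ S :=
        ((S.erase a).erase_subset _).trans (S.erase_subset _)
      have hcardT : ((S.erase a).erase (f a)).card + 2 = S.card := by
        rw [Finset.card_erase_of_mem hfa, Finset.card_erase_of_mem ha]
        have h2 : 2 ≤ S.card := Finset.one_lt_card.mpr ⟨a, ha, f a, hmem a ha,
          fun h => hne a ha h.symm⟩
        omega
      have hmemT : ∀ b ∈ (S.erase a).erase (f a), f b ∈ (S.erase a).erase (f a) := by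
        intro b hb
        have hbS : b ∈ S := hTsub hb
        have hbfa : b ≠ f a := (Finset.mem_erase.mp hb).1
        have hba : b ≠ a := (Finset.mem_erase.mp (Finset.mem_of_mem_erase hb)).1
        refine Finset.mem_erase.mpr ⟨?_, Finset.mem_erase.mpr ⟨?_, hmem b hbS⟩⟩
        · intro h; exact hba (by rw [← hinv b hbS, h, hinv a ha])
        · intro h; exact hbfa (by rw [← hinv b hbS, h])
      have hev : Even ((S.erase a).erase (f a)).card := by
        refine ih ((S.erase a).erase (f a)).card (by omega) _ rfl f hmemT
          (fun b hb => hinv b (hTsub hb)) (fun b hb => hne b (hTsub hb))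
      rcases hev with ⟨k, hk⟩
      exact ⟨k + 1, by omega⟩

section RootFacts

variable {d : ℕ} {Sig Sp : Finset (E d)} {v : E d}

/-- Hypotheses bundle we use everywhere. -/
structure RootSetup (Sig Sp : Finset (E d)) (v : E d) : Prop where
  notzero : (0 : E d) ∉ Sig
  reduced : ∀ α ∈ Sig, ∀ t : ℝ, t • α ∈ Sig → t = 1 ∨ t = -1
  reflmem : ∀ α ∈ Sig, ∀ β ∈ Sig, reflVec α β ∈ Sig
  vne : ∀ α ∈ Sig, ⟪α, v⟫ ≠ 0
  posdef : ∀ α : E d, α ∈ Sp ↔ α ∈ Sig ∧ 0 < ⟪α, v⟫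

namespace RootSetup

variable (h : RootSetup Sig Sp v)
include h

lemma sp_sig {γ : E d} (hγ : γ ∈ Sp) : γ ∈ Sig := ((h.posdef γ).mp hγ).1
lemma sp_pos {γ : E d} (hγ : γ ∈ Sp) : 0 < ⟪γ, v⟫ := ((h.posdef γ).mp hγ).2
lemma sig_ne_zero {γ : E d} (hγ : γ ∈ Sig) : γ ≠ 0 := fun hz => h.notzero (hz ▸ hγ)
lemma neg_mem {γ : E d} (hγ : γ ∈ Sig) : -γ ∈ Sig := by
  have := h.reflmem γ hγ γ hγ
  rwa [refl_self] at this
lemma neg_not_sp {γ : E d} (hγ : γ ∈ Sp) : -γ ∉ Sp := by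
  intro hn
  have h1 := h.sp_pos hγ
  have h2 := h.sp_pos hn
  rw [inner_neg_left] at h2
  linarith
lemma mem_or_neg_mem_sp {γ : E d} (hγ : γ ∈ Sig) : γ ∈ Sp ∨ -γ ∈ Sp := by
  rcases lt_or_gt_of_ne (h.vne γ hγ) with hneg | hpos
  · right
    exact (h.posdef _).mpr ⟨h.neg_mem hγ, by rw [inner_neg_left]; linarith⟩
  · left
    exact (h.posdef _).mpr ⟨hγ, hpos⟩

end RootSetup

/-- sign of `s_α γ` relative to `Sp`. -/
def epsSign (Sp : Finset (E d)) (α γ : E d) : ℝ := if reflVec α γ ∈ Sp then 1 else -1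

/-- `τ γ` : the positive representative of `s_α γ`. -/
def tauMap (Sp : Finset (E d)) (α γ : E d) : E d := epsSign Sp α γ • reflVec α γ

lemma epsSign_sq (Sp : Finset (E d)) (α γ : E d) :
    epsSign Sp α γ * epsSign Sp α γ = 1 := by
  unfold epsSign; split <;> norm_num

lemma epsSign_or (Sp : Finset (E d)) (α γ : E d) :
    epsSign Sp α γ = 1 ∨ epsSign Sp α γ = -1 := by
  unfold epsSign; split <;> simp

lemma RootSetup.tau_mem_sp (h : RootSetup Sig Sp v) {α : E d} (hα : α ∈ Sp)
    {γ : E d} (hγ : γ ∈ Sp) : tauMap Sp α γ ∈ Sp := by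
  have hrmem : reflVec α γ ∈ Sig := h.reflmem α (h.sp_sig hα) γ (h.sp_sig hγ)
  unfold tauMap epsSign
  by_cases hc : reflVec α γ ∈ Sp
  · rwa [if_pos hc, one_smul]
  · rw [if_neg hc, neg_one_smul]
    rcases h.mem_or_neg_mem_sp hrmem with hmem | hmem
    · exact absurd hmem hc
    · exact hmem

lemma RootSetup.refl_tau (h : RootSetup Sig Sp v) {α : E d} (hα : α ∈ Sp)
    {γ : E d} (hγ : γ ∈ Sp) :
    reflVec α (tauMap Sp α γ) = epsSign Sp α γ • γ := by
  have hα0 : α ≠ 0 := h.sig_ne_zero (h.sp_sig hα)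
  unfold tauMap epsSign
  by_cases hc : reflVec α γ ∈ Sp
  · rw [if_pos hc, one_smul, one_smul, refl_invol hα0]
  · rw [if_neg hc, neg_one_smul, neg_one_smul, refl_neg, refl_invol hα0]

lemma RootSetup.eps_tau (h : RootSetup Sig Sp v) {α : E d} (hα : α ∈ Sp)
    {γ : E d} (hγ : γ ∈ Sp) :
    epsSign Sp α (tauMap Sp α γ) = epsSign Sp α γ := by
  rw [epsSign, h.refl_tau hα hγ]
  rcases epsSign_or Sp α γ with he | he
  · rw [he, one_smul, if_pos hγ]
  · rw [he, neg_one_smul, if_neg (h.neg_not_sp hγ)]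

lemma RootSetup.tau_injOn (h : RootSetup Sig Sp v) {α : E d} (hα : α ∈ Sp) :
    Set.InjOn (tauMap Sp α) ↑Sp := by
  intro a ha b hb heq
  have ha' : a ∈ Sp := Finset.mem_coe.mp ha
  have hb' : b ∈ Sp := Finset.mem_coe.mp hb
  have hα0 : α ≠ 0 := h.sig_ne_zero (h.sp_sig hα)
  unfold tauMap at heq
  have hr : reflVec α a = (epsSign Sp α a * epsSign Sp α b) • reflVec α b := by
    have := congrArg (fun z => epsSign Sp α a • z) heq
    simpa [smul_smul, epsSign_sq] using this
  rcases epsSign_or Sp α a with hea | hea <;> rcases epsSign_or Sp α b with heb | heb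
  · rw [hea, heb] at hr; norm_num at hr; exact refl_injective hα0 hr
  · rw [hea, heb] at hr; norm_num at hr
    rw [← refl_neg] at hr
    have : a = -b := refl_injective hα0 hr
    exact absurd (this ▸ ha') (h.neg_not_sp hb')
  · rw [hea, heb] at hr; norm_num at hr
    rw [← refl_neg] at hr
    have : a = -b := refl_injective hα0 hr
    exact absurd (this ▸ ha') (h.neg_not_sp hb')
  · rw [hea, heb] at hr; norm_num at hr; exact refl_injective hα0 hr

lemma RootSetup.sign_injOn (h : RootSetup Sig Sp v) {α : E d} :
    Set.InjOn (fun γ => epsSign Sp α γ • γ) ↑Sp := by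
  intro a ha b hb heq
  have ha' : a ∈ Sp := Finset.mem_coe.mp ha
  have hb' : b ∈ Sp := Finset.mem_coe.mp hb
  simp only at heq
  rcases epsSign_or Sp α a with hea | hea <;> rcases epsSign_or Sp α b with heb | heb <;>
    rw [hea, heb] at heq
  · simpa using heq
  · rw [one_smul, neg_one_smul] at heq
    exact absurd (heq ▸ ha') (h.neg_not_sp hb')
  · rw [neg_one_smul, one_smul] at heq
    have : a = -b := by rw [← heq, neg_neg]
    exact absurd (this ▸ ha') (h.neg_not_sp hb')
  · rw [neg_one_smul, neg_one_smul] at heq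
    simpa using heq

lemma RootSetup.tau_image (h : RootSetup Sig Sp v) {α : E d} (hα : α ∈ Sp) :
    Sp.image (tauMap Sp α) = Sp := by
  apply Finset.eq_of_subset_of_card_le
  · intro y hy
    rcases Finset.mem_image.mp hy with ⟨γ, hγ, rfl⟩
    exact h.tau_mem_sp hα hγ
  · rw [Finset.card_image_of_injOn (h.tau_injOn hα)]

lemma RootSetup.image_refl_eq (h : RootSetup Sig Sp v) {α : E d} (hα : α ∈ Sp) :
    Sp.image (reflVec α) = Sp.image (fun γ => epsSign Sp α γ • γ) := by
  have h2 : (Sp.image (tauMap Sp α)).image (fun γ => epsSign Sp α γ • γ)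
      = Sp.image (reflVec α) := by
    rw [Finset.image_image]
    apply Finset.image_congr
    intro γ hγ
    have hγ' : γ ∈ Sp := Finset.mem_coe.mp hγ
    show epsSign Sp α (tauMap Sp α γ) • tauMap Sp α γ = reflVec α γ
    rw [h.eps_tau hα hγ']
    unfold tauMap
    rw [smul_smul, epsSign_sq, one_smul]
  rw [← h2, h.tau_image hα]

lemma RootSetup.eps_prod (h : RootSetup Sig Sp v) {α : E d} (hα : α ∈ Sp) :
    ∏ γ ∈ Sp, epsSign Sp α γ = -1 := by
  have hα0 : α ≠ 0 := h.sig_ne_zero (h.sp_sig hα)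
  set N := Sp.filter (fun γ => reflVec α γ ∉ Sp) with hN
  have hsplit : ∏ γ ∈ Sp, epsSign Sp α γ = (-1 : ℝ) ^ N.card := by
    rw [← Finset.prod_filter_mul_prod_filter_not Sp (fun γ => reflVec α γ ∈ Sp)]
    have h1 : ∏ γ ∈ Sp.filter (fun γ => reflVec α γ ∈ Sp), epsSign Sp α γ = 1 :=
      Finset.prod_eq_one (fun γ hγ => by
        rw [epsSign, if_pos (Finset.mem_filter.mp hγ).2])
    have h2 : ∏ γ ∈ Sp.filter (fun γ => ¬ reflVec α γ ∈ Sp), epsSign Sp α γ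
        = (-1:ℝ)^N.card := by
      rw [Finset.prod_congr rfl (fun γ hγ => by
        rw [epsSign, if_neg (Finset.mem_filter.mp hγ).2] : ∀ γ ∈ Sp.filter
          (fun γ => ¬ reflVec α γ ∈ Sp), epsSign Sp α γ = -1), Finset.prod_const]
    rw [h1, h2, one_mul]
  have hαN : α ∈ N := Finset.mem_filter.mpr ⟨hα, by
    rw [refl_self]; exact h.neg_not_sp hα⟩
  have hNmem : ∀ γ ∈ N, γ ∈ Sp ∧ reflVec α γ ∉ Sp := fun γ hγ =>
    ⟨(Finset.mem_filter.mp hγ).1, (Finset.mem_filter.mp hγ).2⟩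
  have heps_neg : ∀ γ ∈ N, epsSign Sp α γ = -1 := fun γ hγ => by
    rw [epsSign, if_neg (hNmem γ hγ).2]
  have htau_neg : ∀ γ ∈ N, tauMap Sp α γ = -(reflVec α γ) := fun γ hγ => by
    rw [tauMap, heps_neg γ hγ, neg_one_smul]
  have hrtau : ∀ γ ∈ N, reflVec α (tauMap Sp α γ) = -γ := fun γ hγ => by
    rw [h.refl_tau hα (hNmem γ hγ).1, heps_neg γ hγ, neg_one_smul]
  have hmemT : ∀ γ ∈ N.erase α, tauMap Sp α γ ∈ N.erase α := by
    intro γ hγ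
    have hγN : γ ∈ N := Finset.mem_of_mem_erase hγ
    have hγα : γ ≠ α := (Finset.mem_erase.mp hγ).1
    refine Finset.mem_erase.mpr ⟨?_, Finset.mem_filter.mpr
      ⟨h.tau_mem_sp hα (hNmem γ hγN).1, ?_⟩⟩
    · intro hcontra
      have h1 : reflVec α (tauMap Sp α γ) = -γ := hrtau γ hγN
      rw [hcontra, refl_self] at h1
      exact hγα (neg_injective h1).symm
    · rw [hrtau γ hγN]
      exact h.neg_not_sp (hNmem γ hγN).1
  have hinvT : ∀ γ ∈ N.erase α, tauMap Sp α (tauMap Sp α γ) = γ := by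
    intro γ hγ
    have hγN : γ ∈ N := Finset.mem_of_mem_erase hγ
    have hτN : tauMap Sp α γ ∈ N := Finset.mem_of_mem_erase (hmemT γ hγ)
    rw [tauMap, heps_neg _ hτN, hrtau γ hγN, neg_one_smul, neg_neg]
  have hneT : ∀ γ ∈ N.erase α, tauMap Sp α γ ≠ γ := by
    intro γ hγ hcontra
    have hγN : γ ∈ N := Finset.mem_of_mem_erase hγ
    have hγα : γ ≠ α := (Finset.mem_erase.mp hγ).1
    have hγSp : γ ∈ Sp := (hNmem γ hγN).1
    have hng : -(reflVec α γ) = γ := by rw [← htau_neg γ hγN, hcontra]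
    have hr : reflVec α γ = -γ := neg_eq_iff_eq_neg.mp hng
    rw [reflVec] at hr
    have h4 : γ - (γ - (2 * ⟪α,γ⟫ / ⟪α,α⟫) • α) = γ - (-γ) := by rw [hr]
    have h5 : (2 * ⟪α,γ⟫ / ⟪α,α⟫) • α = γ + γ := by
      rw [sub_sub_cancel, sub_neg_eq_add] at h4
      exact h4
    have h6 : (2:ℝ) • ((⟪α,γ⟫ / ⟪α,α⟫) • α) = (2:ℝ) • γ := by
      rw [smul_smul, two_smul]
      rw [show (2:ℝ) * (⟪α,γ⟫ / ⟪α,α⟫) = 2 * ⟪α,γ⟫ / ⟪α,α⟫ by ring]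
      exact h5
    have hγeq : (⟪α,γ⟫ / ⟪α,α⟫) • α = γ :=
      smul_right_injective (E d) two_ne_zero h6
    rcases h.reduced α (h.sp_sig hα) (⟪α,γ⟫ / ⟪α,α⟫) (by rw [hγeq]; exact h.sp_sig hγSp)
      with ht | ht
    · rw [ht, one_smul] at hγeq
      exact hγα hγeq.symm
    · rw [ht, neg_one_smul] at hγeq
      exact h.neg_not_sp hα (hγeq ▸ hγSp)
  have hevT : Even ((N.erase α).card) :=
    even_card_of_involution (N.erase α).card (N.erase α) rfl (tauMap Sp α) hmemT hinvT hneT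
  have hcard1 : 1 ≤ N.card := Finset.card_pos.mpr ⟨α, hαN⟩
  have hcardN : N.card = (N.erase α).card + 1 := by
    rw [Finset.card_erase_of_mem hαN]; omega
  rcases hevT with ⟨k, hk⟩
  rw [hsplit]
  exact Odd.neg_one_pow ⟨k, by omega⟩

lemma RootSetup.QQ_refl (h : RootSetup Sig Sp v) {α : E d} (hα : α ∈ Sp) (j : ℕ) (x : E d) :
    QQ j Sp (reflVec α x) = - QQ j Sp x := by
  have hα0 : α ≠ 0 := h.sig_ne_zero (h.sp_sig hα)
  have h1 : QQ j (Sp.image (reflVec α)) x = QQ j Sp (reflVec α x) :=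
    QQ_image_map (reflVec α) (refl_injective hα0) (refl_sym α) (refl_inner_inner hα0) j Sp x
  rw [← h1, h.image_refl_eq hα,
    QQ_image_sign (epsSign Sp α) (epsSign_or Sp α) j Sp x h.sign_injOn,
    h.eps_prod hα, neg_one_mul]

lemma RootSetup.QQ_hyperplane (h : RootSetup Sig Sp v) {α : E d} (hα : α ∈ Sp) (j : ℕ)
    {x : E d} (hx : ⟪α, x⟫ = 0) : QQ j Sp x = 0 := by
  have := h.QQ_refl hα j x
  rw [refl_fixed hx] at this
  linarith

lemma QQ_line_poly {d : ℕ} : ∀ (j : ℕ) (S : Finset (E d)) (X u : E d),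
    ∃ p : Polynomial ℝ, p.natDegree ≤ S.card - 2*j ∧
      ∀ t : ℝ, QQ j S (X + t • u) = p.eval t := by
  intro j
  induction j with
  | zero =>
    intro S X u
    refine ⟨∏ w ∈ S, (Polynomial.C ⟪w,X⟫ + Polynomial.C ⟪w,u⟫ * Polynomial.X), ?_, ?_⟩
    · refine le_trans (Polynomial.natDegree_prod_le _ _) ?_
      have hdeg1 : ∀ w ∈ S, (Polynomial.C ⟪w,X⟫ + Polynomial.C ⟪w,u⟫ * Polynomial.X).natDegree ≤ 1 := by
        intro w _
        refine le_trans (Polynomial.natDegree_add_le _ _) ?_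
        rw [max_le_iff, Polynomial.natDegree_C]
        exact ⟨Nat.zero_le 1, le_trans (Polynomial.natDegree_C_mul_le _ _)
          Polynomial.natDegree_X_le⟩
      refine le_trans (Finset.sum_le_sum hdeg1) ?_
      rw [Finset.sum_const, smul_eq_mul, mul_one, Nat.mul_zero, Nat.sub_zero]
    · intro t
      rw [QQ_zero, Polynomial.eval_prod]
      refine Finset.prod_congr rfl fun w _ => ?_
      rw [inner_add_right, real_inner_smul_right, Polynomial.eval_add,
        Polynomial.eval_mul, Polynomial.eval_C, Polynomial.eval_C, Polynomial.eval_X]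
      ring
  | succ j ih =>
    intro S X u
    choose P hPdeg hPeval using fun T : Finset (E d) => ih T X u
    refine ⟨Polynomial.C (2 * ((j:ℝ)+1))⁻¹ *
      ∑ a ∈ S, ∑ b ∈ S.erase a, Polynomial.C ⟪a,b⟫ * P ((S.erase a).erase b), ?_, ?_⟩
    · refine le_trans (Polynomial.natDegree_C_mul_le _ _) ?_
      refine Polynomial.natDegree_sum_le_of_forall_le _ _ fun a ha => ?_
      refine Polynomial.natDegree_sum_le_of_forall_le _ _ fun b hb => ?_
      refine le_trans (Polynomial.natDegree_C_mul_le _ _) ?_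
      refine le_trans (hPdeg ((S.erase a).erase b)) ?_
      rw [Finset.card_erase_of_mem hb, Finset.card_erase_of_mem ha]
      omega
    · intro t
      rw [QQ_succ, Polynomial.eval_mul, Polynomial.eval_C, Polynomial.eval_finset_sum]
      congr 1
      refine Finset.sum_congr rfl fun a ha => ?_
      rw [Polynomial.eval_finset_sum]
      refine Finset.sum_congr rfl fun b hb => ?_
      rw [Polynomial.eval_mul, Polynomial.eval_C, hPeval]

lemma exists_not_orthogonal {d : ℕ} (B : Finset (E d)) (hB : ∀ c ∈ B, c ≠ 0) :
    ∃ u : E d, ∀ c ∈ B, ⟪c,u⟫ ≠ 0 := by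
  classical
  induction B using Finset.induction_on with
  | empty => exact ⟨0, by simp⟩
  | @insert c B hc ihB =>
    obtain ⟨u, hu⟩ := ihB (fun c' hc' => hB c' (Finset.mem_insert_of_mem hc'))
    have hc0 : c ≠ 0 := hB c (Finset.mem_insert_self c B)
    have hcc : ⟪c,c⟫ ≠ 0 := inner_self_ne_zero.mpr hc0
    obtain ⟨t, ht⟩ := Infinite.exists_notMem_finset
      ((insert c B).image (fun c' => -⟪c',u⟫/⟪c',c⟫))
    refine ⟨u + t • c, ?_⟩
    intro c' hc'
    rw [inner_add_right, real_inner_smul_right]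
    intro hzero
    by_cases hm : ⟪c',c⟫ = 0
    · have hc'B : c' ∈ B := by
        rcases Finset.mem_insert.mp hc' with rfl | hmem
        · exact absurd hm hcc
        · exact hmem
      rw [hm, mul_zero, add_zero] at hzero
      exact hu c' hc'B hzero
    · apply ht
      refine Finset.mem_image.mpr ⟨c', hc', ?_⟩
      rw [div_eq_iff hm]
      linarith [hzero]

lemma RootSetup.QQ_vanish_injOn (h : RootSetup Sig Sp v) {j : ℕ} (hj : 1 ≤ j) (X : E d)
    (hinj : Set.InjOn (fun β => -⟪β,X⟫/⟪β,v⟫) ↑Sp) : QQ j Sp X = 0 := by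
  by_cases hcard : Sp.card < 2*j
  · exact QQ_eq_zero_of_card_lt j Sp X hcard
  push_neg at hcard
  obtain ⟨p, hpdeg, hpeval⟩ := QQ_line_poly j Sp X v
  have hp0 : p = 0 := by
    refine Polynomial.eq_zero_of_natDegree_lt_card_of_eval_eq_zero' p
      (Sp.image (fun β => -⟪β,X⟫/⟪β,v⟫)) ?_ ?_
    · intro r hr
      obtain ⟨β, hβ, rfl⟩ := Finset.mem_image.mp hr
      rw [← hpeval]
      refine h.QQ_hyperplane hβ j ?_
      rw [inner_add_right, real_inner_smul_right]
      have hβv : ⟪β,v⟫ ≠ 0 := ne_of_gt (h.sp_pos hβ)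
      rw [div_mul_cancel₀ _ hβv]
      exact add_neg_cancel _
    · rw [Finset.card_image_of_injOn hinj]
      omega
  rw [show X = X + (0:ℝ) • v by simp, hpeval 0, hp0, Polynomial.eval_zero]

lemma RootSetup.QQ_vanish (h : RootSetup Sig Sp v) {j : ℕ} (hj : 1 ≤ j) (X : E d) :
    QQ j Sp X = 0 := by
  classical
  -- the finite set of "degenerate direction" vectors
  set B : Finset (E d) := ((Sp ×ˢ Sp).filter (fun q => q.1 ≠ q.2)).image
    (fun q => ⟪q.2,v⟫ • q.1 - ⟪q.1,v⟫ • q.2) with hB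
  have hBne : ∀ c ∈ B, c ≠ 0 := by
    intro c hc
    obtain ⟨⟨β, δ⟩, hq, rfl⟩ := Finset.mem_image.mp hc
    obtain ⟨hmem, hne⟩ := Finset.mem_filter.mp hq
    obtain ⟨hβ, hδ⟩ := Finset.mem_product.mp hmem
    intro hzero
    have heq : ⟪δ,v⟫ • β = ⟪β,v⟫ • δ := by
      have := sub_eq_zero.mp hzero
      exact this
    have hδv : ⟪δ,v⟫ ≠ 0 := ne_of_gt (h.sp_pos hδ)
    have hβ_eq : β = (⟪β,v⟫/⟪δ,v⟫) • δ := by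
      rw [div_eq_mul_inv, mul_comm, mul_smul]
      rw [← heq, smul_smul, inv_mul_cancel₀ hδv, one_smul]
    rcases h.reduced δ (h.sp_sig hδ) (⟪β,v⟫/⟪δ,v⟫) (by rw [← hβ_eq]; exact h.sp_sig hβ)
      with ht | ht
    · rw [ht, one_smul] at hβ_eq
      exact hne (by simpa using hβ_eq)
    · have hpos : 0 < ⟪β,v⟫/⟪δ,v⟫ := div_pos (h.sp_pos hβ) (h.sp_pos hδ)
      rw [ht] at hpos
      norm_num at hpos
  obtain ⟨u, hu⟩ := exists_not_orthogonal B hBne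
  obtain ⟨q, hqdeg, hqeval⟩ := QQ_line_poly j Sp X u
  set Bad : Finset ℝ := B.image (fun c => -⟪c,X⟫/⟪c,u⟫) with hBad
  have hroots : ∀ s : ℝ, s ∉ Bad → q.eval s = 0 := by
    intro s hs
    rw [← hqeval s]
    refine h.QQ_vanish_injOn hj (X + s • u) ?_
    intro β hβ δ hδ heq
    by_contra hne
    have hβ' : β ∈ Sp := Finset.mem_coe.mp hβ
    have hδ' : δ ∈ Sp := Finset.mem_coe.mp hδ
    have hβv : ⟪β,v⟫ ≠ 0 := ne_of_gt (h.sp_pos hβ')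
    have hδv : ⟪δ,v⟫ ≠ 0 := ne_of_gt (h.sp_pos hδ')
    simp only at heq
    rw [neg_div, neg_div, neg_inj, div_eq_div_iff hβv hδv] at heq
    have hcross : ⟪β, X + s • u⟫ * ⟪δ,v⟫ = ⟪δ, X + s • u⟫ * ⟪β,v⟫ := heq
    have hcB : (⟪δ,v⟫ • β - ⟪β,v⟫ • δ) ∈ B := by
      refine Finset.mem_image.mpr ⟨(β, δ), ?_, rfl⟩
      exact Finset.mem_filter.mpr ⟨Finset.mem_product.mpr ⟨hβ', hδ'⟩, hne⟩
    have hinner : ⟪⟪δ,v⟫ • β - ⟪β,v⟫ • δ, X + s • u⟫ = 0 := by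
      rw [inner_sub_left, real_inner_smul_left, real_inner_smul_left]
      linarith [hcross]
    have hcu : ⟪⟪δ,v⟫ • β - ⟪β,v⟫ • δ, u⟫ ≠ 0 := hu _ hcB
    apply hs
    refine Finset.mem_image.mpr ⟨_, hcB, ?_⟩
    rw [inner_add_right, real_inner_smul_right] at hinner
    rw [div_eq_iff hcu]
    linarith [hinner]
  have hq0 : q = 0 := by
    refine Polynomial.eq_zero_of_infinite_isRoot q ?_
    refine Set.Infinite.mono ?_ ((Bad : Set ℝ).toFinite.infinite_compl)
    intro s hs
    exact hroots s (by simpa using hs)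
  rw [show X = X + (0:ℝ) • u by simp, hqeval 0, hq0, Polynomial.eval_zero]

lemma Dop_radial {d : ℕ} (f : ℕ → ℝ → ℝ)
    (hf : ∀ (k : ℕ) (x : E d), x ≠ 0 →
      HasFDerivAt (fun y : E d => f k (‖y‖^2))
        ((2 * f (k+1) (‖x‖^2)) • (innerSL ℝ x : E d →L[ℝ] ℝ)) x) :
    ∀ (l : List (E d)), l.Nodup → ∀ x : E d, x ≠ 0 →
      Dop l (fun y => f 0 (‖y‖^2)) x
        = ∑ j ∈ Finset.range (l.length + 1),
            2^(l.length - j) * (f (l.length - j) (‖x‖^2) * QQ j l.toFinset x) := by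
  intro l
  induction l with
  | nil =>
    intro _ x hx
    show f 0 (‖x‖^2) = _
    simp [QQ_zero]
  | cons v l ih =>
    intro hnd x hx
    have hv : v ∉ l := (List.nodup_cons.mp hnd).1
    have hndl : l.Nodup := (List.nodup_cons.mp hnd).2
    set n := l.length with hn
    set S := l.toFinset with hS
    have hvS : v ∉ S := fun hmem => hv (List.mem_toFinset.mp hmem)
    have hcardS : S.card = n := List.toFinset_card_of_nodup hndl
    -- the radial expansion function
    set G : E d → ℝ := fun y => ∑ j ∈ Finset.range (n + 1),
      2^(n - j) * (f (n - j) (‖y‖^2) * QQ j S y) with hG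
    have hEq : Dop l (fun y => f 0 (‖y‖^2)) =ᶠ[nhds x] G := by
      refine Filter.eventuallyEq_of_mem (?_ : {y : E d | y ≠ 0} ∈ nhds x) ?_
      · exact IsOpen.mem_nhds isOpen_compl_singleton hx
      · intro y hy
        exact ih hndl y hy
    -- derivative of G
    have hGderiv : HasFDerivAt G
        (∑ j ∈ Finset.range (n + 1), (2^(n - j) : ℝ) •
          ((f (n - j) (‖x‖^2)) • (∑ c ∈ S, QQ j (S.erase c) x • (innerSL ℝ c : E d →L[ℝ] ℝ))
            + (QQ j S x) • ((2 * f (n - j + 1) (‖x‖^2)) • (innerSL ℝ x : E d →L[ℝ] ℝ)))) x := by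
      refine HasFDerivAt.fun_sum fun j _ => ?_
      exact ((hf (n - j) x hx).mul (QQ_hasFDerivAt j S x)).const_mul _
    have hfd : Dop (v :: l) (fun y => f 0 (‖y‖^2)) x
        = ∑ j ∈ Finset.range (n + 1), 2^(n - j) *
            (f (n - j) (‖x‖^2) * (∑ c ∈ S, QQ j (S.erase c) x * ⟪c,v⟫)
              + QQ j S x * (2 * f (n - j + 1) (‖x‖^2) * ⟪x,v⟫)) := by
      show fderiv ℝ (Dop l (fun y => f 0 (‖y‖^2))) x v = _
      rw [hEq.fderiv_eq, hGderiv.fderiv]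
      simp only [ContinuousLinearMap.coe_sum', Finset.sum_apply,
        ContinuousLinearMap.coe_smul', Pi.smul_apply, ContinuousLinearMap.add_apply,
        smul_eq_mul, innerSL_apply_apply]
    rw [hfd]
    have hlen : (v :: l).length = n + 1 := by simp [hn]
    have htf : (v :: l).toFinset = insert v S := by simp [hS]
    rw [hlen, htf]
    have hexp : ∀ j ∈ Finset.range (n + 1),
        2^(n + 1 - (j+1)) * (f (n + 1 - (j+1)) (‖x‖^2) * QQ (j+1) (insert v S) x)
        = 2^(n-j) * (f (n-j) (‖x‖^2) * (⟪v,x⟫ * QQ (j+1) S x))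
          + 2^(n-j) * (f (n-j) (‖x‖^2) * (∑ b ∈ S, ⟪v,b⟫ * QQ j (S.erase b) x)) := by
      intro j _
      rw [QQ_insert_succ j hvS x, Nat.succ_sub_succ]
      ring
    have hR : ∑ j ∈ Finset.range (n + 1 + 1),
          2^(n + 1 - j) * (f (n + 1 - j) (‖x‖^2) * QQ j (insert v S) x)
        = ∑ j ∈ Finset.range (n + 1),
            (2^(n-j) * (f (n-j) (‖x‖^2) * (∑ c ∈ S, QQ j (S.erase c) x * ⟪c,v⟫))
              + 2^(n-j) * (QQ j S x * (2 * f (n-j+1) (‖x‖^2) * ⟪x,v⟫))) := by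
      rw [Finset.sum_range_succ', Finset.sum_congr rfl hexp, Finset.sum_add_distrib]
      have hA : (∑ j ∈ Finset.range (n+1),
            2^(n-j) * (f (n-j) (‖x‖^2) * (⟪v,x⟫ * QQ (j+1) S x)))
            + 2^(n+1-0) * (f (n+1-0) (‖x‖^2) * QQ 0 (insert v S) x)
          = ∑ j ∈ Finset.range (n+1),
              2^(n-j) * (QQ j S x * (2 * f (n-j+1) (‖x‖^2) * ⟪x,v⟫)) := by
        rw [QQ_insert_zero hvS x]
        have e1 : ∑ j ∈ Finset.range (n+2),
              2^(n+1-j) * (f (n+1-j) (‖x‖^2) * (⟪v,x⟫ * QQ j S x))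
            = (∑ j ∈ Finset.range (n+1),
                2^(n-j) * (f (n-j) (‖x‖^2) * (⟪v,x⟫ * QQ (j+1) S x)))
              + 2^(n+1-0) * (f (n+1-0) (‖x‖^2) * (⟪v,x⟫ * QQ 0 S x)) := by
          rw [Finset.sum_range_succ']
          congr 1
          refine Finset.sum_congr rfl fun j _ => ?_
          rw [Nat.succ_sub_succ]
        rw [show 2^(n+1-0) * (f (n+1-0) (‖x‖^2) * (⟪v,x⟫ * QQ 0 S x))
            = 2^(n+1-0) * (f (n+1-0) (‖x‖^2) * (QQ 0 S x * ⟪v,x⟫)) by ring] at e1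
        rw [show 2^(n+1-0) * (f (n+1-0) (‖x‖^2) * (⟪v,x⟫ * QQ 0 S x))
            = 2^(n+1-0) * (f (n+1-0) (‖x‖^2) * (QQ 0 S x * ⟪v,x⟫)) by ring]
        rw [← e1, Finset.sum_range_succ,
          QQ_eq_zero_of_card_lt (n+1) S x (by omega)]
        have e2 : ∀ j ∈ Finset.range (n+1),
            2^(n+1-j) * (f (n+1-j) (‖x‖^2) * (⟪v,x⟫ * QQ j S x))
            = 2^(n-j) * (QQ j S x * (2 * f (n-j+1) (‖x‖^2) * ⟪x,v⟫)) := by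
          intro j hj
          have hjn : j ≤ n := by
            have := Finset.mem_range.mp hj; omega
          rw [show n + 1 - j = n - j + 1 by omega, real_inner_comm v x, pow_succ]
          ring
        rw [Finset.sum_congr rfl e2]
        ring
      have hB : ∑ j ∈ Finset.range (n+1),
            2^(n-j) * (f (n-j) (‖x‖^2) * (∑ b ∈ S, ⟪v,b⟫ * QQ j (S.erase b) x))
          = ∑ j ∈ Finset.range (n+1),
            2^(n-j) * (f (n-j) (‖x‖^2) * (∑ c ∈ S, QQ j (S.erase c) x * ⟪c,v⟫)) := by
        refine Finset.sum_congr rfl fun j _ => ?_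
        congr 2
        refine Finset.sum_congr rfl fun b _ => ?_
        rw [real_inner_comm v b]; ring
      rw [add_right_comm, hA, hB, ← Finset.sum_add_distrib]
      refine Finset.sum_congr rfl fun j _ => ?_
      ring
    rw [hR]
    refine Finset.sum_congr rfl fun j _ => ?_
    ring

lemma hasFDerivAt_normSq {d : ℕ} (x : E d) :
    HasFDerivAt (fun y : E d => ‖y‖^2) ((2:ℝ) • (innerSL ℝ x : E d →L[ℝ] ℝ)) x := by
  have h := (hasFDerivAt_id x).inner ℝ (hasFDerivAt_id x)
  have hfun : (fun y : E d => ‖y‖^2) = fun y : E d => ⟪y,y⟫ :=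
    funext fun y => (real_inner_self_eq_norm_sq y).symm
  rw [hfun]
  refine h.congr_fderiv ?_
  ext w
  simp only [ContinuousLinearMap.coe_smul', Pi.smul_apply, smul_eq_mul,
    ContinuousLinearMap.coe_comp', Function.comp_apply, ContinuousLinearMap.prod_apply,
    ContinuousLinearMap.coe_id', id_eq, fderivInnerCLM_apply, innerSL_apply_apply]
  rw [real_inner_comm w x]
  ring

lemma radial_chain {d : ℕ} {g : ℝ → ℝ} {g' : ℝ} {x : E d}
    (hg : HasDerivAt g g' (‖x‖^2)) :
    HasFDerivAt (fun y : E d => g (‖y‖^2)) ((2 * g') • (innerSL ℝ x : E d →L[ℝ] ℝ)) x := by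
  have h := hg.comp_hasFDerivAt x (hasFDerivAt_normSq x)
  refine h.congr_fderiv ?_
  rw [smul_smul]
  ring_nf

/-- the radial family for `|x|^{-d}`. -/
def fA (d : ℕ) (k : ℕ) (t : ℝ) : ℝ :=
  (∏ i ∈ Finset.range k, (-(d:ℝ)/2 - i)) * t ^ (-(d:ℝ)/2 - k)

lemma fA_deriv (d k : ℕ) (x : E d) (hx : x ≠ 0) :
    HasFDerivAt (fun y : E d => fA d k (‖y‖^2))
      ((2 * fA d (k+1) (‖x‖^2)) • (innerSL ℝ x : E d →L[ℝ] ℝ)) x := by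
  have hnx : (0:ℝ) < ‖x‖ := norm_pos_iff.mpr hx
  have ht : (0:ℝ) < ‖x‖^2 := by positivity
  have h1 : HasDerivAt (fun t : ℝ => t ^ (-(d:ℝ)/2 - k))
      ((-(d:ℝ)/2 - k) * (‖x‖^2) ^ (-(d:ℝ)/2 - (k:ℝ) - 1)) (‖x‖^2) :=
    Real.hasDerivAt_rpow_const (Or.inl (ne_of_gt ht))
  have h2 := h1.const_mul (∏ i ∈ Finset.range k, (-(d:ℝ)/2 - i))
  have hval : fA d (k+1) (‖x‖^2) = (∏ i ∈ Finset.range k, (-(d:ℝ)/2 - i)) *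
      ((-(d:ℝ)/2 - k) * (‖x‖^2) ^ (-(d:ℝ)/2 - (k:ℝ) - 1)) := by
    rw [fA, Finset.prod_range_succ,
      show -(d:ℝ)/2 - ((k:ℕ)+1:ℕ) = -(d:ℝ)/2 - (k:ℝ) - 1 by push_cast; ring]
    ring
  rw [show (fun y : E d => fA d k (‖y‖^2))
      = fun y : E d => (∏ i ∈ Finset.range k, (-(d:ℝ)/2 - i)) * (‖y‖^2) ^ (-(d:ℝ)/2 - k)
      from funext fun y => rfl, hval]
  exact radial_chain h2

/-- the radial family for `log |x|`. -/
def fB (k : ℕ) (t : ℝ) : ℝ :=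
  if k = 0 then Real.log t / 2
  else ((-1:ℝ)^(k-1) * (Nat.factorial (k-1) : ℝ) / 2) * t ^ (-(k:ℝ))

lemma fB_deriv (d : ℕ) (k : ℕ) (x : E d) (hx : x ≠ 0) :
    HasFDerivAt (fun y : E d => fB k (‖y‖^2))
      ((2 * fB (k+1) (‖x‖^2)) • (innerSL ℝ x : E d →L[ℝ] ℝ)) x := by
  have hnx : (0:ℝ) < ‖x‖ := norm_pos_iff.mpr hx
  have ht : (0:ℝ) < ‖x‖^2 := by positivity
  cases k with
  | zero =>
    have h1 : HasDerivAt (fun t : ℝ => Real.log t / 2) ((‖x‖^2)⁻¹ / 2) (‖x‖^2) :=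
      (Real.hasDerivAt_log (ne_of_gt ht)).div_const 2
    have hval : fB 1 (‖x‖^2) = (‖x‖^2)⁻¹ / 2 := by
      rw [fB]
      norm_num
      rw [show -(1:ℝ) = (-1 : ℤ) by norm_num, Real.rpow_intCast, zpow_neg_one]
      ring
    rw [show (fun y : E d => fB 0 (‖y‖^2)) = fun y : E d => Real.log (‖y‖^2) / 2
      from funext fun y => by rw [fB]; norm_num, hval]
    exact radial_chain h1
  | succ k =>
    have h1 : HasDerivAt (fun t : ℝ => t ^ (-((k:ℝ)+1)))
        ((-((k:ℝ)+1)) * (‖x‖^2) ^ (-((k:ℝ)+1) - 1)) (‖x‖^2) :=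
      Real.hasDerivAt_rpow_const (Or.inl (ne_of_gt ht))
    have h2 := h1.const_mul ((-1:ℝ)^(k+1-1) * (Nat.factorial (k+1-1) : ℝ) / 2)
    have hval : fB (k+2) (‖x‖^2) = ((-1:ℝ)^(k+1-1) * (Nat.factorial (k+1-1) : ℝ) / 2) *
        ((-((k:ℝ)+1)) * (‖x‖^2) ^ (-((k:ℝ)+1) - 1)) := by
      rw [fB]
      rw [if_neg (by omega)]
      have hfac : (Nat.factorial (k+2-1) : ℝ) = ((k:ℝ)+1) * (Nat.factorial (k+1-1) : ℝ) := by
        norm_num [Nat.factorial_succ]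
      have hexp : -((k+2:ℕ):ℝ) = -((k:ℝ)+1) - 1 := by push_cast; ring
      have hsgn : ((-1:ℝ))^(k+2-1) = -((-1:ℝ))^(k+1-1) := by
        norm_num [pow_succ]
      rw [hexp, hfac, hsgn]
      ring
    rw [show (fun y : E d => fB (k+1) (‖y‖^2))
        = fun y : E d => ((-1:ℝ)^(k+1-1) * (Nat.factorial (k+1-1) : ℝ) / 2)
            * (‖y‖^2) ^ (-((k:ℝ)+1)) from funext fun y => by
          rw [fB, if_neg (by omega)]
          norm_num, hval]
    exact radial_chain h2

lemma normsq_rpow {d : ℕ} (Y : E d) (p : ℝ) : ((‖Y‖^2 : ℝ)) ^ p = ‖Y‖ ^ (2 * p) := by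
  rw [← Real.rpow_natCast ‖Y‖ 2, ← Real.rpow_mul (norm_nonneg Y)]
  norm_num


/-- With `∂(π)` the composition (in any fixed order) of the directional
derivatives along the `γ` positive roots:
(a) `∂(π)(|·|^{-d})(X) = 2^γ (∏_{k<γ} (-d/2 - k)) π(X) |X|^{-d-2γ}` for `X ≠ 0`;
(b) if `γ ≥ 1`, `∂(π)(log |·|)(X) = (-2)^{γ-1} (γ-1)! π(X) |X|^{-2γ}` for `X ≠ 0`. -/
theorem stmt_3 (d : ℕ) (hd : 1 ≤ d) (Sig Sp : Finset (E d))
    (hroot : IsRootSystem Sig) (hpos : IsPositiveSystem Sig Sp)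
    (L : List (E d)) (hL : (L : Multiset (E d)) = Sp.val) :
    (∀ X : E d, X ≠ 0 →
      Dop L (fun Y => ‖Y‖ ^ (-(d : ℝ))) X =
        2 ^ Sp.card * (∏ k ∈ Finset.range Sp.card, (-(d : ℝ) / 2 - (k : ℝ))) *
          piP Sp X * ‖X‖ ^ (-(d : ℝ) - 2 * (Sp.card : ℝ))) ∧
    (1 ≤ Sp.card → ∀ X : E d, X ≠ 0 →
      Dop L (fun Y => Real.log ‖Y‖) X =
        (-2 : ℝ) ^ (Sp.card - 1) * (Nat.factorial (Sp.card - 1) : ℝ) *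
          piP Sp X * ‖X‖ ^ (-(2 * (Sp.card : ℝ)))) := by
  obtain ⟨v, hv1, hv2⟩ := hpos
  have hrs : RootSetup Sig Sp v := ⟨hroot.1, hroot.2.2.1, hroot.2.2.2, hv1, hv2⟩
  have hndL : L.Nodup := by
    have h := Sp.nodup
    rw [← hL] at h
    exact Multiset.coe_nodup.mp h
  have hLtf : L.toFinset = Sp := by
    ext y
    rw [List.mem_toFinset, ← Finset.mem_val, ← hL, Multiset.mem_coe]
  have hLlen : L.length = Sp.card := by
    have h : Multiset.card (↑L : Multiset (E d)) = Multiset.card Sp.val := by rw [hL]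
    simpa using h
  have hmain : ∀ (f : ℕ → ℝ → ℝ),
      (∀ (k : ℕ) (x : E d), x ≠ 0 →
        HasFDerivAt (fun y : E d => f k (‖y‖^2))
          ((2 * f (k+1) (‖x‖^2)) • (innerSL ℝ x : E d →L[ℝ] ℝ)) x) →
      ∀ X : E d, X ≠ 0 →
      Dop L (fun y => f 0 (‖y‖^2)) X = 2^Sp.card * (f Sp.card (‖X‖^2) * piP Sp X) := by
    intro f hf X hX
    rw [Dop_radial f hf L hndL X hX, hLlen, hLtf]
    rw [Finset.sum_eq_single_of_mem 0 (Finset.mem_range.mpr (by omega))]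
    · simp [QQ_zero, piP]
    · intro j _ hjne
      rw [hrs.QQ_vanish (Nat.one_le_iff_ne_zero.mpr hjne) X]
      ring
  constructor
  · intro X hX
    have hfun : (fun Y : E d => ‖Y‖ ^ (-(d:ℝ))) = fun Y : E d => fA d 0 (‖Y‖^2) := by
      funext Y
      rw [fA, Finset.prod_range_zero, one_mul, normsq_rpow]
      congr 1
      push_cast
      ring
    rw [hfun, hmain (fA d) (fun k x hx => fA_deriv d k x hx) X hX]
    rw [fA, normsq_rpow,
      show 2 * (-(d:ℝ)/2 - ((Sp.card:ℕ):ℝ)) = -(d:ℝ) - 2*((Sp.card:ℕ):ℝ) by push_cast; ring]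
    ring
  · intro hγ X hX
    have hfun : (fun Y : E d => Real.log ‖Y‖) = fun Y : E d => fB 0 (‖Y‖^2) := by
      funext Y
      rw [fB, if_pos rfl, Real.log_pow]
      push_cast
      ring
    rw [hfun, hmain fB (fun k x hx => fB_deriv d k x hx) X hX]
    rw [fB, if_neg (by omega), normsq_rpow,
      show 2 * (-((Sp.card:ℕ):ℝ)) = -(2 * ((Sp.card:ℕ):ℝ)) by ring]
    rw [show (2:ℝ)^Sp.card = 2^(Sp.card-1) * 2 by rw [← pow_succ]; congr 1; omega,
      show ((-2:ℝ))^(Sp.card-1) = (-1:ℝ)^(Sp.card-1) * (2:ℝ)^(Sp.card-1) by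
        rw [← neg_one_mul, mul_pow]]
    ring
end RootFacts
end
end

section
/- Let n ≥ 1 and let λ, y ∈ ℝⁿ have non-increasing coordinates: λ₁ ≥ λ₂ ≥ … ≥ λₙ and y₁ ≥ y₂ ≥ … ≥ yₙ. Suppose the block of λ₁ in λ has length j₀ ≥ 1 (λ_{j₀} = λ₁ and, if j₀ < n, λ_{j₀+1} < λ₁) and the block of y₁ in y has length i₀ ≥ 1 (y_{i₀} = y₁ and, if i₀ < n, y_{i₀+1} < y₁). Let w ∈ Sₙ (a permutation of {1,…,n}) be such that w(i) > i₀ for every i ≤ j₀ (i.e. min w⁻¹({1,…,i₀}) > j₀). Then ∑_{i=1}^n λᵢ y_{w(i)} < ∑_{i=1}^n λᵢ yᵢ. -/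
open scoped BigOperators

/-- the "max principle" for permutations. If `λ` and `y` have
non-increasing coordinates, the block of the maximal entry of `λ` has length `j₀` (positions
`< j₀`, zero-based, carry the value `λ 0` and positions `≥ j₀` carry strictly smaller values),
the block of the maximal entry of `y` has length `i₀`, and the permutation `w` sends every
position `< j₀` to a position `≥ i₀` (zero-based; i.e. `min w⁻¹({1,…,i₀}) > j₀`, one-based),
then `∑ i, λ i * y (w i) < ∑ i, λ i * y i`. -/
theorem stmt_11 (n : ℕ) (hn : 0 < n) (lam y : Fin n → ℝ)
    (hlam : Antitone lam) (hy : Antitone y)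
    (j₀ i₀ : ℕ) (hj₀1 : 1 ≤ j₀) (hj₀n : j₀ ≤ n) (hi₀1 : 1 ≤ i₀) (hi₀n : i₀ ≤ n)
    (hlamblock : ∀ i : Fin n, (i : ℕ) < j₀ → lam i = lam ⟨0, hn⟩)
    (hlamblock' : ∀ i : Fin n, j₀ ≤ (i : ℕ) → lam i < lam ⟨0, hn⟩)
    (hyblock : ∀ i : Fin n, (i : ℕ) < i₀ → y i = y ⟨0, hn⟩)
    (hyblock' : ∀ i : Fin n, i₀ ≤ (i : ℕ) → y i < y ⟨0, hn⟩)
    (w : Equiv.Perm (Fin n))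
    (hw : ∀ i : Fin n, (i : ℕ) < j₀ → i₀ ≤ ((w i : Fin n) : ℕ)) :
    ∑ i : Fin n, lam i * y (w i) < ∑ i : Fin n, lam i * y i := by
  have hmono : Monovary lam y := by
    intro i j hij
    by_contra h
    push_neg at h
    exact absurd (hy (le_of_lt (hlam.reflect_lt h))) (not_le_of_gt hij)
  rw [Monovary.sum_mul_comp_perm_lt_sum_mul_iff hmono]
  intro hmono'
  set z : Fin n := ⟨0, hn⟩ with hz
  set j : Fin n := w.symm z with hjdef
  have hwj : w j = z := w.apply_symm_apply z
  have hjge : j₀ ≤ (j : ℕ) := by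
    by_contra h
    push_neg at h
    have := hw j h
    rw [hwj] at this
    simp [hz] at this
    omega
  have h1 : y (w z) < y (w j) := by
    rw [hwj]
    exact hyblock' (w z) (hw z (by show 0 < j₀; omega))
  have h2 : lam z ≤ lam j := hmono' h1
  exact absurd h2 (not_le_of_gt (hlamblock' j hjge))
end

section
/- Let n ≥ 1 and let λ, y ∈ ℝⁿ have non-increasing coordinates: λ₁ ≥ … ≥ λₙ and y₁ ≥ … ≥ yₙ. Let Sₙ act on ℝⁿ by (σ·x)ᵢ = x_{σ⁻¹(i)}. Then for every σ ∈ Sₙ, the equality ∑_{i=1}^n λᵢ (σ·y)ᵢ = ∑_{i=1}^n λᵢ yᵢ holds if and only if there exist σ₁, σ₂ ∈ Sₙ with σ₁·λ = λ, σ₂·y = y and σ = σ₁σ₂ (product in Sₙ). That is, the Killing-max property holds for the root system Aₙ₋₁: ⟨λ, σ·y⟩ = ⟨λ, y⟩ iff σ ∈ W_λ · W_y, where W_x denotes the stabilizer of x in Sₙ. -/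
open scoped BigOperators

/-- If a tuple is antitone and stays antitone after permuting, permuting doesn't change it. -/
lemma antitone_comp_perm_eq {n : ℕ} {f : Fin n → ℝ} (hf : Antitone f)
    (π : Equiv.Perm (Fin n)) (h : Antitone (f ∘ π)) : f ∘ ⇑π = f := by
  have h1 : Monotone ((OrderDual.toDual ∘ f) ∘ ⇑π) := h.dual_right
  have h2 : Monotone ((OrderDual.toDual ∘ f) ∘ ⇑(1 : Equiv.Perm (Fin n))) := by
    simpa using hf.dual_right
  have key := Tuple.unique_monotone h1 h2
  funext i
  simpa using congrFun key i

/-- Killing-max property for the root system `A_{n-1}`. For `λ, y ∈ ℝⁿ`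
with non-increasing coordinates and the action `(σ·x) i = x (σ⁻¹ i)` of the symmetric group,
one has `⟨λ, σ·y⟩ = ⟨λ, y⟩` iff `σ = σ₁ σ₂` with `σ₁·λ = λ` and `σ₂·y = y`. -/
theorem stmt_12 (n : ℕ) (hn : 1 ≤ n) (lam y : Fin n → ℝ)
    (hlam : Antitone lam) (hy : Antitone y) (σ : Equiv.Perm (Fin n)) :
    (∑ i : Fin n, lam i * y (σ⁻¹ i)) = (∑ i : Fin n, lam i * y i) ↔
      ∃ σ₁ σ₂ : Equiv.Perm (Fin n),
        (fun i => lam (σ₁⁻¹ i)) = lam ∧ (fun i => y (σ₂⁻¹ i)) = y ∧ σ = σ₁ * σ₂ := by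
  have hMy : Monovary lam y := by
    intro i j hij
    rcases le_total i j with h | h
    · exact absurd (hy h) (not_le.mpr hij)
    · exact hlam h
  constructor
  · intro hsum
    set g : Fin n → ℝ := fun i => y (σ⁻¹ i) with hg
    have hmono : Monovary lam (y ∘ ⇑σ⁻¹) :=
      (hMy.sum_mul_comp_perm_eq_sum_mul_iff (σ := σ⁻¹)).mp hsum
    -- sort by lexicographic key (lam descending, g descending)
    set key : Fin n → ℝᵒᵈ ×ₗ ℝᵒᵈ :=
      fun i => toLex (OrderDual.toDual (lam i), OrderDual.toDual (g i)) with hkey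
    set τ : Equiv.Perm (Fin n) := Tuple.sort key with hτ
    have hk : Monotone (key ∘ τ) := Tuple.monotone_sort key
    have hcase : ∀ {i j : Fin n}, i ≤ j →
        lam (τ j) < lam (τ i) ∨ (lam (τ i) = lam (τ j) ∧ g (τ j) ≤ g (τ i)) := by
      intro i j hij
      have := hk hij
      simp only [hkey, Function.comp_apply] at this
      rw [Prod.Lex.le_iff] at this
      rcases this with h | ⟨h1, h2⟩
      · exact Or.inl h
      · exact Or.inr ⟨OrderDual.toDual.injective h1, h2⟩
    have hlamτ : Antitone (lam ∘ ⇑τ) := by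
      intro i j hij
      rcases hcase hij with h | ⟨h1, _⟩
      · exact h.le
      · exact h1.ge
    have hgτ : Antitone (g ∘ ⇑τ) := by
      intro i j hij
      rcases hcase hij with h | ⟨_, h2⟩
      · by_contra hc
        push_neg at hc
        exact absurd (hmono hc) (not_le.mpr h)
      · exact h2
    have hlam_eq : lam ∘ ⇑τ = lam := antitone_comp_perm_eq hlam τ hlamτ
    have hgτ' : Antitone (y ∘ ⇑(σ⁻¹ * τ)) := by
      convert hgτ using 1
      rfl
    have hy_eq : y ∘ ⇑(σ⁻¹ * τ) = y := antitone_comp_perm_eq hy _ hgτ'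
    refine ⟨τ, τ⁻¹ * σ, ?_, ?_, by group⟩
    · funext i
      have := congrFun hlam_eq (τ⁻¹ i)
      simpa using this.symm
    · funext i
      have : (τ⁻¹ * σ)⁻¹ = σ⁻¹ * τ := by group
      rw [this]
      exact congrFun hy_eq i
  · rintro ⟨σ₁, σ₂, h1, h2, rfl⟩
    have step : ∀ i, y ((σ₁ * σ₂)⁻¹ i) = y (σ₁⁻¹ i) := by
      intro i
      have : (σ₁ * σ₂)⁻¹ i = σ₂⁻¹ (σ₁⁻¹ i) := by simp [Equiv.Perm.mul_apply]
      rw [this]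
      exact congrFun h2 (σ₁⁻¹ i)
    calc (∑ i : Fin n, lam i * y ((σ₁ * σ₂)⁻¹ i))
        = ∑ i : Fin n, lam (σ₁⁻¹ i) * y (σ₁⁻¹ i) := by
          refine Finset.sum_congr rfl fun i _ => ?_
          rw [step i, congrFun h1 i]
      _ = ∑ i : Fin n, lam i * y i := Equiv.sum_comp σ₁⁻¹ (fun j => lam j * y j)
end

section
/- Let n ≥ 2 and let G_D ≤ O(ℝⁿ) be the group of even signed permutations: maps g of the form (g x)ᵢ = εᵢ x_{σ⁻¹(i)} with σ ∈ Sₙ, ε ∈ {−1,1}ⁿ and ∏_{i=1}^n εᵢ = 1. Let λ, y ∈ ℝⁿ lie in the closed Weyl chamber of type Dₙ: λ₁ ≥ λ₂ ≥ … ≥ λ_{n−1} ≥ |λₙ| and y₁ ≥ y₂ ≥ … ≥ y_{n−1} ≥ |yₙ|. Suppose λ is not a scalar multiple of (1, 1, …, 1, −1), and suppose the block of λ₁ has length j₀ with 1 ≤ j₀ < n (λ_{j₀} = λ₁ and λ_{j₀+1} < λ₁). Let g ∈ G_D be such that (g y)_k ≠ y₁ for every k ≤ j₀ (i.e. either y₁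 does not occur as an entry of g y, or its first occurrence is at a position > j₀). Then ⟨λ, g y⟩ < ⟨λ, y⟩. -/
open scoped BigOperators

open Finset in
lemma aux_sorted (n : ℕ) (W : ℕ → ℝ) (hW : ∀ i j : ℕ, i ≤ j → j < n → W j ≤ W i) :
    ∀ (m : ℕ) (T : Finset ℕ), T ⊆ Finset.range n → T.card = m →
      ∑ t ∈ T, W t ≤ ∑ k ∈ Finset.range m, W k := by
  intro m
  induction m with
  | zero => intro T hT hcard; simp [Finset.card_eq_zero.mp hcard]
  | succ m ih =>
    intro T hT hcard
    have hne : T.Nonempty := Finset.card_pos.mp (by omega)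
    have htT : T.max' hne ∈ T := T.max'_mem hne
    set t := T.max' hne with ht
    have htn : t < n := Finset.mem_range.mp (hT htT)
    have hmt : m ≤ t := by
      have hsub : T ⊆ Finset.range (t + 1) := by
        intro x hx
        exact Finset.mem_range.mpr (Nat.lt_succ_of_le (T.le_max' x hx))
      have := Finset.card_le_card hsub
      rw [Finset.card_range] at this; omega
    have hWt : W t ≤ W m := hW m t hmt htn
    have hrec := ih (T.erase t) (fun x hx => hT (Finset.mem_of_mem_erase hx))
      (by rw [Finset.card_erase_of_mem htT, hcard]; omega)
    rw [← Finset.sum_erase_add T W htT, Finset.sum_range_succ]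
    linarith

lemma aux_parity (l : ℕ) (Y : ℕ → ℝ) (hY : ∀ t, t < l → |Y l| ≤ Y t)
    (G : Finset ℕ) (hG : G ⊆ Finset.range (l + 1)) :
    (Even G.card → 0 ≤ ∑ t ∈ G, Y t) ∧ (Odd G.card → Y l ≤ ∑ t ∈ G, Y t) := by
  have hnonneg : ∀ t ∈ G, t ≠ l → 0 ≤ Y t := by
    intro t ht htne
    have : t < l + 1 := Finset.mem_range.mp (hG ht)
    exact le_trans (abs_nonneg _) (hY t (by omega))
  by_cases hlast : l ∈ G
  · have herase : ∀ t ∈ G.erase l, 0 ≤ Y t := fun t ht =>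
      hnonneg t (Finset.mem_of_mem_erase ht) (Finset.ne_of_mem_erase ht)
    have hsum : ∑ t ∈ G.erase l, Y t + Y l = ∑ t ∈ G, Y t :=
      Finset.sum_erase_add G Y hlast
    constructor
    · intro heven
      have h1 : 1 ≤ G.card := Finset.card_pos.mpr ⟨_, hlast⟩
      have h2 : 2 ≤ G.card := by
        rcases heven with ⟨k, hk⟩; omega
      have hne : (G.erase l).Nonempty := by
        rw [← Finset.card_pos, Finset.card_erase_of_mem hlast]; omega
      obtain ⟨t1, ht1⟩ := hne
      have ht1G := Finset.mem_of_mem_erase ht1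
      have htn : t1 < l + 1 := Finset.mem_range.mp (hG ht1G)
      have h3 : |Y l| ≤ Y t1 := hY t1 (by have := Finset.ne_of_mem_erase ht1; omega)
      have h4 : Y t1 ≤ ∑ t ∈ G.erase l, Y t := Finset.single_le_sum herase ht1
      have h5 := neg_abs_le (Y l)
      linarith
    · intro _
      have : 0 ≤ ∑ t ∈ G.erase l, Y t := Finset.sum_nonneg herase
      linarith
  · have hall : ∀ t ∈ G, 0 ≤ Y t := fun t ht => hnonneg t ht (fun h => hlast (h ▸ ht))
    constructor
    · intro _; exact Finset.sum_nonneg hall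
    · intro hodd
      have hne : G.Nonempty := Finset.card_pos.mp (by rcases hodd with ⟨k, hk⟩; omega)
      obtain ⟨t1, ht1⟩ := hne
      have htn : t1 < l + 1 := Finset.mem_range.mp (hG ht1)
      have h3 : |Y l| ≤ Y t1 := hY t1 (by have : t1 ≠ l := fun h => hlast (h ▸ ht1); omega)
      have h4 : Y t1 ≤ ∑ t ∈ G, Y t := Finset.single_le_sum hall ht1
      have h5 := le_abs_self (Y l)
      linarith

lemma aux_abel (L X : ℕ → ℝ) : ∀ m : ℕ,
    ∑ k ∈ Finset.range (m + 1), L k * X k =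
      (∑ i ∈ Finset.range m, (L i - L (i + 1)) * (∑ j ∈ Finset.range (i + 1), X j))
      + L m * ∑ j ∈ Finset.range (m + 1), X j := by
  intro m
  induction m with
  | zero => simp
  | succ m ih =>
    rw [Finset.sum_range_succ (fun k => L k * X k), ih,
      Finset.sum_range_succ (fun i => (L i - L (i + 1)) * (∑ j ∈ Finset.range (i + 1), X j)),
      Finset.sum_range_succ X (m + 1)]
    ring

/-- The group of even signed permutations of `ℝⁿ` (the Weyl group of type `Dₙ`): maps
`x ↦ (ε i * x (σ⁻¹ i)) i` with `σ` a permutation, each `ε i ∈ {−1, 1}` and `∏ i, ε i = 1`. -/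
def EvenSignedPerm (n : ℕ) : Set ((Fin n → ℝ) → Fin n → ℝ) :=
  {g | ∃ (σ : Equiv.Perm (Fin n)) (ε : Fin n → ℝ),
    (∀ i, ε i = 1 ∨ ε i = -1) ∧ (∏ i : Fin n, ε i) = 1 ∧
    ∀ (x : Fin n → ℝ) (i : Fin n), g x i = ε i * x (σ⁻¹ i)}

/-- the "max principle" for `W(Dₙ)`. Let `λ, y` lie in the closed Weyl
chamber of type `Dₙ` (`λ₁ ≥ … ≥ λ_{n-1} ≥ |λₙ|`), with `λ` not a multiple of
`(1,…,1,−1)` and the block of `λ₁` of length `j₀ < n`. If `g` is an even signed permutation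
such that `(g y) k ≠ y₁` for every position `k < j₀` (zero-based), then
`⟨λ, g y⟩ < ⟨λ, y⟩`. -/
theorem stmt_14 (n : ℕ) (hn : 2 ≤ n) (lam y : Fin n → ℝ)
    (hlamchain : ∀ i j : Fin n, i ≤ j → (j : ℕ) < n - 1 → lam j ≤ lam i)
    (hlamlast : ∀ i : Fin n, (i : ℕ) < n - 1 → |lam ⟨n - 1, by omega⟩| ≤ lam i)
    (hychain : ∀ i j : Fin n, i ≤ j → (j : ℕ) < n - 1 → y j ≤ y i)
    (hylast : ∀ i : Fin n, (i : ℕ) < n - 1 → |y ⟨n - 1, by omega⟩| ≤ y i)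
    (hlamnotmult : ¬ ∃ c : ℝ, lam = fun i : Fin n => if (i : ℕ) = n - 1 then -c else c)
    (j₀ : ℕ) (hj₀1 : 1 ≤ j₀) (hj₀n : j₀ < n)
    (hblock : ∀ i : Fin n, (i : ℕ) < j₀ → lam i = lam ⟨0, by omega⟩)
    (hblock' : ∀ i : Fin n, j₀ ≤ (i : ℕ) → lam i < lam ⟨0, by omega⟩)
    (g : (Fin n → ℝ) → Fin n → ℝ) (hg : g ∈ EvenSignedPerm n)
    (hgy : ∀ k : Fin n, (k : ℕ) < j₀ → g y k ≠ y ⟨0, by omega⟩) :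
    (∑ i : Fin n, lam i * g y i) < ∑ i : Fin n, lam i * y i := by
  obtain ⟨σ, ε, hε, hprodε, hgval⟩ := hg
  obtain ⟨m0, rfl⟩ : ∃ m0, n = m0 + 2 := ⟨n - 2, by omega⟩
  set π : Equiv.Perm (Fin (m0 + 2)) := σ⁻¹ with hπdef
  set L : ℕ → ℝ := fun k => if h : k < (m0 + 2) then lam ⟨k, h⟩ else 0 with hLdef
  set Y : ℕ → ℝ := fun k => if h : k < (m0 + 2) then y ⟨k, h⟩ else 0 with hYdef
  set E : ℕ → ℝ := fun k => if h : k < (m0 + 2) then ε ⟨k, h⟩ else 1 with hEdef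
  set P : ℕ → ℕ := fun k => if h : k < (m0 + 2) then ((π ⟨k, h⟩ : Fin (m0 + 2)) : ℕ) else k with hPdef
  set W : ℕ → ℝ := fun k => |Y k| with hWdef
  set Z : ℕ → ℝ := fun k => E k * Y (P k) with hZdef
  have hLval : ∀ (k : ℕ) (h : k < (m0 + 2)), L k = lam ⟨k, h⟩ := fun k h => dif_pos h
  have hYval : ∀ (k : ℕ) (h : k < (m0 + 2)), Y k = y ⟨k, h⟩ := fun k h => dif_pos h
  have hEval : ∀ (k : ℕ) (h : k < (m0 + 2)), E k = ε ⟨k, h⟩ := fun k h => dif_pos h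
  have hPval : ∀ (k : ℕ) (h : k < (m0 + 2)), P k = ((π ⟨k, h⟩ : Fin (m0 + 2)) : ℕ) := fun k h => dif_pos h
  have hPlt : ∀ k, k < (m0 + 2) → P k < (m0 + 2) := by
    intro k hk; rw [hPval k hk]; exact (π ⟨k, hk⟩).isLt
  have hZval : ∀ (k : ℕ) (h : k < (m0 + 2)), Z k = g y ⟨k, h⟩ := by
    intro k h
    rw [hgval y ⟨k, h⟩, hZdef]
    simp only
    rw [hEval k h, hPval k h, hYval _ (π ⟨k, h⟩).isLt]
  -- chamber facts in ℕ world
  have hone : m0 + 2 - 1 = m0 + 1 := rfl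
  simp only [hone] at hlamlast hylast hlamnotmult hlamchain hychain
  have hYchain : ∀ i j : ℕ, i ≤ j → j < m0 + 1 → Y j ≤ Y i := by
    intro i j hij hj
    rw [hYval j (by omega), hYval i (by omega)]
    exact hychain ⟨i, by omega⟩ ⟨j, by omega⟩ (Fin.mk_le_mk.mpr hij) hj
  have hYlast : ∀ i : ℕ, i < m0 + 1 → |Y (m0 + 1)| ≤ Y i := by
    intro i hi
    rw [hYval (m0 + 1) (by omega), hYval i (by omega)]
    exact hylast ⟨i, by omega⟩ hi
  have hLchain : ∀ i j : ℕ, i ≤ j → j < m0 + 1 → L j ≤ L i := by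
    intro i j hij hj
    rw [hLval j (by omega), hLval i (by omega)]
    exact hlamchain ⟨i, by omega⟩ ⟨j, by omega⟩ (Fin.mk_le_mk.mpr hij) hj
  have hLlast : ∀ i : ℕ, i < m0 + 1 → |L (m0 + 1)| ≤ L i := by
    intro i hi
    rw [hLval (m0 + 1) (by omega), hLval i (by omega)]
    exact hlamlast ⟨i, by omega⟩ hi
  have hYpos : ∀ k, k < m0 + 1 → 0 ≤ Y k := fun k hk =>
    le_trans (abs_nonneg _) (hYlast k hk)
  have hWeqY : ∀ k, k < m0 + 1 → W k = Y k := fun k hk => abs_of_nonneg (hYpos k hk)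
  have hWanti : ∀ i j : ℕ, i ≤ j → j < m0 + 2 → W j ≤ W i := by
    intro i j hij hj
    rcases Nat.lt_or_ge j (m0 + 1) with h | h
    · rw [hWeqY j h, hWeqY i (by omega)]; exact hYchain i j hij h
    · have hj1 : j = m0 + 1 := by omega
      rcases Nat.lt_or_ge i (m0 + 1) with h2 | h2
      · rw [hj1, hWeqY i h2]; exact hYlast i h2
      · have : i = j := by omega
        rw [this]
    -- done
  have hEpm : ∀ k : ℕ, E k = 1 ∨ E k = -1 := by
    intro k
    by_cases h : k < m0 + 2
    · rw [hEval k h]; exact hε ⟨k, h⟩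
    · left; rw [hEdef]; simp [h]
  have hZleW : ∀ k, k < m0 + 2 → Z k ≤ W (P k) := by
    intro k hk
    have h1 : Z k = E k * Y (P k) := rfl
    have h2 : W (P k) = |Y (P k)| := rfl
    rcases hEpm k with h | h <;> rw [h1, h2, h]
    · rw [one_mul]; exact le_abs_self _
    · rw [neg_one_mul]; exact neg_le_abs _
  have hPinj : ∀ k1 k2 : ℕ, k1 < m0 + 2 → k2 < m0 + 2 → P k1 = P k2 → k1 = k2 := by
    intro k1 k2 h1 h2 h
    rw [hPval k1 h1, hPval k2 h2] at h
    have := π.injective (Fin.val_injective h)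
    exact congrArg Fin.val (by exact_mod_cast this)
  have hsumP : ∀ f : ℕ → ℝ, ∑ k ∈ Finset.range (m0 + 2), f (P k) = ∑ k ∈ Finset.range (m0 + 2), f k := by
    intro f
    rw [← Fin.sum_univ_eq_sum_range (fun k => f (P k)) (m0 + 2), ← Fin.sum_univ_eq_sum_range f (m0 + 2)]
    rw [← Equiv.sum_comp π (fun i : Fin (m0 + 2) => f i.val)]
    apply Finset.sum_congr rfl
    intro i _
    have : P i.val = (π i).val := by rw [hPval i.val i.isLt]
    rw [this]
  have himg_sub : ∀ mm : ℕ, mm ≤ m0 + 2 → (Finset.range mm).image P ⊆ Finset.range (m0 + 2) := by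
    intro mm hmm t ht
    obtain ⟨k, hk, rfl⟩ := Finset.mem_image.mp ht
    exact Finset.mem_range.mpr (hPlt k (by have := Finset.mem_range.mp hk; omega))
  have himg_card : ∀ mm : ℕ, mm ≤ m0 + 2 → ((Finset.range mm).image P).card = mm := by
    intro mm hmm
    rw [Finset.card_image_of_injOn, Finset.card_range]
    intro a ha b hb h
    exact hPinj a b (by have := Finset.mem_range.mp ha; omega)
      (by have := Finset.mem_range.mp hb; omega) h
  have himg_sum : ∀ mm : ℕ, mm ≤ m0 + 2 → ∑ k ∈ Finset.range mm, W (P k) = ∑ t ∈ (Finset.range mm).image P, W t := by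
    intro mm hmm
    exact (Finset.sum_image (fun a ha b hb h => hPinj a b
      (by have := Finset.mem_range.mp ha; omega)
      (by have := Finset.mem_range.mp hb; omega) h)).symm
  have hAweak : ∀ mm : ℕ, mm ≤ m0 + 1 → ∑ k ∈ Finset.range mm, Z k ≤ ∑ k ∈ Finset.range mm, Y k := by
    intro mm hmm
    have h1 : ∑ k ∈ Finset.range mm, Z k ≤ ∑ k ∈ Finset.range mm, W (P k) :=
      Finset.sum_le_sum (fun k hk => hZleW k (by have := Finset.mem_range.mp hk; omega))
    have h2 := himg_sum mm (by omega)
    have h5 := aux_sorted (m0 + 2) W hWanti mm _ (himg_sub mm (by omega)) (himg_card mm (by omega))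
    have h6 : ∑ k ∈ Finset.range mm, W k = ∑ k ∈ Finset.range mm, Y k :=
      Finset.sum_congr rfl (fun k hk => hWeqY k (by have := Finset.mem_range.mp hk; omega))
    linarith
  have hj₀N : j₀ ≤ m0 + 1 := by omega
  have hZltY0 : ∀ k, k < j₀ → Z k < Y 0 := by
    intro k hk
    have hkn : k < m0 + 2 := by omega
    have hW0 : W 0 = Y 0 := hWeqY 0 (by omega)
    have hle : Z k ≤ Y 0 := by
      have h1 := hZleW k hkn
      have h2 : W (P k) ≤ W 0 := hWanti 0 (P k) (Nat.zero_le _) (hPlt k hkn)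
      linarith
    have hne : Z k ≠ Y 0 := by
      rw [hZval k hkn, hYval 0 (by omega)]
      exact hgy ⟨k, hkn⟩ hk
    exact lt_of_le_of_ne hle hne
  have hAstrict : ∑ k ∈ Finset.range j₀, Z k < ∑ k ∈ Finset.range j₀, Y k := by
    have hW0 : W 0 = Y 0 := hWeqY 0 (by omega)
    have hTsub := himg_sub j₀ (by omega)
    have hTcard := himg_card j₀ (by omega)
    have hsumT := himg_sum j₀ (by omega)
    have hTle := aux_sorted (m0 + 2) W hWanti j₀ _ hTsub hTcard
    have hYW : ∑ k ∈ Finset.range j₀, W k = ∑ k ∈ Finset.range j₀, Y k :=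
      Finset.sum_congr rfl (fun k hk => hWeqY k (by have := Finset.mem_range.mp hk; omega))
    by_cases h0 : 0 ∈ (Finset.range j₀).image P
    · obtain ⟨i0, hi0mem, hi0⟩ := Finset.mem_image.mp h0
      have hlt : ∑ k ∈ Finset.range j₀, Z k < ∑ k ∈ Finset.range j₀, W (P k) := by
        apply Finset.sum_lt_sum
        · intro k hk
          exact hZleW k (by have := Finset.mem_range.mp hk; omega)
        · refine ⟨i0, hi0mem, ?_⟩
          rw [hi0, hW0]
          exact hZltY0 i0 (Finset.mem_range.mp hi0mem)
      linarith
    · have hTne : ((Finset.range j₀).image P).Nonempty :=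
        ⟨P 0, Finset.mem_image_of_mem P (Finset.mem_range.mpr (by omega))⟩
      have htT : ((Finset.range j₀).image P).max' hTne ∈ (Finset.range j₀).image P :=
        Finset.max'_mem _ hTne
      set t := ((Finset.range j₀).image P).max' hTne with htdef
      have htn : t < m0 + 2 := Finset.mem_range.mp (hTsub htT)
      have hjt : j₀ ≤ t := by
        have hsub : (Finset.range j₀).image P ⊆ Finset.Icc 1 t := by
          intro x hx
          refine Finset.mem_Icc.mpr ⟨?_, Finset.le_max' _ x hx⟩
          rcases Nat.eq_zero_or_pos x with h | h
          · exact absurd (h ▸ hx) h0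
          · exact h
        have hcc := Finset.card_le_card hsub
        rw [hTcard, Nat.card_Icc] at hcc; omega
      obtain ⟨i1, hi1mem, hi1⟩ := Finset.mem_image.mp htT
      have hi1r := Finset.mem_range.mp hi1mem
      have hsplit : ∑ k ∈ (Finset.range j₀).erase i1, Z k + Z i1 = ∑ k ∈ Finset.range j₀, Z k :=
        Finset.sum_erase_add _ _ hi1mem
      have hsplitW : ∑ k ∈ (Finset.range j₀).erase i1, W (P k) + W (P i1) = ∑ k ∈ Finset.range j₀, W (P k) :=
        Finset.sum_erase_add _ _ hi1mem
      have hle1 : ∑ k ∈ (Finset.range j₀).erase i1, Z k ≤ ∑ k ∈ (Finset.range j₀).erase i1, W (P k) :=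
        Finset.sum_le_sum (fun k hk => hZleW k
          (by have := Finset.mem_range.mp (Finset.mem_of_mem_erase hk); omega))
      have h0e : 0 ∉ ((Finset.range j₀).image P).erase t := fun h => h0 (Finset.mem_of_mem_erase h)
      have hins : ∑ t' ∈ insert 0 (((Finset.range j₀).image P).erase t), W t'
          ≤ ∑ k ∈ Finset.range j₀, W k := by
        apply aux_sorted (m0 + 2) W hWanti j₀
        · intro x hx
          rcases Finset.mem_insert.mp hx with rfl | hx
          · exact Finset.mem_range.mpr (by omega)
          · exact hTsub (Finset.mem_of_mem_erase hx)
        · rw [Finset.card_insert_of_notMem h0e, Finset.card_erase_of_mem htT, hTcard]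
          omega
      have hinseq : ∑ t' ∈ insert 0 (((Finset.range j₀).image P).erase t), W t'
          = W 0 + ∑ t' ∈ ((Finset.range j₀).image P).erase t, W t' := Finset.sum_insert h0e
      have heraseW : ∑ t' ∈ ((Finset.range j₀).image P).erase t, W t' + W t
          = ∑ t' ∈ (Finset.range j₀).image P, W t' := Finset.sum_erase_add _ _ htT
      have hZi1 : Z i1 < Y 0 := hZltY0 i1 hi1r
      have hPi1 : W (P i1) = W t := by rw [hi1]
      linarith
  have hflip : ∀ e : ℕ → ℝ, (∀ k, k < m0 + 2 → (e k = 1 ∨ e k = -1)) →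
      ∃ G : Finset ℕ, G ⊆ Finset.range (m0 + 2) ∧
        ((-1 : ℝ)) ^ G.card = (∏ k ∈ Finset.range (m0 + 2), e k) ∧
        ∑ k ∈ Finset.range (m0 + 2), e k * Y (P k)
          = (∑ k ∈ Finset.range (m0 + 2), Y k) - 2 * ∑ t ∈ G, Y t := by
    intro e he
    classical
    refine ⟨((Finset.range (m0 + 2)).filter (fun k => e k = -1)).image P, ?_, ?_, ?_⟩
    · intro t ht
      obtain ⟨k, hk, rfl⟩ := Finset.mem_image.mp ht
      have : k < m0 + 2 := Finset.mem_range.mp (Finset.mem_filter.mp hk).1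
      exact Finset.mem_range.mpr (hPlt k this)
    · have hcard : (((Finset.range (m0 + 2)).filter (fun k => e k = -1)).image P).card
          = ((Finset.range (m0 + 2)).filter (fun k => e k = -1)).card :=
        Finset.card_image_of_injOn (fun a ha b hb h => hPinj a b
          (Finset.mem_range.mp (Finset.mem_filter.mp ha).1)
          (Finset.mem_range.mp (Finset.mem_filter.mp hb).1) h)
      have h1 : ∏ k ∈ (Finset.range (m0 + 2)).filter (fun k => e k = -1), e k
          = (-1 : ℝ) ^ ((Finset.range (m0 + 2)).filter (fun k => e k = -1)).card := by
        rw [Finset.prod_congr rfl (fun k hk => (Finset.mem_filter.mp hk).2), Finset.prod_const]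
      have h2 : ∏ k ∈ (Finset.range (m0 + 2)).filter (fun k => ¬ e k = -1), e k = 1 := by
        apply Finset.prod_eq_one
        intro k hk
        obtain ⟨hk1, hk2⟩ := Finset.mem_filter.mp hk
        rcases he k (Finset.mem_range.mp hk1) with h | h
        · exact h
        · exact absurd h hk2
      rw [hcard, ← Finset.prod_filter_mul_prod_filter_not (Finset.range (m0 + 2)) (fun k => e k = -1) e,
        h1, h2, mul_one]
    · have s1 : ∑ t ∈ ((Finset.range (m0 + 2)).filter (fun k => e k = -1)).image P, Y t
          = ∑ k ∈ (Finset.range (m0 + 2)).filter (fun k => e k = -1), Y (P k) :=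
        Finset.sum_image (fun a ha b hb h => hPinj a b
          (Finset.mem_range.mp (Finset.mem_filter.mp ha).1)
          (Finset.mem_range.mp (Finset.mem_filter.mp hb).1) h)
      have s2 : ∑ k ∈ (Finset.range (m0 + 2)).filter (fun k => e k = -1), Y (P k)
          = ∑ k ∈ Finset.range (m0 + 2), if e k = -1 then Y (P k) else 0 :=
        Finset.sum_filter _ _
      have s3 : ∀ k ∈ Finset.range (m0 + 2),
          e k * Y (P k) = Y (P k) - 2 * (if e k = -1 then Y (P k) else 0) := by
        intro k hk
        rcases he k (Finset.mem_range.mp hk) with h | h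
        · rw [h, if_neg (by norm_num)]; ring
        · rw [h, if_pos rfl]; ring
      rw [Finset.sum_congr rfl s3, Finset.sum_sub_distrib, ← Finset.mul_sum, hsumP Y, ← s2, ← s1]
  have hlastY : ∑ k ∈ Finset.range (m0 + 2), Y k = ∑ k ∈ Finset.range (m0 + 1), Y k + Y (m0 + 1) :=
    Finset.sum_range_succ Y (m0 + 1)
  have hlastZ : ∑ k ∈ Finset.range (m0 + 2), Z k = ∑ k ∈ Finset.range (m0 + 1), Z k + Z (m0 + 1) :=
    Finset.sum_range_succ Z (m0 + 1)
  have hBfull : ∑ k ∈ Finset.range (m0 + 2), Z k ≤ ∑ k ∈ Finset.range (m0 + 2), Y k := by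
    obtain ⟨G, hG1, hG2, hG3⟩ := hflip E (fun k _ => hEpm k)
    have hEprod : ∏ k ∈ Finset.range (m0 + 2), E k = 1 := by
      rw [← Fin.prod_univ_eq_prod_range E (m0 + 2), ← hprodε]
      exact Finset.prod_congr rfl (fun i _ => by rw [hEval i.val i.isLt])
    have heven : Even G.card := by
      rw [hEprod] at hG2
      exact (neg_one_pow_eq_one_iff_even (by norm_num : (-1 : ℝ) ≠ 1)).mp hG2
    have hGish := (aux_parity (m0 + 1) Y hYlast G hG1).1 heven
    have hZG : ∑ k ∈ Finset.range (m0 + 2), Z k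
        = (∑ k ∈ Finset.range (m0 + 2), Y k) - 2 * ∑ t ∈ G, Y t := hG3
    linarith
  have hCfull : (∑ k ∈ Finset.range (m0 + 2), Z k) - 2 * Z (m0 + 1)
      ≤ (∑ k ∈ Finset.range (m0 + 2), Y k) - 2 * Y (m0 + 1) := by
    classical
    set E' : ℕ → ℝ := fun k => if k = m0 + 1 then -E k else E k with hE'def
    have hE'pm : ∀ k, k < m0 + 2 → (E' k = 1 ∨ E' k = -1) := by
      intro k _
      rw [hE'def]
      by_cases hk : k = m0 + 1
      · subst hk
        rcases hEpm (m0 + 1) with h | h <;> simp [h]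
      · simp only [if_neg hk]
        exact hEpm k
    obtain ⟨G, hG1, hG2, hG3⟩ := hflip E' hE'pm
    have hEprod : ∏ k ∈ Finset.range (m0 + 2), E k = 1 := by
      rw [← Fin.prod_univ_eq_prod_range E (m0 + 2), ← hprodε]
      exact Finset.prod_congr rfl (fun i _ => by rw [hEval i.val i.isLt])
    have hE'prod : ∏ k ∈ Finset.range (m0 + 2), E' k = -1 := by
      rw [Finset.prod_range_succ E' (m0 + 1),
        Finset.prod_congr rfl (fun k hk => show E' k = E k by
          rw [hE'def]; simp [Nat.ne_of_lt (Finset.mem_range.mp hk)])]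
      have : E' (m0 + 1) = -E (m0 + 1) := by rw [hE'def]; simp
      rw [this]
      have := Finset.prod_range_succ E (m0 + 1)
      rw [this] at hEprod
      linarith [hEprod]
    have hodd : Odd G.card := by
      rcases Nat.even_or_odd G.card with h | h
      · exfalso
        rw [hE'prod] at hG2
        have := (neg_one_pow_eq_one_iff_even (by norm_num : (-1 : ℝ) ≠ 1)).mpr h
        rw [hG2] at this
        norm_num at this
      · exact h
    have hGish := (aux_parity (m0 + 1) Y hYlast G hG1).2 hodd
    have hsplit : ∑ k ∈ Finset.range (m0 + 2), E' k * Y (P k)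
        = (∑ k ∈ Finset.range (m0 + 2), Z k) - 2 * Z (m0 + 1) := by
      rw [Finset.sum_range_succ (fun k => E' k * Y (P k)) (m0 + 1), hlastZ,
        Finset.sum_congr rfl (fun k hk => show E' k * Y (P k) = Z k by
          rw [hE'def]; simp [Nat.ne_of_lt (Finset.mem_range.mp hk)]; rfl)]
      have h1 : E' (m0 + 1) = -E (m0 + 1) := by rw [hE'def]; simp
      have h2 : Z (m0 + 1) = E (m0 + 1) * Y (P (m0 + 1)) := rfl
      rw [h1, h2]
      ring
    rw [hsplit] at hG3
    linarith
  have hgoalY : ∑ i : Fin (m0 + 2), lam i * y i = ∑ k ∈ Finset.range (m0 + 2), L k * Y k := by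
    rw [← Fin.sum_univ_eq_sum_range (fun k => L k * Y k) (m0 + 2)]
    apply Finset.sum_congr rfl
    intro i _
    rw [hLval i.val i.isLt, hYval i.val i.isLt]
  have hgoalZ : ∑ i : Fin (m0 + 2), lam i * g y i = ∑ k ∈ Finset.range (m0 + 2), L k * Z k := by
    rw [← Fin.sum_univ_eq_sum_range (fun k => L k * Z k) (m0 + 2)]
    apply Finset.sum_congr rfl
    intro i _
    rw [hLval i.val i.isLt, hZval i.val i.isLt]
  have hsucc2 : m0 + 1 + 1 = m0 + 2 := rfl
  have habel : ∀ X : ℕ → ℝ, ∑ k ∈ Finset.range (m0 + 2), L k * X k =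
      (∑ i ∈ Finset.range m0, (L i - L (i + 1)) * (∑ j ∈ Finset.range (i + 1), X j))
      + ((L m0 - L (m0 + 1)) * (∑ j ∈ Finset.range (m0 + 1), X j)
      + L (m0 + 1) * (∑ j ∈ Finset.range (m0 + 2), X j)) := by
    intro X
    have h := aux_abel L X (m0 + 1)
    rw [Finset.sum_range_succ (fun i => (L i - L (i + 1)) * (∑ j ∈ Finset.range (i + 1), X j)) m0] at h
    simp only [hsucc2] at h
    linarith [h]
  have hid : ∀ X : ℕ → ℝ,
      (∑ k ∈ Finset.range (m0 + 2), X k) = (∑ j ∈ Finset.range (m0 + 1), X j) + X (m0 + 1) →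
      (L m0 - L (m0 + 1)) * (∑ j ∈ Finset.range (m0 + 1), X j)
      + L (m0 + 1) * (∑ j ∈ Finset.range (m0 + 2), X j)
      = ((L m0 + L (m0 + 1)) / 2) * (∑ k ∈ Finset.range (m0 + 2), X k)
      + ((L m0 - L (m0 + 1)) / 2) * ((∑ k ∈ Finset.range (m0 + 2), X k) - 2 * X (m0 + 1)) := by
    intro X hX
    rw [hX]
    ring
  have hcoeffs : ∀ i ∈ Finset.range m0, 0 ≤ L i - L (i + 1) := by
    intro i hi
    have := hLchain i (i + 1) (by omega) (by have := Finset.mem_range.mp hi; omega)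
    linarith
  have hterm : ∀ i ∈ Finset.range m0,
      (L i - L (i + 1)) * (∑ j ∈ Finset.range (i + 1), Z j)
      ≤ (L i - L (i + 1)) * (∑ j ∈ Finset.range (i + 1), Y j) := by
    intro i hi
    exact mul_le_mul_of_nonneg_left
      (hAweak (i + 1) (by have := Finset.mem_range.mp hi; omega)) (hcoeffs i hi)
  have hA0 : 0 ≤ (L m0 + L (m0 + 1)) / 2 := by
    have h1 := hLlast m0 (by omega)
    have h2 := neg_abs_le (L (m0 + 1))
    linarith
  have hB0 : 0 ≤ (L m0 - L (m0 + 1)) / 2 := by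
    have h1 := hLlast m0 (by omega)
    have h2 := le_abs_self (L (m0 + 1))
    linarith
  have hprod1 := mul_le_mul_of_nonneg_left hBfull hA0
  have hprod2 := mul_le_mul_of_nonneg_left hCfull hB0
  rw [hgoalY, hgoalZ, habel Z, habel Y, hid Z hlastZ, hid Y hlastY]
  rcases (by omega : j₀ ≤ m0 ∨ j₀ = m0 + 1) with hcase | hcase
  · have hstrictsum : ∑ i ∈ Finset.range m0, (L i - L (i + 1)) * (∑ j ∈ Finset.range (i + 1), Z j)
        < ∑ i ∈ Finset.range m0, (L i - L (i + 1)) * (∑ j ∈ Finset.range (i + 1), Y j) := by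
      apply Finset.sum_lt_sum hterm
      refine ⟨j₀ - 1, Finset.mem_range.mpr (by omega), ?_⟩
      have h3 : j₀ - 1 + 1 = j₀ := by omega
      have hLj : 0 < L (j₀ - 1) - L (j₀ - 1 + 1) := by
        have h1 : L j₀ < L 0 := by
          rw [hLval j₀ (by omega), hLval 0 (by omega)]
          exact hblock' ⟨j₀, by omega⟩ (le_refl _)
        have h2 : L (j₀ - 1) = L 0 := by
          rw [hLval (j₀ - 1) (by omega), hLval 0 (by omega)]
          exact hblock ⟨j₀ - 1, by omega⟩ (by show j₀ - 1 < j₀; omega)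
        rw [h3]
        linarith
      have hp : (∑ j ∈ Finset.range (j₀ - 1 + 1), Z j) < ∑ j ∈ Finset.range (j₀ - 1 + 1), Y j := by
        rw [h3]
        exact hAstrict
      exact mul_lt_mul_of_pos_left hp hLj
    linarith
  · subst hcase
    have hweaksum : ∑ i ∈ Finset.range m0, (L i - L (i + 1)) * (∑ j ∈ Finset.range (i + 1), Z j)
        ≤ ∑ i ∈ Finset.range m0, (L i - L (i + 1)) * (∑ j ∈ Finset.range (i + 1), Y j) :=
      Finset.sum_le_sum hterm
    have hApos : 0 < (L (m0 : ℕ) + L (m0 + 1)) / 2 := by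
      rcases lt_or_eq_of_le hA0 with h | h
      · exact h
      · exfalso
        apply hlamnotmult
        refine ⟨lam ⟨0, by omega⟩, funext fun i => ?_⟩
        have hLm0 : L m0 = L 0 := by
          rw [hLval m0 (by omega), hLval 0 (by omega)]
          exact hblock ⟨m0, by omega⟩ (by show (m0:ℕ) < m0 + 1; omega)
        by_cases hi : (i : ℕ) = m0 + 1
        · rw [if_pos hi]
          have hie : i = ⟨m0 + 1, by omega⟩ := Fin.ext hi
          rw [hie, ← hLval (m0 + 1) (by omega),
            show lam ⟨0, by omega⟩ = L 0 from (hLval 0 (by omega)).symm]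
          linarith
        · rw [if_neg hi]
          exact hblock i (by omega)
    have hBpos : 0 < (L (m0 : ℕ) - L (m0 + 1)) / 2 := by
      have h1 : L (m0 + 1) < L 0 := by
        rw [hLval (m0 + 1) (by omega), hLval 0 (by omega)]
        exact hblock' ⟨m0 + 1, by omega⟩ (by show m0 + 1 ≤ m0 + 1; omega)
      have h2 : L m0 = L 0 := by
        rw [hLval m0 (by omega), hLval 0 (by omega)]
        exact hblock ⟨m0, by omega⟩ (by show (m0:ℕ) < m0 + 1; omega)
      linarith
    have hPstrict : ∑ k ∈ Finset.range (m0 + 1), Z k < ∑ k ∈ Finset.range (m0 + 1), Y k := hAstrict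
    rcases lt_or_ge (∑ k ∈ Finset.range (m0 + 2), Z k) (∑ k ∈ Finset.range (m0 + 2), Y k) with hS | hS
    · have h1 := mul_lt_mul_of_pos_left hS hApos
      linarith
    · have hSeq : ∑ k ∈ Finset.range (m0 + 2), Z k = ∑ k ∈ Finset.range (m0 + 2), Y k :=
        le_antisymm hBfull hS
      have hD' : (∑ k ∈ Finset.range (m0 + 2), Z k) - 2 * Z (m0 + 1)
          < (∑ k ∈ Finset.range (m0 + 2), Y k) - 2 * Y (m0 + 1) := by
        linarith [hlastY, hlastZ]
      have h2 := mul_lt_mul_of_pos_left hD' hBpos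
      have h3 : ((L (m0 : ℕ) + L (m0 + 1)) / 2) * (∑ k ∈ Finset.range (m0 + 2), Z k)
          = ((L (m0 : ℕ) + L (m0 + 1)) / 2) * (∑ k ∈ Finset.range (m0 + 2), Y k) := by rw [hSeq]
      linarith
end
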